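/- arXiv:2207.09199 — 10 statements merged into one kernel-verified Lean document; each statement's English description precedes it below -/
import Mathlib

section
/- Let κ be a regular cardinal and γ ≤ κ a limit ordinal. If Cut has a winning strategy in the cut-and-choose game U(κ,γ), then κ ≤ 2^|γ|. -/
open Cardinal Set

universe u

/-- A strategy for Cut in a binary cut-and-choose game, identified with a labeled
binary tree: `L f α` is the label at the node given by the branch `f` at level `α`. -/
def IsCutTree {K : Type u} (L : (Ordinal.{u} → Bool) → Ordinal.{u} → Set K) : Prop :=
  (∀ f g : Ordinal.{u} → Bool, ∀ α : Ordinal.{u}, (∀ β < α, f β = g β) → L f α = L g α) ∧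
  (∀ f : Ordinal.{u} → Bool, L f 0 = Set.univ) ∧
  (∀ f g : Ordinal.{u} → Bool, ∀ α : Ordinal.{u}, (∀ β < α, f β = g β) → f α = true →
    g α = false →
      L f (α + 1) ∪ L g (α + 1) = L f α ∧ Disjoint (L f (α + 1)) (L g (α + 1))) ∧
  (∀ f : Ordinal.{u} → Bool, ∀ α : Ordinal.{u}, Order.IsSuccLimit α → L f α = ⋂ β ∈ Set.Iio α, L f β)

open Classical in
/-- The branch determined by an element `x`. -/
noncomputable def cutBr {K : Type u} (L : (Ordinal.{u} → Bool) → Ordinal.{u} → Set K)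
    (x : K) : Ordinal.{u} → Bool
  | α => decide (x ∈ L (fun β => if h : β < α then cutBr L x β else true) (α + 1))
termination_by α => α

open Classical in
theorem cutBr_def {K : Type u} (L : (Ordinal.{u} → Bool) → Ordinal.{u} → Set K)
    (x : K) (α : Ordinal.{u}) :
    cutBr L x α = decide (x ∈ L (fun β => if h : β < α then cutBr L x β else true) (α + 1)) := by
  rw [cutBr]

theorem mem_cutBr {K : Type u} {L : (Ordinal.{u} → Bool) → Ordinal.{u} → Set K}
    (hL : IsCutTree L) (x : K) : ∀ α : Ordinal.{u}, x ∈ L (cutBr L x) α := by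
  classical
  obtain ⟨hcons, hroot, hsplit, hlimL⟩ := hL
  intro α
  induction α using Ordinal.limitRecOn with
  | zero => rw [hroot]; trivial
  | add_one α ih =>
    set F := cutBr L x with hF
    set g : Ordinal.{u} → Bool := fun β => if h : β < α then cutBr L x β else true with hg
    have hagree : ∀ β < α, g β = F β := by
      intro β hβ; simp [hg, hβ, hF]
    by_cases hx : x ∈ L g (α + 1)
    · have hFα : F α = true := by rw [hF, cutBr_def]; exact decide_eq_true hx
      have : L g (α + 1) = L F (α + 1) := by
        apply hcons
        intro β hβ
        rcases lt_or_eq_of_le (Order.lt_succ_iff.mp hβ) with h | h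
        · exact hagree β h
        · subst h; simp [hg, hFα]
      rwa [← this]
    · have hFα : F α = false := by
        rw [hF, cutBr_def]; exact decide_eq_false hx
      set g' : Ordinal.{u} → Bool := fun β => if β = α then false else F β with hg'
      have hagree' : ∀ β < α, g β = g' β := by
        intro β hβ; simp [hg, hg', hβ, ne_of_lt hβ, hF]
      have hgt : g α = true := by simp [hg]
      have hgf : g' α = false := by simp [hg']
      obtain ⟨hun, _⟩ := hsplit g g' α hagree' hgt hgf
      have hgα : L g α = L F α := hcons _ _ _ hagree
      have hxin : x ∈ L g (α + 1) ∪ L g' (α + 1) := by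
        rw [hun, hgα]; exact ih
      have hx' : x ∈ L g' (α + 1) := hxin.resolve_left hx
      have : L g' (α + 1) = L F (α + 1) := by
        apply hcons
        intro β hβ
        rcases lt_or_eq_of_le (Order.lt_succ_iff.mp hβ) with h | h
        · simp [hg', ne_of_lt h]
        · subst h; simp [hg', hFα]
      rwa [← this]
  | limit α hα ih =>
    rw [hlimL _ _ hα]
    exact Set.mem_iInter₂.mpr fun β hβ => ih β hβ

/-- If `κ` is a regular cardinal, `γ ≤ κ` a limit ordinal, and Cut has a winning
strategy in the game `𝒰(κ,γ)` (i.e. a labeled binary tree of height `γ` all of whose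
branch intersections have at most one element), then `κ ≤ 2 ^ |γ|`. -/
theorem stmt0 {K : Type u} (γ : Ordinal.{u}) (hreg : (#K).IsRegular)
    (hlim : Order.IsSuccLimit γ) (hle : γ ≤ (#K).ord)
    (hwin : ∃ L : (Ordinal.{u} → Bool) → Ordinal.{u} → Set K, IsCutTree L ∧
      ∀ f : Ordinal.{u} → Bool, (⋂ β ∈ Set.Iio γ, L f β).Subsingleton) :
    #K ≤ 2 ^ γ.card := by
  obtain ⟨L, hL, hsub⟩ := hwin
  have hinj : Function.Injective
      (fun x : K => fun i : γ.ToType => cutBr L x ((Ordinal.ToType.mk (o := γ)).symm i).1) := by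
    intro x y hxy
    have heq : ∀ β < γ, cutBr L x β = cutBr L y β := by
      intro β hβ
      have := congrFun hxy (Ordinal.ToType.mk (o := γ) ⟨β, hβ⟩)
      simpa using this
    have hLeq : ∀ β < γ, L (cutBr L x) β = L (cutBr L y) β := by
      intro β hβ
      exact hL.1 _ _ _ fun β' hβ' => heq β' (hβ'.trans hβ)
    apply hsub (cutBr L x)
    · exact Set.mem_iInter₂.mpr fun β hβ => mem_cutBr hL x β
    · exact Set.mem_iInter₂.mpr fun β hβ => (hLeq β hβ) ▸ mem_cutBr hL y β
  calc #K ≤ #(γ.ToType → Bool) := Cardinal.mk_le_of_injective hinj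
    _ = 2 ^ γ.card := by
      rw [Cardinal.mk_arrow]
      simp [Cardinal.mk_toType]
end

section
/- Let κ be a regular cardinal and γ ≤ κ a limit ordinal. If κ ≤ 2^|γ|, then Cut has a winning strategy in the cut-and-choose game U(κ,γ). -/
open Cardinal Set

universe u

/-- If `κ` is a regular cardinal, `γ ≤ κ` a limit ordinal and `κ ≤ 2 ^ |γ|`, then Cut has a
winning strategy in the game `𝒰(κ,γ)`: a labeled binary tree of height `γ` all of whose
branch intersections have at most one element. -/
theorem stmt1 {K : Type u} (γ : Ordinal.{u}) (hreg : (#K).IsRegular)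
    (hlim : Order.IsSuccLimit γ) (hle : γ ≤ (#K).ord)
    (hcard : #K ≤ 2 ^ γ.card) :
    ∃ L : (Ordinal.{u} → Bool) → Ordinal.{u} → Set K, IsCutTree L ∧
      ∀ f : Ordinal.{u} → Bool, (⋂ β ∈ Set.Iio γ, L f β).Subsingleton := by
  -- embed K into the generalized Cantor space
  have hK : #K ≤ #(γ.ToType → Bool) := by
    have : #(γ.ToType → Bool) = 2 ^ γ.card := by
      rw [Cardinal.mk_arrow, Cardinal.mk_bool, Cardinal.mk_toType]
      simp
    rwa [this]
  obtain ⟨i⟩ : Nonempty (K ↪ (γ.ToType → Bool)) := Cardinal.le_def _ _ |>.mp hK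
  set e : K → Ordinal.{u} → Bool := fun x β =>
    if h : β < γ then i x (Ordinal.ToType.mk (o := γ) ⟨β, h⟩) else true with he
  have he' : ∀ x β (h : β < γ), e x β = i x (Ordinal.ToType.mk (o := γ) ⟨β, h⟩) := by
    intro x β h; simp [he, h]
  refine ⟨fun f α => {x | ∀ β < α, (β < γ → e x β = f β) ∧ (γ ≤ β → f β = true)}, ⟨?_, ?_, ?_, ?_⟩, ?_⟩
  · -- consistency
    intro f g α hfg
    ext x
    constructor <;> intro hx β hβ
    · rw [← hfg β hβ]; exact hx β hβ
    · rw [hfg β hβ]; exact hx β hβ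
  · -- root
    intro f
    ext x
    simp [not_lt_zero]
  · -- splitting
    intro f g α hfg hf hg
    have hsucc : ∀ β : Ordinal.{u}, β < α + 1 ↔ β ≤ α := by
      intro β; rw [Ordinal.add_one_eq_succ, Order.lt_succ_iff]
    constructor
    · ext x
      simp only [Set.mem_union, Set.mem_setOf_eq]
      constructor
      · rintro (hx | hx) β hβ
        · exact hx β ((hsucc β).mpr hβ.le)
        · obtain ⟨h1, h2⟩ := hx β ((hsucc β).mpr hβ.le)
          rw [← hfg β hβ] at h1 h2
          exact ⟨h1, h2⟩
      · intro hx
        by_cases hαγ : α < γ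
        · -- cut at α: decide by e x α
          by_cases hex : e x α = true
          · left
            intro β hβ
            rcases ((hsucc β).mp hβ).lt_or_eq with h | h
            · exact hx β h
            · subst h; exact ⟨fun _ => by rw [hex, hf], fun h => absurd hαγ h.not_gt⟩
          · right
            intro β hβ
            rcases ((hsucc β).mp hβ).lt_or_eq with h | h
            · obtain ⟨h1, h2⟩ := hx β h
              rw [hfg β h] at h1 h2
              exact ⟨h1, h2⟩
            · subst h
              refine ⟨fun _ => ?_, fun h => absurd hαγ h.not_gt⟩
              rw [hg, Bool.not_eq_true] at *
              exact hex
        · -- trivial cut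
          left
          intro β hβ
          rcases ((hsucc β).mp hβ).lt_or_eq with h | h
          · exact hx β h
          · subst h
            exact ⟨fun h => absurd h hαγ, fun _ => hf⟩
    · rw [Set.disjoint_left]
      intro x hx hx'
      by_cases hαγ : α < γ
      · have h1 := (hx α ((hsucc α).mpr le_rfl)).1 hαγ
        have h2 := (hx' α ((hsucc α).mpr le_rfl)).1 hαγ
        rw [hf] at h1; rw [hg] at h2
        rw [h1] at h2; simp at h2
      · have h2 := (hx' α ((hsucc α).mpr le_rfl)).2 (not_lt.mp hαγ)
        rw [hg] at h2
        exact Bool.false_ne_true h2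
  · -- limits
    intro f α hα
    ext x
    simp only [Set.mem_iInter, Set.mem_Iio, Set.mem_setOf_eq]
    constructor
    · intro hx β' hβ' β hβ
      exact hx β (hβ.trans hβ')
    · intro hx β hβ
      exact hx (β + 1) (hα.add_one_lt hβ) β (lt_add_one β)
  · -- branch intersections are subsingletons
    intro f x hx y hy
    simp only [Set.mem_iInter, Set.mem_Iio] at hx hy
    have key : ∀ β (h : β < γ), e x β = e y β := by
      intro β h
      have h1 := (hx (β + 1) (hlim.add_one_lt h) β (lt_add_one β)).1 h
      have h2 := (hy (β + 1) (hlim.add_one_lt h) β (lt_add_one β)).1 h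
      rw [h1, h2]
    apply i.injective
    funext t
    obtain ⟨⟨β, hβ⟩, ht⟩ := (Ordinal.ToType.mk (o := γ)).surjective t
    rw [← ht, ← he' x β hβ, ← he' y β hβ, key β hβ]
end

section
/- Let κ be a regular uncountable cardinal and γ < κ a limit ordinal. If Cut has a winning strategy in the game U(κ,≤γ), then κ ≤ 2^{<γ}, where 2^{<γ} = sup{2^δ : δ < γ a cardinal}. -/
open Cardinal Set

universe u

/-- `2 ^{<γ} = sup { 2 ^ δ : δ < γ a cardinal }`. -/
noncomputable def twoPowLT (γ : Ordinal.{u}) : Cardinal.{u} :=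
  ⨆ δ : {δ : Cardinal.{u} // δ.ord < γ}, 2 ^ δ.1

open scoped Classical in
noncomputable def chooseFun {K : Type u} (L : (Ordinal.{u} → Bool) → Ordinal.{u} → Set K)
    (x : K) : Ordinal.{u} → Bool
  | α => decide (x ∈ L (fun β => if _ : β < α then chooseFun L x β else true) (α + 1))
  termination_by α => α

theorem mem_chooseFun {K : Type u} {L : (Ordinal.{u} → Bool) → Ordinal.{u} → Set K}
    (hL : IsCutTree L) (x : K) (α : Ordinal.{u}) : x ∈ L (chooseFun L x) α := by
  induction α using Ordinal.limitRecOn with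
  | zero => rw [hL.2.1]; trivial
  | add_one β ih =>
    classical
    set c := chooseFun L x with hc
    set f : Ordinal.{u} → Bool := fun δ => if _ : δ < β then c δ else true with hf
    set g : Ordinal.{u} → Bool := fun δ => if _ : δ < β then c δ else false with hg
    have hfg : ∀ δ < β, f δ = g δ := by
      intro δ hδ; simp [hf, hg, hδ]
    have hfβ : f β = true := by simp [hf]
    have hgβ : g β = false := by simp [hg]
    have hsplit := hL.2.2.1 f g β hfg hfβ hgβ
    have hfc : L f β = L c β := hL.1 f c β (by intro δ hδ; simp [hf, hδ])
    have hx : x ∈ L f (β + 1) ∪ L g (β + 1) := by rw [hsplit.1, hfc]; exact ih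
    have hcβ : c β = true ↔ x ∈ L f (β + 1) := by
      rw [hc, chooseFun, decide_eq_true_iff]
    have hdlt : ∀ δ : Ordinal.{u}, δ < β + 1 → δ < β ∨ δ = β := by
      intro δ hδ
      rw [Ordinal.add_one_eq_succ, Order.lt_succ_iff] at hδ
      exact lt_or_eq_of_le hδ
    by_cases hmem : x ∈ L f (β + 1)
    · have : L c (β + 1) = L f (β + 1) := by
        apply hL.1
        intro δ hδ
        rcases hdlt δ hδ with h' | h'
        · simp [hf, h']
        · subst h'; simp [hf, hcβ.mpr hmem]
      rw [this]; exact hmem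
    · have hxg : x ∈ L g (β + 1) := hx.resolve_left hmem
      have hcf : c β = false := by
        rw [Bool.eq_false_iff]
        exact fun h => hmem (hcβ.mp h)
      have : L c (β + 1) = L g (β + 1) := by
        apply hL.1
        intro δ hδ
        rcases hdlt δ hδ with h' | h'
        · simp [hg, h']
        · subst h'; simp [hg, hcf]
      rw [this]; exact hxg
  | limit α hα ih =>
    rw [hL.2.2.2 _ _ hα]
    simp only [Set.mem_iInter, Set.mem_Iio]
    exact fun β hβ => ih β hβ

/-- If `κ` is regular uncountable, `γ < κ` a limit ordinal, and Cut has a winning strategy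
in the game `𝒰(κ,≤γ)` (a labeled binary tree of height `γ` such that along every branch,
either Choose at some point picked a singleton, or the final intersection is empty),
then `κ ≤ 2^{<γ}`. -/
theorem stmt3 {K : Type u} (γ : Ordinal.{u}) (hreg : (#K).IsRegular) (hunc : ℵ₀ < #K)
    (hlim : Order.IsSuccLimit γ) (hlt : γ < (#K).ord)
    (hwin : ∃ L : (Ordinal.{u} → Bool) → Ordinal.{u} → Set K, IsCutTree L ∧
      ∀ f : Ordinal.{u} → Bool,
        (∃ β < γ, ∃ x : K, L f (β + 1) = {x}) ∨ (⋂ β ∈ Set.Iio γ, L f β) = ∅) :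
    #K ≤ twoPowLT γ := by
  obtain ⟨L, hL, hwin⟩ := hwin
  -- for every x there is a node labeled {x}
  have hsel : ∀ x : K, ∃ β, β < γ ∧ L (chooseFun L x) (β + 1) = {x} := by
    intro x
    rcases hwin (chooseFun L x) with ⟨β, hβ, y, hy⟩ | hempty
    · refine ⟨β, hβ, ?_⟩
      have hx := mem_chooseFun hL x (β + 1)
      rw [hy] at hx ⊢
      rw [Set.mem_singleton_iff] at hx
      rw [hx]
    · exfalso
      have hx : x ∈ ⋂ β ∈ Set.Iio γ, L (chooseFun L x) β := by
        simp only [Set.mem_iInter, Set.mem_Iio]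
        exact fun β _ => mem_chooseFun hL x β
      rw [hempty] at hx
      exact hx
  choose β hβlt hβeq using hsel
  set F : K → Σ b : ↥(Set.Iio γ), (↥(Set.Iic (b : Ordinal.{u})) → Bool) :=
    fun x => ⟨⟨β x, hβlt x⟩, fun δ => chooseFun L x δ.1⟩ with hF
  classical
  have hinj : Function.Injective F := by
    intro x y h
    rw [hF] at h
    have hb : β x = β y := congrArg (fun p : (Σ b : ↥(Set.Iio γ),
      (↥(Set.Iic (b : Ordinal.{u})) → Bool)) => ((p.1 : Ordinal.{u}))) h
    have he := congrArg (fun p : (Σ b : ↥(Set.Iio γ),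
      (↥(Set.Iic (b : Ordinal.{u})) → Bool)) =>
        fun δ : Ordinal.{u} => if h : δ ≤ (p.1 : Ordinal.{u}) then p.2 ⟨δ, h⟩ else true) h
    have hagree : ∀ δ : Ordinal.{u}, δ < β x + 1 → chooseFun L x δ = chooseFun L y δ := by
      intro δ hδ
      rw [Ordinal.add_one_eq_succ, Order.lt_succ_iff] at hδ
      have h4 := congrFun he δ
      simp only at h4
      rw [dif_pos hδ, dif_pos (hb ▸ hδ)] at h4
      exact h4
    have heqL := hL.1 _ _ _ hagree
    rw [hβeq x, hb, hβeq y] at heqL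
    exact Set.singleton_eq_singleton_iff.mp heqL
  -- cardinal arithmetic
  have hlift : Cardinal.lift.{u+1} #K
      ≤ #(Σ b : ↥(Set.Iio γ), (↥(Set.Iic (b : Ordinal.{u})) → Bool)) := by
    have h := Cardinal.lift_mk_le'.mpr ⟨⟨F, hinj⟩⟩
    exact h.trans_eq (Cardinal.lift_id'.{u, u+1} _)
  have hterm : ∀ b : ↥(Set.Iio γ),
      #(↥(Set.Iic (b : Ordinal.{u})) → Bool) ≤ Cardinal.lift.{u+1} (twoPowLT γ) := by
    intro b
    have hb1 : (b : Ordinal.{u}) + 1 < γ := by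
      rw [Ordinal.add_one_eq_succ]
      exact hlim.succ_lt b.2
    have hIic : #(↥(Set.Iic (b : Ordinal.{u})))
        = Cardinal.lift.{u+1} ((b : Ordinal.{u}) + 1).card := by
      rw [show Set.Iic (b : Ordinal.{u}) = Set.Iio ((b : Ordinal.{u}) + 1) by
        rw [Ordinal.add_one_eq_succ, Order.Iio_succ]]
      exact Ordinal.mk_Iio_ordinal _
    rw [Cardinal.mk_arrow, Cardinal.mk_bool, hIic]
    simp only [Cardinal.lift_two, Cardinal.lift_lift, Cardinal.lift_id]
    rw [← Cardinal.lift_two.{u+1, u}, ← Cardinal.lift_power, Cardinal.lift_le]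
    have hord : (((b : Ordinal.{u}) + 1).card).ord < γ :=
      lt_of_le_of_lt (Cardinal.ord_card_le _) hb1
    have hbdd : BddAbove (Set.range fun δ : {δ : Cardinal.{u} // δ.ord < γ} => (2 : Cardinal.{u}) ^ δ.1) := by
      refine ⟨(2 : Cardinal.{u}) ^ γ.card, ?_⟩
      rintro _ ⟨δ, rfl⟩
      apply Cardinal.power_le_power_left (two_ne_zero : (2 : Cardinal.{u}) ≠ 0)
      have := Ordinal.card_le_card δ.2.le
      rwa [Cardinal.card_ord] at this
    exact le_ciSup hbdd ⟨((b : Ordinal.{u}) + 1).card, hord⟩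
  have hsum : #(Σ b : ↥(Set.Iio γ), (↥(Set.Iic (b : Ordinal.{u})) → Bool))
      ≤ Cardinal.lift.{u+1} (γ.card * twoPowLT γ) := by
    rw [Cardinal.mk_sigma]
    calc (Cardinal.sum fun b : ↥(Set.Iio γ) => #(↥(Set.Iic (b : Ordinal.{u})) → Bool))
        ≤ Cardinal.sum fun _ : ↥(Set.Iio γ) => Cardinal.lift.{u+1} (twoPowLT γ) :=
          Cardinal.sum_le_sum _ _ hterm
      _ = #(↥(Set.Iio γ)) * Cardinal.lift.{u+1} (twoPowLT γ) := Cardinal.sum_const' _ _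
      _ = Cardinal.lift.{u+1} (γ.card * twoPowLT γ) := by
          rw [Ordinal.mk_Iio_ordinal, Cardinal.lift_mul]
  have hfinal : #K ≤ γ.card * twoPowLT γ := by
    rw [← Cardinal.lift_le.{u+1}]
    exact hlift.trans hsum
  by_contra hcon
  push_neg at hcon
  have hγ : γ.card < #K := Cardinal.lt_ord.mp hlt
  exact absurd hfinal (not_le.mpr (Cardinal.mul_lt_of_lt hreg.aleph0_le hγ hcon))
end

section
/- Let κ be a regular uncountable cardinal and γ < κ a regular limit ordinal with κ ≤ 2^{<γ}. Then Cut has a winning strategy in the game U(κ,≤γ). -/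
open Cardinal Set

universe u

/-- The condition Cut imposes at stage `β`: below `ρ`, the branch must follow the
bits of `x`; from `ρ` on, the branch must go through the `true` (full) side. -/
def cutC {K : Type u} (b : K → Ordinal.{u} → Bool) (ρ : Ordinal.{u})
    (f : Ordinal.{u} → Bool) (x : K) (β : Ordinal.{u}) : Prop :=
  (β < ρ → b x β = f β) ∧ (ρ ≤ β → f β = true)

/-- The label of the node at level `α` on branch `f`. -/
def cutL {K : Type u} (b : K → Ordinal.{u} → Bool) (ρ : Ordinal.{u})
    (f : Ordinal.{u} → Bool) (α : Ordinal.{u}) : Set K :=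
  {x | ∀ β < α, cutC b ρ f x β}

lemma lt_add_one_iff' (β α : Ordinal.{u}) : β < α + 1 ↔ β < α ∨ β = α := by
  rw [Ordinal.add_one_eq_succ, Order.lt_succ_iff, le_iff_lt_or_eq]

/-- If `κ` is regular uncountable, `γ < κ` is a regular limit ordinal and `κ ≤ 2^{<γ}`,
then Cut has a winning strategy in the game `𝒰(κ,≤γ)`: a labeled binary tree of height
`γ` such that along every branch, either Choose at some stage `β < γ` picked a singleton,
or the final intersection is empty. -/
theorem stmt4 {K : Type u} (γ : Ordinal.{u}) (hreg : (#K).IsRegular) (hunc : ℵ₀ < #K)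
    (hlim : Order.IsSuccLimit γ) (hγreg : γ.cof.ord = γ) (hlt : γ < (#K).ord)
    (hcard : #K ≤ twoPowLT γ) :
    ∃ L : (Ordinal.{u} → Bool) → Ordinal.{u} → Set K, IsCutTree L ∧
      ∀ f : Ordinal.{u} → Bool,
        (∃ β < γ, ∃ x : K, L f (β + 1) = {x}) ∨ (⋂ β ∈ Set.Iio γ, L f β) = ∅ := by
  -- Step 1: find `ρ < γ` with `#K ≤ 2 ^ ρ.card`.
  have hγT : Nonempty γ.ToType := by
    rw [Ordinal.toType_nonempty_iff_ne_zero]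
    exact hlim.pos.ne'
  obtain ⟨a, ha⟩ : ∃ a : γ.ToType,
      #K ≤ 2 ^ (((Ordinal.ToType.mk (o := γ)).symm a : Ordinal).card) := by
    by_contra h
    push_neg at h
    have hsup : (⨆ a : γ.ToType,
        2 ^ (((Ordinal.ToType.mk (o := γ)).symm a : Ordinal).card)) < #K := by
      apply Ordinal.iSup_lt
      · rw [Cardinal.mk_toType, hreg.cof_eq]
        exact Cardinal.lt_ord.1 hlt
      · exact h
    have h2 : twoPowLT γ ≤ ⨆ a : γ.ToType,
        2 ^ (((Ordinal.ToType.mk (o := γ)).symm a : Ordinal).card) := by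
      have : Nonempty {δ : Cardinal.{u} // δ.ord < γ} :=
        ⟨⟨0, by simpa using hlim.pos⟩⟩
      refine ciSup_le' fun δ => ?_
      have hδ : δ.1.ord < γ := δ.2
      have := le_ciSup (f := fun a : γ.ToType =>
          (2 : Cardinal.{u}) ^ (((Ordinal.ToType.mk (o := γ)).symm a : Ordinal).card))
        (Cardinal.bddAbove_range.{u, u} _) (Ordinal.ToType.mk (o := γ) ⟨δ.1.ord, hδ⟩)
      refine le_trans ?_ this
      rw [OrderIso.symm_apply_apply]
      simp
    exact absurd (hcard.trans h2) (not_le.2 hsup)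
  set ρ : Ordinal.{u} := ((Ordinal.ToType.mk (o := γ)).symm a : Ordinal) with hρdef
  have hρ : ρ < γ := ((Ordinal.ToType.mk (o := γ)).symm a).2
  -- Step 2: an injection of `K` into binary sequences of length `ρ`.
  have hKle : #K ≤ #(ρ.ToType → Bool) := by
    have h2 : (2 : Cardinal.{u}) ^ ρ.card = #(ρ.ToType → Bool) := by
      simp [← Cardinal.power_def]
    exact h2 ▸ ha
  obtain ⟨j⟩ := Cardinal.le_def _ _ |>.1 hKle
  set e := Ordinal.ToType.mk (o := ρ) with he
  set b : K → Ordinal.{u} → Bool :=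
    fun x β => if h : β < ρ then j x (e ⟨β, h⟩) else false with hb
  have hbinj : ∀ x x' : K, (∀ β < ρ, b x β = b x' β) → x = x' := by
    intro x x' h
    apply j.injective
    funext c
    have hc : ((e.symm c : Ordinal)) < ρ := (e.symm c).2
    have := h _ hc
    rw [hb] at this
    simp only [dif_pos hc, Subtype.coe_eta, OrderIso.apply_symm_apply] at this
    convert this using 2 <;> exact (e.apply_symm_apply c).symm
  refine ⟨cutL b ρ, ⟨?_, ?_, ?_, ?_⟩, ?_⟩
  · -- depends only on earlier values
    intro f g α h
    ext x
    simp only [cutL, mem_setOf_eq]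
    refine forall₂_congr fun β hβ => ?_
    unfold cutC
    rw [h β hβ]
  · -- root is everything
    intro f
    ext x
    simp [cutL, not_lt_zero]
  · -- splitting condition
    intro f g α hagree hf hg
    have hLsucc : ∀ h : Ordinal.{u} → Bool,
        cutL b ρ h (α + 1) = cutL b ρ h α ∩ {x | cutC b ρ h x α} := by
      intro h
      ext x
      simp only [cutL, mem_setOf_eq, mem_inter_iff]
      constructor
      · intro hx
        exact ⟨fun β hβ => hx β ((lt_add_one_iff' β α).2 (Or.inl hβ)),
          hx α ((lt_add_one_iff' α α).2 (Or.inr rfl))⟩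
      · rintro ⟨h1, h2⟩ β hβ
        rcases (lt_add_one_iff' β α).1 hβ with h' | rfl
        · exact h1 β h'
        · exact h2
    have hLg : cutL b ρ g α = cutL b ρ f α := by
      ext x
      simp only [cutL, mem_setOf_eq]
      refine forall₂_congr fun β hβ => ?_
      unfold cutC
      rw [hagree β hβ]
    constructor
    · rw [hLsucc f, hLsucc g, hLg]
      ext x
      simp only [mem_union, mem_inter_iff, mem_setOf_eq]
      constructor
      · rintro (⟨h1, _⟩ | ⟨h1, _⟩) <;> exact h1
      · intro hx
        by_cases hαρ : α < ρ
        · cases hbx : b x α with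
          | false => exact Or.inr ⟨hx, fun _ => hbx.trans hg.symm,
              fun h => absurd hαρ (not_lt.2 h)⟩
          | true => exact Or.inl ⟨hx, fun _ => hbx.trans hf.symm, fun _ => hf⟩
        · exact Or.inl ⟨hx, fun h => absurd h hαρ, fun _ => hf⟩
    · rw [Set.disjoint_left]
      intro x hxf hxg
      have h1 := hxf α ((lt_add_one_iff' α α).2 (Or.inr rfl))
      have h2 := hxg α ((lt_add_one_iff' α α).2 (Or.inr rfl))
      by_cases hαρ : α < ρ
      · have e1 : b x α = true := (h1.1 hαρ).trans hf
        have e2 : b x α = false := (h2.1 hαρ).trans hg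
        rw [e1] at e2
        exact Bool.noConfusion e2
      · have := (h2.2 (not_lt.1 hαρ)).symm.trans hg
        exact Bool.noConfusion this
  · -- limits
    intro f α hα
    ext x
    simp only [cutL, mem_iInter, mem_setOf_eq, mem_Iio]
    constructor
    · intro h β hβ β' hβ'
      exact h β' (hβ'.trans hβ)
    · intro h β hβ
      have hβ1 : β + 1 < α := by
        rw [Ordinal.add_one_eq_succ]
        exact hα.succ_lt hβ
      exact h (β + 1) hβ1 β ((lt_add_one_iff' β β).2 (Or.inr rfl))
  · -- winning condition
    intro f
    have hρ1 : ρ + 1 < γ := by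
      rw [Ordinal.add_one_eq_succ]
      exact hlim.succ_lt hρ
    by_cases hS : (cutL b ρ f (ρ + 1)).Nonempty
    · obtain ⟨x, hx⟩ := hS
      left
      refine ⟨ρ, hρ, x, ?_⟩
      ext x'
      simp only [mem_singleton_iff]
      constructor
      · intro hx'
        apply hbinj x' x
        intro β hβ
        have h1 := (hx' β ((lt_add_one_iff' β ρ).2 (Or.inl hβ))).1 hβ
        have h2 := (hx β ((lt_add_one_iff' β ρ).2 (Or.inl hβ))).1 hβ
        exact h1.trans h2.symm
      · rintro rfl
        exact hx
    · right
      rw [eq_empty_iff_forall_notMem]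
      intro x hx
      rw [mem_iInter₂] at hx
      exact hS ⟨x, hx (ρ + 1) hρ1⟩
end

section
/- Let γ < κ be a limit ordinal and let I be a monotone family on κ such that κ is not a union of fewer than κ elements of I. If κ > 2^{<γ}, then Cut does not have a winning strategy in the game U(κ, I, <γ). -/
open Cardinal Set

universe u

open Classical in
/-- The branch of the cut tree `L` that always follows the piece containing `x`. -/
noncomputable def cutBranch {K : Type u} (L : (Ordinal.{u} → Bool) → Ordinal.{u} → Set K)
    (x : K) : Ordinal.{u} → Bool :=
  Ordinal.lt_wf.fix fun α ih =>
    if x ∈ L (fun β => if h : β < α then ih β h else true) (α + 1) then true else false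

open Classical in
theorem cutBranch_eq {K : Type u} (L : (Ordinal.{u} → Bool) → Ordinal.{u} → Set K)
    (x : K) (α : Ordinal.{u}) :
    cutBranch L x α =
      if x ∈ L (fun β => if _ : β < α then cutBranch L x β else true) (α + 1) then true
      else false := by
  rw [cutBranch, Ordinal.lt_wf.fix_eq]

/-- Let `γ < κ` be a limit ordinal and let `I` be a monotone family on `κ` such that `κ`
is not a union of fewer than `κ` elements of `I`.  If `κ > 2^{<γ}`, then Cut does not
have a winning strategy in the game `𝒰(κ, I, <γ)` (a labeled binary tree of height `γ`
such that along every branch some intersection of fewer than `γ`-many choices lies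
in `I`). -/
theorem stmt9 {K : Type u} (γ : Ordinal.{u}) (hlim : Order.IsSuccLimit γ) (hγκ : γ < (#K).ord)
    (I : Set (Set K)) (hmono : ∀ A ∈ I, ∀ B, B ⊆ A → B ∈ I)
    (hcover : ∀ (ι : Type u) (A : ι → Set K), #ι < #K → (∀ i, A i ∈ I) →
      (⋃ i, A i) ≠ Set.univ)
    (hcard : twoPowLT γ < #K) :
    ¬ ∃ L : (Ordinal.{u} → Bool) → Ordinal.{u} → Set K, IsCutTree L ∧
      ∀ f : Ordinal.{u} → Bool, ∃ δ < γ, L f δ ∈ I := by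
  classical
  haveI : IsWellOrder γ.ToType (· < ·) := isWellOrder_lt
  rintro ⟨L, ⟨hcoh, hzero, hsplit, hlimL⟩, hwin⟩
  -- the chosen branch passes through x at every level
  have key : ∀ (x : K) (α : Ordinal.{u}), x ∈ L (cutBranch L x) α := by
    intro x α
    induction α using Ordinal.limitRecOn with
    | zero => rw [hzero]; exact mem_univ x
    | add_one α ih =>
      set f := cutBranch L x with hf
      set t : Ordinal.{u} → Bool := fun β => if β = α then true else f β with ht
      set uu : Ordinal.{u} → Bool := fun β => if β = α then false else f β with hu
      have hagree : ∀ β < α, t β = uu β := by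
        intro β hβ
        simp only [ht, hu, if_neg hβ.ne]
      have hsp := hsplit t uu α hagree (by simp [ht]) (by simp [hu])
      have htα : L t α = L f α := hcoh t f α fun β hβ => by simp [ht, hβ.ne]
      have hw : L (fun β => if _ : β < α then f β else true) (α + 1) = L t (α + 1) := by
        refine hcoh _ t (α + 1) fun β hβ => ?_
        rcases lt_or_eq_of_le (Order.lt_succ_iff.mp (by rwa [Ordinal.add_one_eq_succ] at hβ))
          with h | h
        · simp [ht, h, h.ne]
        · simp [ht, h]
      have hfix := cutBranch_eq L x α
      rw [← hf] at hfix
      by_cases hx : x ∈ L t (α + 1)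
      · have hfα : f α = true := by rw [hfix, hw, if_pos hx]
        have : L f (α + 1) = L t (α + 1) := by
          refine hcoh f t (α + 1) fun β hβ => ?_
          rcases lt_or_eq_of_le (Order.lt_succ_iff.mp (by rwa [Ordinal.add_one_eq_succ] at hβ))
            with h | h
          · simp [ht, h.ne]
          · simp [ht, h, hfα]
        rw [this]; exact hx
      · have hfα : f α = false := by rw [hfix, hw, if_neg hx]
        have hxu : x ∈ L uu (α + 1) := by
          have : x ∈ L t (α + 1) ∪ L uu (α + 1) := by
            rw [hsp.1, htα]; exact ih
          exact this.resolve_left hx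
        have : L f (α + 1) = L uu (α + 1) := by
          refine hcoh f uu (α + 1) fun β hβ => ?_
          rcases lt_or_eq_of_le (Order.lt_succ_iff.mp (by rwa [Ordinal.add_one_eq_succ] at hβ))
            with h | h
          · simp [hu, h.ne]
          · simp [hu, h, hfα]
        rw [this]; exact hxu
    | limit α hα ih =>
      rw [hlimL _ α hα]
      exact mem_iInter₂.mpr fun β hβ => ih β hβ
  -- ∅ ∈ I
  have hempty : (∅ : Set K) ∈ I := by
    obtain ⟨δ, _, hS⟩ := hwin fun _ => true
    exact hmono _ hS ∅ (empty_subset _)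
  -- the index type for the leaves
  have htype : Ordinal.type ((· < ·) : γ.ToType → γ.ToType → Prop) = γ := Ordinal.type_toType γ
  set ι := Σ b : γ.ToType, ({c : γ.ToType // c < b} → Bool) with hι
  -- decode an index into a branch
  set ext : ι → Ordinal.{u} → Bool := fun i β =>
    if h : β < Ordinal.typein (· < ·) i.1 then
      i.2 ⟨Ordinal.enum (· < ·) ⟨β, h.trans (Ordinal.typein_lt_type _ _)⟩, by
        conv_rhs => rw [← Ordinal.enum_typein ((· < ·) : γ.ToType → γ.ToType → Prop) i.1]
        exact Ordinal.enum_lt_enum.mpr h⟩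
    else true with hext
  set A : ι → Set K := fun i =>
    if L (ext i) (Ordinal.typein (· < ·) i.1) ∈ I then L (ext i) (Ordinal.typein (· < ·) i.1)
    else ∅ with hA
  have hmem : ∀ i, A i ∈ I := by
    intro i
    rw [hA]
    dsimp only
    split
    · assumption
    · exact hempty
  -- cardinality bound
  have hK : ℵ₀ ≤ #K := by
    have h1 : ℵ₀ ≤ γ.card := Ordinal.aleph0_le_card.mpr (Ordinal.omega0_le_of_isSuccLimit hlim)
    exact h1.trans (Cardinal.lt_ord.mp hγκ).le
  have hbdd : BddAbove (Set.range fun δ : {δ : Cardinal.{u} // δ.ord < γ} => (2 : Cardinal.{u}) ^ δ.1) := by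
    refine ⟨(2 : Cardinal.{u}) ^ γ.card, ?_⟩
    rintro _ ⟨δ, rfl⟩
    refine power_le_power_left two_ne_zero ?_
    have := Ordinal.card_le_card δ.2.le
    rwa [card_ord] at this
  have hcardι : #ι < #K := by
    have h1 : #ι = Cardinal.sum fun b : γ.ToType => #({c : γ.ToType // c < b} → Bool) := mk_sigma _
    have h2 : ∀ b : γ.ToType, #({c : γ.ToType // c < b} → Bool) ≤ twoPowLT γ := by
      intro b
      have hb : (Ordinal.typein ((· < ·) : γ.ToType → γ.ToType → Prop) b).card.ord < γ :=
        lt_of_le_of_lt (Cardinal.ord_card_le _) (by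
          have := Ordinal.typein_lt_type ((· < ·) : γ.ToType → γ.ToType → Prop) b
          rwa [htype] at this)
      have : #({c : γ.ToType // c < b} → Bool) = (2 : Cardinal.{u}) ^ (Ordinal.typein ((· < ·) : γ.ToType → γ.ToType → Prop) b).card := by
        rw [Cardinal.mk_arrow]
        simp [Ordinal.card_typein]
      rw [this]
      exact le_ciSup hbdd (⟨_, hb⟩ : {δ : Cardinal.{u} // δ.ord < γ})
    have h3 : #ι ≤ #γ.ToType * twoPowLT γ := by
      rw [h1, ← Cardinal.sum_const' γ.ToType (twoPowLT γ)]
      exact Cardinal.sum_le_sum _ _ h2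
    have h4 : #γ.ToType = γ.card := Cardinal.mk_toType γ
    calc #ι ≤ #γ.ToType * twoPowLT γ := h3
      _ < #K := by rw [h4]; exact mul_lt_of_lt hK (Cardinal.lt_ord.mp hγκ) hcard
  -- the leaves cover K
  refine hcover ι A hcardι hmem (eq_univ_iff_forall.mpr fun x => ?_)
  obtain ⟨δ, hδγ, hδI⟩ := hwin (cutBranch L x)
  set f := cutBranch L x with hf
  have hδ' : δ < Ordinal.type ((· < ·) : γ.ToType → γ.ToType → Prop) := by rw [htype]; exact hδγ
  set b : γ.ToType := Ordinal.enum (· < ·) ⟨δ, hδ'⟩ with hb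
  have htb : Ordinal.typein ((· < ·) : γ.ToType → γ.ToType → Prop) b = δ := Ordinal.typein_enum _ hδ'
  set g : {c : γ.ToType // c < b} → Bool := fun c => f (Ordinal.typein (· < ·) c.1) with hg
  set i : ι := ⟨b, g⟩ with hi
  have hagree : L (ext i) (Ordinal.typein (· < ·) i.1) = L f δ := by
    have : ∀ β < Ordinal.typein ((· < ·) : γ.ToType → γ.ToType → Prop) b, ext i β = f β := by
      intro β hβ
      rw [hext]
      simp only
      rw [dif_pos hβ]
      exact congrArg f (Ordinal.typein_enum _ _)
    have h := hcoh (ext i) f (Ordinal.typein (· < ·) i.1) this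
    rw [h, htb]
  rw [mem_iUnion]
  refine ⟨i, ?_⟩
  rw [hA]
  simp only
  rw [hagree, if_pos hδI]
  exact key x δ
end

section
/- Let κ be regular uncountable and I a <κ-complete ideal on κ containing all singletons, with the property that every I-positive set can be partitioned into κ-many pairwise disjoint I-positive sets. Then for every X ∈ I⁺, Cut has a winning strategy in the game U_κ(X, I, ω) in which Cut may partition X into κ-many disjoint I-positive pieces each round. -/
open Cardinal Set

universe u

/-- Let `κ` be regular uncountable and `I` a `<κ`-complete ideal on `κ` containing all
singletons, such that every `I`-positive set can be partitioned into `κ`-many pairwise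
disjoint `I`-positive sets.  Then for every `I`-positive `X`, Cut has a winning strategy
in the game `𝒰_κ(X, I, ω)`: a strategy `σ` (a function from finite sequences of Choose's
picks to disjoint partitions of `X` into `κ`-many `I`-positive pieces, indexed by `κ`
itself) such that for every play `g` of Choose, the intersection of the chosen pieces
lies in `I`. -/
theorem stmt13 {K : Type u} (hreg : (#K).IsRegular) (hunc : ℵ₀ < #K)
    (I : Set (Set K)) (hmono : ∀ A ∈ I, ∀ B, B ⊆ A → B ∈ I)
    (hcomp : ∀ (ι : Type u), #ι < #K → ∀ A : ι → Set K,
      (∀ i, A i ∈ I) → (⋃ i, A i) ∈ I)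
    (hsing : ∀ x : K, ({x} : Set K) ∈ I)
    (hpart : ∀ Y : Set K, Y ∉ I → ∃ A : K → Set K, (⋃ α, A α) = Y ∧
      (∀ α β : K, α ≠ β → Disjoint (A α) (A β)) ∧ ∀ α, A α ∉ I)
    (X : Set K) (hX : X ∉ I) :
    ∃ σ : List K → (K → Set K),
      (∀ l : List K, (⋃ α, σ l α) = X ∧
        (∀ α β : K, α ≠ β → Disjoint (σ l α) (σ l β)) ∧ ∀ α, σ l α ∉ I) ∧
      ∀ g : ℕ → K, (⋂ n : ℕ, σ ((List.range n).map g) (g n)) ∈ I := by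
  classical
  -- small sets are in I
  have hsmall : ∀ S : Set K, #S < #K → S ∈ I := by
    intro S hS
    have h := hcomp S hS (fun x => ({(x : K)} : Set K)) (fun x => hsing x)
    simpa using h
  -- an injection ℕ ↪ K
  have : Infinite K := by
    rw [Cardinal.infinite_iff]; exact hunc.le
  let f : ℕ ↪ K := Infinite.natEmbedding K
  obtain ⟨A, hAU, hAdisj, hApos⟩ := hpart X hX
  have hAsub : ∀ α, A α ⊆ X := fun α => hAU ▸ Set.subset_iUnion A α
  -- countable disjoint positive partition of X
  set Xn : ℕ → Set K := fun n =>
    Nat.rec (X \ ⋃ i : ℕ, A (f (i + 1))) (fun m _ => A (f (m + 1))) n with hXn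
  have hXn0 : Xn 0 = X \ ⋃ i : ℕ, A (f (i + 1)) := rfl
  have hXnS : ∀ m, Xn (m + 1) = A (f (m + 1)) := fun m => rfl
  have hXsub : ∀ n, Xn n ⊆ X := by
    intro n; cases n with
    | zero => exact Set.diff_subset
    | succ m => rw [hXnS]; exact hAsub _
  have hA0sub : A (f 0) ⊆ Xn 0 := by
    rw [hXn0]
    intro x hx
    refine ⟨hAsub _ hx, ?_⟩
    intro hxu
    obtain ⟨_, ⟨i, rfl⟩, hxi⟩ := hxu
    exact (hAdisj (f 0) (f (i + 1)) (fun h => by simpa using f.injective h)).le_bot ⟨hx, hxi⟩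
  have hXpos : ∀ n, Xn n ∉ I := by
    intro n; cases n with
    | zero => exact fun h => hApos (f 0) (hmono _ h _ hA0sub)
    | succ m => rw [hXnS]; exact hApos _
  have hXdisj : ∀ m n : ℕ, m ≠ n → Disjoint (Xn m) (Xn n) := by
    have key : ∀ m, Disjoint (Xn 0) (Xn (m + 1)) := by
      intro m
      rw [hXn0, hXnS]
      exact Set.disjoint_left.mpr fun x hx hx' => hx.2 (Set.mem_iUnion.mpr ⟨m, hx'⟩)
    intro m n hmn
    cases m with
    | zero => cases n with
      | zero => exact absurd rfl hmn
      | succ k => exact key k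
    | succ j => cases n with
      | zero => exact (key j).symm
      | succ k =>
        rw [hXnS, hXnS]
        exact hAdisj _ _ (fun h => hmn (by simpa using f.injective h))
  have hXUnion : (⋃ n : ℕ, Xn n) = X := by
    apply Set.Subset.antisymm
    · exact Set.iUnion_subset hXsub
    · intro x hx
      by_cases hxu : x ∈ ⋃ i : ℕ, A (f (i + 1))
      · obtain ⟨_, ⟨i, rfl⟩, hxi⟩ := hxu
        exact Set.mem_iUnion.mpr ⟨i + 1, by rw [hXnS]; exact hxi⟩
      · exact Set.mem_iUnion.mpr ⟨0, by rw [hXn0]; exact ⟨hx, hxu⟩⟩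
  -- complement of each Xn in X is positive
  have hcpos : ∀ n, X \ Xn n ∉ I := by
    intro n
    cases n with
    | zero =>
      intro h
      refine hApos (f 1) (hmono _ h _ ?_)
      intro x hx
      refine ⟨hAsub _ hx, fun hx0 => ?_⟩
      exact (hXdisj 0 1 (by simp)).le_bot ⟨hx0, hx⟩
    | succ m =>
      intro h
      refine hApos (f 0) (hmono _ h _ ?_)
      intro x hx
      refine ⟨hAsub _ hx, fun hx' => ?_⟩
      exact (hXdisj 0 (m + 1) (by simp)).le_bot ⟨hA0sub hx, hx'⟩
  -- each Xn has cardinality #K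
  have hcard : ∀ n, #(Xn n) = #K := by
    intro n
    refine le_antisymm (Cardinal.mk_set_le _) ?_
    by_contra h
    exact hXpos n (hsmall _ (lt_of_not_ge h))
  have hequiv : ∀ n, Nonempty (K ≃ Xn n) := fun n => Cardinal.eq.mp (hcard n).symm
  let e : ∀ n : ℕ, K ≃ Xn n := fun n => (hequiv n).some
  -- partitions of complements
  have hD := fun n => hpart (X \ Xn n) (hcpos n)
  choose D hDU hDdisj hDpos using hD
  have hDsub : ∀ n α, D n α ⊆ X \ Xn n := fun n α => (hDU n) ▸ Set.subset_iUnion (D n) α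
  -- the strategy
  set C : ℕ → K → Set K := fun n α => insert ((e n α : K)) (D n α) with hC
  refine ⟨fun l => C l.length, ?_, ?_⟩
  · intro l
    set n := l.length
    refine ⟨?_, ?_, ?_⟩
    · apply Set.Subset.antisymm
      · apply Set.iUnion_subset
        intro α
        intro x hx
        rcases hx with rfl | hx
        · exact hXsub n (e n α).2
        · exact (hDsub n α hx).1
      · intro x hx
        by_cases hxn : x ∈ Xn n
        · refine Set.mem_iUnion.mpr ⟨(e n).symm ⟨x, hxn⟩, Or.inl ?_⟩
          exact (congrArg Subtype.val ((e n).apply_symm_apply ⟨x, hxn⟩)).symm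
        · have : x ∈ ⋃ α, D n α := by rw [hDU]; exact ⟨hx, hxn⟩
          obtain ⟨_, ⟨α, rfl⟩, hα⟩ := this
          exact Set.mem_iUnion.mpr ⟨α, Or.inr hα⟩
    · intro α β hab
      rw [Set.disjoint_left]
      intro x hx hx'
      rcases hx with rfl | hx
      · rcases hx' with h | h
        · exact hab ((e n).injective (Subtype.ext h))
        · exact (hDsub n β h).2 (e n α).2
      · rcases hx' with rfl | h
        · exact (hDsub n α hx).2 (e n β).2
        · exact (hDdisj n α β hab).le_bot ⟨hx, h⟩
    · intro α h
      exact hDpos n α (hmono _ h _ (Set.subset_insert _ _))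
  · intro g
    have hsub : (⋂ n : ℕ, C ((List.range n).map g).length (g n)) ⊆
        ⋃ n : ULift.{u} ℕ, {((e n.down (g n.down) : K))} := by
      intro x hx
      simp only [Set.mem_iInter] at hx
      have hx0 : x ∈ C 0 (g 0) := by simpa using hx 0
      have hxX : x ∈ X := by
        rcases hx0 with rfl | h
        · exact hXsub 0 (e 0 (g 0)).2
        · exact (hDsub 0 (g 0) h).1
      have : x ∈ ⋃ n : ℕ, Xn n := hXUnion ▸ hxX
      obtain ⟨_, ⟨m, rfl⟩, hm⟩ := this
      have hxm : x ∈ C m (g m) := by simpa using hx m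
      rcases hxm with rfl | h
      · exact Set.mem_iUnion.mpr ⟨⟨m⟩, rfl⟩
      · exact absurd hm (hDsub m (g m) h).2
    refine hmono _ ?_ _ hsub
    refine hcomp (ULift.{u} ℕ) ?_ _ (fun n => hsing _)
    simpa using hunc
end

section
/- Let κ be regular uncountable, I a <κ-complete ideal on κ extending the bounded ideal, γ < κ a limit ordinal, and ν < κ a cardinal. Then the games U_ν(X, I, γ) (with disjoint partitions into at most ν pieces) and G_ν(X, I, γ) (with I-partitions of size at most ν) are equivalent: Cut wins one iff Cut wins the other, and Choose wins one iff Choose wins the other. -/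
open Cardinal Set

universe u

/-- Cut has a winning strategy in the cut-and-choose game of length `γ` on `κ` in which
Cut's moves are families of subsets of `κ` satisfying `Legal`, Choose picks one member
each round, and Choose wins iff the intersection of all their choices is `I`-positive. -/
def CutWinsFam {K : Type u} (I : Set (Set K)) (γ : Ordinal.{u})
    (Legal : Set (Set K) → Prop) : Prop :=
  ∃ σ : (Ordinal.{u} → Set K) → Ordinal.{u} → Set (Set K),
    (∀ h h' : Ordinal.{u} → Set K, ∀ α : Ordinal.{u},
      (∀ β < α, h β = h' β) → σ h α = σ h' α) ∧
    (∀ h : Ordinal.{u} → Set K, ∀ α < γ, Legal (σ h α)) ∧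
    ∀ h : Ordinal.{u} → Set K, (∀ α < γ, h α ∈ σ h α) → (⋂ α ∈ Set.Iio γ, h α) ∈ I

/-- Choose has a winning strategy in the cut-and-choose game of length `γ` on `κ` in
which Cut's moves are families of subsets of `κ` satisfying `Legal`, Choose picks one
member each round, and Choose wins iff the intersection of all their choices is
`I`-positive. -/
def ChooseWinsFam {K : Type u} (I : Set (Set K)) (γ : Ordinal.{u})
    (Legal : Set (Set K) → Prop) : Prop :=
  ∃ τ : (Ordinal.{u} → Set (Set K)) → Ordinal.{u} → Set K,
    (∀ W W' : Ordinal.{u} → Set (Set K), ∀ α : Ordinal.{u},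
      (∀ β ≤ α, W β = W' β) → τ W α = τ W' α) ∧
    ∀ W : Ordinal.{u} → Set (Set K), (∀ α < γ, Legal (W α)) →
      (∀ α < γ, τ W α ∈ W α) ∧ (⋂ α ∈ Set.Iio γ, τ W α) ∉ I

/-- A legal move of Cut in `𝒰_ν(X, I, γ)`: a disjoint partition of `X` into at most
`ν`-many pieces. -/
def LegalDisjoint {K : Type u} (X : Set K) (ν : Cardinal.{u}) (W : Set (Set K)) : Prop :=
  #W ≤ ν ∧ (∀ A ∈ W, ∀ B ∈ W, A ≠ B → Disjoint A B) ∧ ⋃₀ W = X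

/-- A legal move of Cut in `𝒢_ν(X, I, γ)`: an `I`-partition of `X` of size at most `ν`,
i.e. a maximal family of `I`-positive subsets of `X` with pairwise intersections
in `I`. -/
def LegalIPart {K : Type u} (I : Set (Set K)) (X : Set K) (ν : Cardinal.{u})
    (W : Set (Set K)) : Prop :=
  #W ≤ ν ∧ (∀ A ∈ W, A ⊆ X ∧ A ∉ I) ∧ (∀ A ∈ W, ∀ B ∈ W, A ≠ B → A ∩ B ∈ I) ∧
    ∀ Z : Set K, Z ⊆ X → Z ∉ I → ∃ w ∈ W, Z ∩ w ∉ I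

namespace Stmt14Aux

attribute [local instance] Classical.propDecidable

variable {K : Type u}

def plusFam (I : Set (Set K)) (W : Set (Set K)) : Set (Set K) := {w | w ∈ W ∧ w ∉ I}

noncomputable def fam0 (W : Set (Set K)) : Set K :=
  if h : W.Nonempty then h.some else ∅

lemma fam0_mem {W : Set (Set K)} (h : W.Nonempty) : fam0 W ∈ W := by
  rw [fam0, dif_pos h]; exact h.some_mem

noncomputable def assign (W : Set (Set K)) (x : K) : Set K :=
  if h : ∃ w ∈ W, x ∈ w then h.choose else fam0 W

lemma assign_mem {W : Set (Set K)} (hW : W.Nonempty) (x : K) : assign W x ∈ W := by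
  unfold assign; split_ifs with h
  · exact h.choose_spec.1
  · exact fam0_mem hW

lemma mem_assign {W : Set (Set K)} {x : K} (h : ∃ w ∈ W, x ∈ w) : x ∈ assign W x := by
  rw [assign, dif_pos h]; exact h.choose_spec.2

def pieceD (X : Set K) (W : Set (Set K)) (w : Set K) : Set K :=
  {x | x ∈ X ∧ assign W x = w}

noncomputable def disjFam (X : Set K) (W : Set (Set K)) : Set (Set K) :=
  pieceD X W '' W

noncomputable def backFn (X : Set K) (W : Set (Set K)) (A : Set K) : Set K :=
  if h : ∃ w ∈ W, pieceD X W w = A then h.choose else fam0 W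

lemma backFn_spec {X : Set K} {W : Set (Set K)} {A : Set K} (hA : A ∈ disjFam X W) :
    backFn X W A ∈ W ∧ pieceD X W (backFn X W A) = A := by
  obtain ⟨w, hw, rfl⟩ := hA
  have h : ∃ w' ∈ W, pieceD X W w' = pieceD X W w := ⟨w, hw, rfl⟩
  rw [backFn, dif_pos h]
  exact h.choose_spec

lemma pieceD_subset {X : Set K} {W : Set (Set K)} (w : Set K) :
    pieceD X W w ⊆ w ∪ (X \ ⋃₀ W) := by
  rintro x ⟨hx, rfl⟩
  by_cases h : ∃ v ∈ W, x ∈ v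
  · exact Or.inl (mem_assign h)
  · exact Or.inr ⟨hx, fun hc => h (by simpa [Set.mem_sUnion] using hc)⟩

lemma legal_disj {I : Set (Set K)} {X : Set K} {ν : Cardinal.{u}} {W : Set (Set K)}
    (hW : LegalIPart I X ν W) (hX : X ∉ I) :
    LegalDisjoint X ν (disjFam X W) := by
  obtain ⟨hcard, hsub, _, hmax⟩ := hW
  have hne : W.Nonempty := by
    obtain ⟨w, hw, -⟩ := hmax X (subset_refl X) hX
    exact ⟨w, hw⟩
  refine ⟨le_trans Cardinal.mk_image_le hcard, ?_, ?_⟩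
  · rintro A ⟨w, hw, rfl⟩ B ⟨v, hv, rfl⟩ hAB
    rw [Set.disjoint_left]
    rintro x ⟨hx1, h1⟩ ⟨hx2, h2⟩
    exact hAB (by rw [← h1, h2])
  · apply Set.Subset.antisymm
    · rintro x ⟨A, ⟨w, hw, rfl⟩, hx, -⟩
      exact hx
    · intro x hx
      exact ⟨pieceD X W (assign W x), ⟨assign W x, assign_mem hne x, rfl⟩, hx, rfl⟩

lemma null_compl {K : Type u} {I : Set (Set K)} {X : Set K} {ν : Cardinal.{u}}
    {W : Set (Set K)} (hempty : (∅ : Set K) ∈ I) (hW : LegalIPart I X ν W) :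
    X \ ⋃₀ W ∈ I := by
  by_contra h
  obtain ⟨w, hw, hint⟩ := hW.2.2.2 _ Set.diff_subset h
  apply hint
  have he : (X \ ⋃₀ W) ∩ w = ∅ := by
    ext x
    simp only [Set.mem_inter_iff, Set.mem_diff, Set.mem_empty_iff_false, iff_false, not_and]
    rintro ⟨hx, hns⟩ hxw
    exact hns ⟨w, hw, hxw⟩
  rw [he]; exact hempty

lemma legal_plus {K : Type u} {I : Set (Set K)} {X : Set K} {ν : Cardinal.{u}}
    {W : Set (Set K)} {κ : Cardinal.{u}}
    (hcomp : ∀ (ι : Type u), #ι < κ → ∀ A : ι → Set K, (∀ i, A i ∈ I) → (⋃ i, A i) ∈ I)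
    (hmono : ∀ A ∈ I, ∀ B, B ⊆ A → B ∈ I)
    (hempty : (∅ : Set K) ∈ I)
    (hν : ν < κ)
    (hW : LegalDisjoint X ν W) :
    LegalIPart I X ν (plusFam I W) := by
  obtain ⟨hcard, hdisj, hun⟩ := hW
  refine ⟨le_trans (Cardinal.mk_le_mk_of_subset (fun w hw => hw.1)) hcard, ?_, ?_, ?_⟩
  · rintro A ⟨hA, hAI⟩
    exact ⟨hun ▸ Set.subset_sUnion_of_mem hA, hAI⟩
  · rintro A ⟨hA, -⟩ B ⟨hB, -⟩ hAB
    have hd := hdisj A hA B hB hAB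
    rw [Set.disjoint_iff_inter_eq_empty] at hd
    rw [hd]; exact hempty
  · intro Z hZX hZ
    by_contra hcon
    push_neg at hcon
    apply hZ
    have hZeq : Z = ⋃ w : W, Z ∩ (w : Set K) := by
      ext x
      constructor
      · intro hx
        have hx' : x ∈ ⋃₀ W := by rw [hun]; exact hZX hx
        obtain ⟨w, hw, hxw⟩ := hx'
        exact Set.mem_iUnion.2 ⟨⟨w, hw⟩, hx, hxw⟩
      · intro hx
        obtain ⟨w, hxw⟩ := Set.mem_iUnion.1 hx
        exact hxw.1
    rw [hZeq]
    apply hcomp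
    · exact lt_of_le_of_lt hcard hν
    · rintro ⟨w, hw⟩
      by_cases hwI : w ∈ I
      · exact hmono w hwI _ Set.inter_subset_right
      · exact hcon w ⟨hw, hwI⟩

def trunc (f : Ordinal.{u} → Set K) (α : Ordinal.{u}) : Ordinal.{u} → Set K :=
  fun β => if β < α then f β else ∅

noncomputable def hatRec (G : Ordinal.{u} → (Ordinal.{u} → Set K) → Set K) :
    Ordinal.{u} → Set K :=
  Ordinal.lt_wf.fix (fun α ih => G α (fun β => if h : β < α then ih β h else ∅))

lemma hatRec_eq (G : Ordinal.{u} → (Ordinal.{u} → Set K) → Set K) (α : Ordinal.{u}) :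
    hatRec G α = G α (trunc (hatRec G) α) := by
  show Ordinal.lt_wf.fix _ α = _
  rw [WellFounded.fix_eq]
  congr 1

end Stmt14Aux

open Stmt14Aux

/-- Let `κ` be regular uncountable, `I` a `<κ`-complete ideal on `κ` extending the
bounded ideal, `γ < κ` a limit ordinal, and `ν < κ` a cardinal.  Then the games
`𝒰_ν(X, I, γ)` (disjoint partitions into at most `ν` pieces) and `𝒢_ν(X, I, γ)`
(`I`-partitions of size at most `ν`) are equivalent: Cut wins one iff Cut wins the
other, and Choose wins one iff Choose wins the other. -/


theorem stmt14 {K : Type u} [LinearOrder K] [IsWellOrder K (· < ·)]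
    (hreg : (#K).IsRegular) (hunc : ℵ₀ < #K)
    (I : Set (Set K))
    (hmono : ∀ A ∈ I, ∀ B, B ⊆ A → B ∈ I)
    (hempty : (∅ : Set K) ∈ I) (hproper : (Set.univ : Set K) ∉ I)
    (hbd : ∀ A : Set K, (∃ b : K, ∀ x ∈ A, x < b) → A ∈ I)
    (hcomp : ∀ (ι : Type u), #ι < #K → ∀ A : ι → Set K,
      (∀ i, A i ∈ I) → (⋃ i, A i) ∈ I)
    (γ : Ordinal.{u}) (hγ : Order.IsSuccLimit γ) (hγκ : γ < (#K).ord)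
    (ν : Cardinal.{u}) (hν : ν < #K)
    (X : Set K) (hX : X ∉ I) :
    (CutWinsFam I γ (LegalDisjoint X ν) ↔ CutWinsFam I γ (LegalIPart I X ν)) ∧
    (ChooseWinsFam I γ (LegalDisjoint X ν) ↔ ChooseWinsFam I γ (LegalIPart I X ν)) := by
  clear hbd hproper hreg
  have hunionI : ∀ A ∈ I, ∀ B ∈ I, A ∪ B ∈ I := by
    intro A hA B hB
    have hEq : A ∪ B = ⋃ b : ULift.{u} Bool, (if b.down then A else B) := by
      ext x
      simp only [Set.mem_union, Set.mem_iUnion]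
      constructor
      · rintro (h | h)
        · exact ⟨⟨true⟩, by simpa using h⟩
        · exact ⟨⟨false⟩, by simpa using h⟩
      · rintro ⟨⟨b⟩, h⟩
        cases b
        · exact Or.inr (by simpa using h)
        · exact Or.inl (by simpa using h)
    rw [hEq]
    exact hcomp _ (lt_trans (Cardinal.lt_aleph0_of_finite _) hunc) _
      (by rintro ⟨b⟩; cases b <;> simp [hA, hB])
  have hIioI : ∀ N : Ordinal.{u} → Set K, (∀ α < γ, N α ∈ I) →
      (⋃ α ∈ Set.Iio γ, N α) ∈ I := by
    intro N hN
    have hEq : (⋃ α ∈ Set.Iio γ, N α)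
        = ⋃ i : γ.ToType, N (((Ordinal.ToType.mk (o := γ))).symm i) := by
      ext x
      simp only [Set.mem_iUnion, Set.mem_Iio]
      constructor
      · rintro ⟨α, hα, hx⟩
        exact ⟨(Ordinal.ToType.mk (o := γ)) ⟨α, hα⟩, by simpa using hx⟩
      · rintro ⟨i, hx⟩
        exact ⟨(((Ordinal.ToType.mk (o := γ))).symm i).1, (((Ordinal.ToType.mk (o := γ))).symm i).2, hx⟩
    rw [hEq]
    exact hcomp _ (by rw [Cardinal.mk_toType]; exact Cardinal.lt_ord.mp hγκ) _
      (fun i => hN _ (((Ordinal.ToType.mk (o := γ))).symm i).2)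
  have hKey : ∀ A B N : Ordinal.{u} → Set K, (∀ α < γ, N α ∈ I) →
      (∀ α < γ, A α ⊆ B α ∪ N α) → (⋂ α ∈ Set.Iio γ, B α) ∈ I →
      (⋂ α ∈ Set.Iio γ, A α) ∈ I := by
    intro A B N hNI hsub hB
    have h1 : (⋂ α ∈ Set.Iio γ, A α)
        ⊆ (⋂ α ∈ Set.Iio γ, B α) ∪ (⋃ α ∈ Set.Iio γ, N α) := by
      intro x hx
      simp only [Set.mem_iInter, Set.mem_Iio] at hx
      by_cases h : ∃ α, α < γ ∧ x ∈ N α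
      · obtain ⟨α, hα, hxN⟩ := h
        exact Or.inr (by simp only [Set.mem_iUnion, Set.mem_Iio]; exact ⟨α, hα, hxN⟩)
      · push_neg at h
        left
        simp only [Set.mem_iInter, Set.mem_Iio]
        intro α hα
        rcases hsub α hα (hx α hα) with h' | h'
        · exact h'
        · exact absurd h' (h α hα)
    exact hmono _ (hunionI _ hB _ (hIioI N hNI)) _ h1
  have cut1 : CutWinsFam I γ (LegalDisjoint X ν) → CutWinsFam I γ (LegalIPart I X ν) := by
    rintro ⟨σ, hσc, hσl, hσw⟩
    refine ⟨fun h α => plusFam I (σ h α), ?_, ?_, ?_⟩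
    · intro h h' α hag
      exact congrArg (plusFam I) (hσc h h' α hag)
    · intro h α hα
      exact legal_plus hcomp hmono hempty hν (hσl h α hα)
    · intro h hp
      exact hσw h (fun α hα => (hp α hα).1)
  have ch2 : ChooseWinsFam I γ (LegalIPart I X ν) → ChooseWinsFam I γ (LegalDisjoint X ν) := by
    rintro ⟨τ, hτc, hτw⟩
    refine ⟨fun W α => τ (fun β => plusFam I (W β)) α, ?_, ?_⟩
    · intro W W' α hag
      exact hτc _ _ α (fun β hβ => by rw [hag β hβ])
    · intro W hW
      obtain ⟨hmem, hpos⟩ := hτw (fun β => plusFam I (W β))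
        (fun α hα => legal_plus hcomp hmono hempty hν (hW α hα))
      exact ⟨fun α hα => (hmem α hα).1, hpos⟩
  have cut2 : CutWinsFam I γ (LegalIPart I X ν) → CutWinsFam I γ (LegalDisjoint X ν) := by
    rintro ⟨σ, hσc, hσl, hσw⟩
    let hat : (Ordinal.{u} → Set K) → Ordinal.{u} → Set K :=
      fun h => hatRec (fun α f => backFn X (σ f α) (h α))
    have hat_eq : ∀ (h : Ordinal.{u} → Set K) (α : Ordinal.{u}),
        hat h α = backFn X (σ (trunc (hat h) α) α) (h α) :=
      fun h α => hatRec_eq (fun α f => backFn X (σ f α) (h α)) α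
    have htr : ∀ (f : Ordinal.{u} → Set K) (α : Ordinal.{u}), σ (trunc f α) α = σ f α :=
      fun f α => hσc _ _ α (fun δ hδ => by simp [trunc, hδ])
    have hat_eq' : ∀ (h : Ordinal.{u} → Set K) (α : Ordinal.{u}),
        hat h α = backFn X (σ (hat h) α) (h α) :=
      fun h α => by rw [hat_eq h α, htr]
    have hatCong : ∀ h h' : Ordinal.{u} → Set K, ∀ β : Ordinal.{u},
        (∀ δ ≤ β, h δ = h' δ) → hat h β = hat h' β := by
      intro h h' β
      induction β using Ordinal.induction with
      | h β IH =>
        intro hag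
        rw [hat_eq h β, hat_eq h' β]
        have h1 : trunc (hat h) β = trunc (hat h') β := by
          funext δ
          by_cases hd : δ < β
          · simp only [trunc, if_pos hd]
            exact IH δ hd (fun e he => hag e (le_trans he hd.le))
          · simp [trunc, hd]
        rw [h1, hag β le_rfl]
    refine ⟨fun h α => disjFam X (σ (hat h) α), ?_, ?_, ?_⟩
    · intro h h' α hag
      have h2 : σ (hat h) α = σ (hat h') α :=
        hσc _ _ α (fun β hβ => hatCong h h' β (fun δ hδ => hag δ (lt_of_le_of_lt hδ hβ)))
      exact congrArg (disjFam X) h2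
    · intro h α hα
      exact legal_disj (hσl (hat h) α hα) hX
    · intro h hp
      have hback : ∀ α, α < γ → hat h α ∈ σ (hat h) α ∧
          pieceD X (σ (hat h) α) (hat h α) = h α := by
        intro α hα
        rw [hat_eq' h α]
        exact backFn_spec (hp α hα)
      have hin : (⋂ α ∈ Set.Iio γ, hat h α) ∈ I :=
        hσw (hat h) (fun α hα => (hback α hα).1)
      refine hKey h (hat h) (fun α => X \ ⋃₀ (σ (hat h) α))
        (fun α hα => null_compl hempty (hσl (hat h) α hα)) ?_ hin
      intro α hα
      show h α ⊆ hat h α ∪ (X \ ⋃₀ (σ (hat h) α))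
      rw [← (hback α hα).2]
      exact pieceD_subset _
  have ch1 : ChooseWinsFam I γ (LegalDisjoint X ν) → ChooseWinsFam I γ (LegalIPart I X ν) := by
    rintro ⟨τ, hτc, hτw⟩
    refine ⟨fun W α => backFn X (W α) (τ (fun β => disjFam X (W β)) α), ?_, ?_⟩
    · intro W W' α hag
      have h1 : τ (fun β => disjFam X (W β)) α = τ (fun β => disjFam X (W' β)) α :=
        hτc _ _ α (fun β hβ => by rw [hag β hβ])
      show backFn X (W α) (τ (fun β => disjFam X (W β)) α)
        = backFn X (W' α) (τ (fun β => disjFam X (W' β)) α)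
      rw [h1, hag α le_rfl]
    · intro W hW
      obtain ⟨hmem, hpos⟩ := hτw (fun β => disjFam X (W β))
        (fun α hα => legal_disj (hW α hα) hX)
      have hspec : ∀ α, α < γ →
          backFn X (W α) (τ (fun β => disjFam X (W β)) α) ∈ W α ∧
          pieceD X (W α) (backFn X (W α) (τ (fun β => disjFam X (W β)) α))
            = τ (fun β => disjFam X (W β)) α :=
        fun α hα => backFn_spec (hmem α hα)
      refine ⟨fun α hα => (hspec α hα).1, ?_⟩
      intro hcon
      apply hpos
      refine hKey (fun α => τ (fun β => disjFam X (W β)) α)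
        (fun α => backFn X (W α) (τ (fun β => disjFam X (W β)) α))
        (fun α => X \ ⋃₀ (W α))
        (fun α hα => null_compl hempty (hW α hα)) ?_ hcon
      intro α hα
      show τ (fun β => disjFam X (W β)) α
        ⊆ backFn X (W α) (τ (fun β => disjFam X (W β)) α) ∪ (X \ ⋃₀ (W α))
      conv_lhs => rw [← (hspec α hα).2]
      exact pieceD_subset _
  exact ⟨⟨cut1, cut2⟩, ⟨ch1, ch2⟩⟩
end

section
/- Let Q be a poset, γ a limit ordinal, and X ∈ Q. If Q is (γ,∞)-distributive with respect to X, then Cut does not have a winning strategy in the game G_∞(X, Q, γ). -/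
open Cardinal Set

universe u

/-- `W` is a maximal antichain of the poset `Q` below `X`. -/
def IsMaxAntichainBelow {Q : Type u} [PartialOrder Q] (X : Q) (W : Set Q) : Prop :=
  (∀ a ∈ W, a ≤ X) ∧
  (∀ a ∈ W, ∀ b ∈ W, a ≠ b → ¬ ∃ r, r ≤ a ∧ r ≤ b) ∧
  ∀ q : Q, q ≤ X → ∃ a ∈ W, ∃ r, r ≤ q ∧ r ≤ a

/-- Cut has a winning strategy in the poset game of length `γ`: each round Cut plays a
set of conditions satisfying `Legal` (e.g. a maximal antichain below `X` of bounded
size), Choose picks an element, and Choose wins iff their choices have a lower bound. -/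
def CutWinsPoset {Q : Type u} [PartialOrder Q] (γ : Ordinal.{u})
    (Legal : Set Q → Prop) : Prop :=
  ∃ σ : (Ordinal.{u} → Q) → Ordinal.{u} → Set Q,
    (∀ h h' : Ordinal.{u} → Q, ∀ α : Ordinal.{u},
      (∀ β < α, h β = h' β) → σ h α = σ h' α) ∧
    (∀ h : Ordinal.{u} → Q, ∀ α < γ, Legal (σ h α)) ∧
    ∀ h : Ordinal.{u} → Q, (∀ α < γ, h α ∈ σ h α) → ¬ ∃ b, ∀ α < γ, b ≤ h α

/-- Choose has a winning strategy in the poset game of length `γ`. -/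
def ChooseWinsPoset {Q : Type u} [PartialOrder Q] (γ : Ordinal.{u})
    (Legal : Set Q → Prop) : Prop :=
  ∃ τ : (Ordinal.{u} → Set Q) → Ordinal.{u} → Q,
    (∀ W W' : Ordinal.{u} → Set Q, ∀ α : Ordinal.{u},
      (∀ β ≤ α, W β = W' β) → τ W α = τ W' α) ∧
    ∀ W : Ordinal.{u} → Set Q, (∀ α < γ, Legal (W α)) →
      (∀ α < γ, τ W α ∈ W α) ∧ ∃ b, ∀ α < γ, b ≤ τ W α

/-- A "run of length `α` below `r` against `σ`". -/
def Run17 {Q : Type u} [PartialOrder Q]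
    (σ : (Ordinal.{u} → Q) → Ordinal.{u} → Set Q)
    (r : Q) (α : Ordinal.{u}) (h : Ordinal.{u} → Q) : Prop :=
  ∀ β < α, h β ∈ σ h β ∧ r ≤ h β

/-- Conditions admitting a run of length `α` below them. -/
def D17 {Q : Type u} [PartialOrder Q]
    (σ : (Ordinal.{u} → Q) → Ordinal.{u} → Set Q)
    (X : Q) (α : Ordinal.{u}) : Set Q :=
  {r | r ≤ X ∧ ∃ h, Run17 σ r α h}

/-- Any dense-below-`X` set of conditions `≤ X` contains a maximal antichain below `X`. -/
lemma my_exists_maxAntichain {Q : Type u} [PartialOrder Q] (X : Q) (S : Set Q)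
    (hS : ∀ s ∈ S, s ≤ X)
    (hdense : ∀ q, q ≤ X → ∃ t ∈ S, t ≤ q) :
    ∃ W, W ⊆ S ∧ IsMaxAntichainBelow X W := by
  have hzorn : ∀ c ⊆ {A : Set Q | A ⊆ S ∧ ∀ a ∈ A, ∀ b ∈ A, a ≠ b → ¬ ∃ r, r ≤ a ∧ r ≤ b},
      IsChain (· ⊆ ·) c → ∃ ub ∈ {A : Set Q | A ⊆ S ∧ ∀ a ∈ A, ∀ b ∈ A, a ≠ b →
        ¬ ∃ r, r ≤ a ∧ r ≤ b}, ∀ s ∈ c, s ⊆ ub := by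
    intro c hc hchain
    refine ⟨⋃₀ c, ⟨fun a ⟨s, hsc, has⟩ => (hc hsc).1 has, ?_⟩,
      fun s hsc => Set.subset_sUnion_of_mem hsc⟩
    rintro a ⟨s₁, hs₁, ha₁⟩ b ⟨s₂, hs₂, hb₂⟩ hab
    rcases hchain.total hs₁ hs₂ with hsub | hsub
    · exact (hc hs₂).2 a (hsub ha₁) b hb₂ hab
    · exact (hc hs₁).2 a ha₁ b (hsub hb₂) hab
  obtain ⟨m, hm⟩ := zorn_subset
    {A : Set Q | A ⊆ S ∧ ∀ a ∈ A, ∀ b ∈ A, a ≠ b → ¬ ∃ r, r ≤ a ∧ r ≤ b} hzorn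
  refine ⟨m, hm.prop.1, fun a ha => hS a (hm.prop.1 ha), hm.prop.2, ?_⟩
  intro q hq
  obtain ⟨t, htS, htq⟩ := hdense q hq
  by_cases hc : ∃ a ∈ m, ∃ r, r ≤ t ∧ r ≤ a
  · obtain ⟨a, ham, r, hrt, hra⟩ := hc
    exact ⟨a, ham, r, hrt.trans htq, hra⟩
  · exfalso
    have htm : t ∉ m := fun htm => hc ⟨t, htm, t, le_rfl, le_rfl⟩
    have hins : insert t m ∈
        {A : Set Q | A ⊆ S ∧ ∀ a ∈ A, ∀ b ∈ A, a ≠ b → ¬ ∃ r, r ≤ a ∧ r ≤ b} := by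
      constructor
      · exact Set.insert_subset htS hm.prop.1
      · rintro a (rfl | ham) b (rfl | hbm) hab
        · exact absurd rfl hab
        · rintro ⟨r, hra, hrb⟩; exact hc ⟨b, hbm, r, hra, hrb⟩
        · rintro ⟨r, hra, hrb⟩; exact hc ⟨a, ham, r, hrb, hra⟩
        · exact hm.prop.2 a ham b hbm hab
    have := hm.2 hins (Set.subset_insert t m)
    exact htm (this (Set.mem_insert t m))

/-- Two runs below a common bound agree. -/
lemma agree17 {Q : Type u} [PartialOrder Q] {γ : Ordinal.{u}} {X : Q}
    {σ : (Ordinal.{u} → Q) → Ordinal.{u} → Set Q}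
    (hind : ∀ h h' : Ordinal.{u} → Q, ∀ α : Ordinal.{u},
      (∀ β < α, h β = h' β) → σ h α = σ h' α)
    (hleg : ∀ h : Ordinal.{u} → Q, ∀ α < γ, IsMaxAntichainBelow X (σ h α))
    {b : Q} :
    ∀ β : Ordinal.{u}, β < γ → ∀ {α α' : Ordinal.{u}} {h h' : Ordinal.{u} → Q},
      Run17 σ b α h → Run17 σ b α' h' → β < α → β < α' → h β = h' β := by
  intro β
  induction β using Ordinal.induction with
  | h β IH =>
    intro hβγ α α' h h' hr hr' hβα hβα'
    have hσ : σ h β = σ h' β := hind h h' β (fun β' hβ' =>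
      IH β' hβ' (hβ'.trans hβγ) hr hr' (hβ'.trans hβα) (hβ'.trans hβα'))
    by_contra hne
    exact (hleg h β hβγ).2.1 (h β) (hr β hβα).1 (h' β) (hσ ▸ (hr' β hβα').1) hne
      ⟨b, (hr β hβα).2, (hr' β hβα').2⟩

/-- Extension: below any `r ∈ D17 α`, the set `D17 (succ α)` is dense. -/
lemma ext17 {Q : Type u} [PartialOrder Q] {γ : Ordinal.{u}} {X : Q}
    {σ : (Ordinal.{u} → Q) → Ordinal.{u} → Set Q}
    (hind : ∀ h h' : Ordinal.{u} → Q, ∀ α : Ordinal.{u},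
      (∀ β < α, h β = h' β) → σ h α = σ h' α)
    (hleg : ∀ h : Ordinal.{u} → Q, ∀ α < γ, IsMaxAntichainBelow X (σ h α))
    {α : Ordinal.{u}} (hα : α < γ) {r : Q} (hr : r ∈ D17 σ X α) :
    ∀ s ≤ r, ∃ t ∈ D17 σ X (Order.succ α), t ≤ s := by
  obtain ⟨hrX, h, hrun⟩ := hr
  intro s hs
  obtain ⟨a, ha, t, hts, hta⟩ := (hleg h α hα).2.2 s (hs.trans hrX)
  set h' : Ordinal.{u} → Q := fun β => if β = α then a else h β with hh'
  have hagree : ∀ β' < α, h' β' = h β' := fun β' hβ' => by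
    simp [hh', hβ'.ne]
  refine ⟨t, ⟨hts.trans (hs.trans hrX), h', ?_⟩, hts⟩
  intro β hβ
  rcases (Order.lt_succ_iff.mp hβ).lt_or_eq with hlt | heq
  · have hβval : h' β = h β := hagree β hlt
    have hσ : σ h' β = σ h β := hind h' h β (fun β' hβ' => hagree β' (hβ'.trans hlt))
    rw [hβval, hσ]
    exact ⟨(hrun β hlt).1, hts.trans (hs.trans (hrun β hlt).2)⟩
  · subst heq
    have hβval : h' β = a := by simp [hh']
    have hσ : σ h' β = σ h β := hind h' h β (fun β' hβ' => hagree β' hβ')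
    rw [hβval, hσ]
    exact ⟨ha, hta⟩

/-- Let `Q` be a poset, `γ` a limit ordinal, and `X ∈ Q`.  If `Q` is
`(γ,∞)`-distributive with respect to `X` (every `γ`-sequence of maximal antichains of
`Q` below `X` of arbitrary size admits a positive branch), then Cut does not have a
winning strategy in the game `𝒢_∞(X, Q, γ)`. -/
theorem stmt17 {Q : Type u} [PartialOrder Q]
    (γ : Ordinal.{u}) (hγ : Order.IsSuccLimit γ) (X : Q)
    (hdist : ∀ W : Ordinal.{u} → Set Q,
      (∀ α < γ, IsMaxAntichainBelow X (W α)) →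
      ∃ g : Ordinal.{u} → Q, (∀ α < γ, g α ∈ W α) ∧ ∃ b, ∀ α < γ, b ≤ g α) :
    ¬ CutWinsPoset γ (fun W => IsMaxAntichainBelow X W) := by
  rintro ⟨σ, hind, hleg, hwin⟩
  -- the amalgamated antichains
  have hSex : ∀ α : Ordinal.{u}, ∃ W : Set Q, α < γ →
      (W ⊆ D17 σ X (Order.succ α) ∪
        {r | r ≤ X ∧ ∀ s ∈ D17 σ X (Order.succ α), ¬ ∃ u, u ≤ r ∧ u ≤ s}) ∧
      IsMaxAntichainBelow X W := by
    intro α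
    by_cases hα : α < γ
    · obtain ⟨W, hW1, hW2⟩ := my_exists_maxAntichain X
        (D17 σ X (Order.succ α) ∪
          {r | r ≤ X ∧ ∀ s ∈ D17 σ X (Order.succ α), ¬ ∃ u, u ≤ r ∧ u ≤ s})
        (by rintro s (hs | hs); exacts [hs.1, hs.1])
        (by
          intro q hq
          by_cases hc : ∃ s ∈ D17 σ X (Order.succ α), ∃ u, u ≤ q ∧ u ≤ s
          · obtain ⟨s, hsD, u, huq, hus⟩ := hc
            refine ⟨u, Or.inl ⟨huq.trans hq, ?_⟩, huq⟩
            obtain ⟨hsX, k, hk⟩ := hsD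
            exact ⟨k, fun β hβ => ⟨(hk β hβ).1, hus.trans (hk β hβ).2⟩⟩
          · exact ⟨q, Or.inr ⟨hq, fun s hs hcomp => hc ⟨s, hs, hcomp⟩⟩, le_rfl⟩)
      exact ⟨W, fun _ => ⟨hW1, hW2⟩⟩
    · exact ⟨∅, fun h => absurd h hα⟩
  choose W hW using hSex
  obtain ⟨g, hg, b, hb⟩ := hdist W (fun α hα => (hW α hα).2)
  have hbX : b ≤ X := (hb 0 hγ.pos).trans ((hW 0 hγ.pos).2.1 _ (hg 0 hγ.pos))
  -- main claim: b admits a run of every length ≤ γ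
  have main : ∀ α : Ordinal.{u}, α ≤ γ → b ∈ D17 σ X α := by
    intro α
    induction α using Ordinal.limitRecOn with
    | zero =>
      exact fun _ => ⟨hbX, fun _ => X, fun β hβ => absurd hβ ((not_lt_bot : ¬ β < ⊥))⟩
    | add_one α IH =>
      rw [Ordinal.add_one_eq_succ]
      intro hsucc
      have hαγ : α < γ := (Order.lt_succ α).trans_le hsucc
      have hbD := IH hαγ.le
      obtain ⟨t, htD, htb⟩ := ext17 hind hleg hαγ hbD b le_rfl
      have hbg := hb α hαγ
      rcases (hW α hαγ).1 (hg α hαγ) with hgood | hbad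
      · obtain ⟨hgX, k, hk⟩ := hgood
        exact ⟨hbX, k, fun β hβ => ⟨(hk β hβ).1, hbg.trans (hk β hβ).2⟩⟩
      · exact (hbad.2 t htD ⟨t, htb.trans hbg, le_rfl⟩).elim
    | limit lam hlam IH =>
      intro hlamγ
      have hk : ∀ β : Ordinal.{u}, ∃ k : Ordinal.{u} → Q, β < lam →
          Run17 σ b (Order.succ β) k := by
        intro β
        by_cases hβ : β < lam
        · obtain ⟨_, k, hkr⟩ := IH (Order.succ β) (hlam.succ_lt hβ)
            ((hlam.succ_lt hβ).le.trans hlamγ)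
          exact ⟨k, fun _ => hkr⟩
        · exact ⟨fun _ => X, fun h => absurd h hβ⟩
      choose k hkr using hk
      set H : Ordinal.{u} → Q := fun β => if hβ : β < lam then k β β else X with hH
      refine ⟨hbX, H, ?_⟩
      intro β hβ
      have hrβ : Run17 σ b (Order.succ β) (k β) := hkr β hβ
      have hHβ : H β = k β β := dif_pos hβ
      have hσ : σ H β = σ (k β) β := by
        refine hind H (k β) β (fun β' hβ' => ?_)
        have hβ'lam : β' < lam := hβ'.trans hβ
        have hHβ' : H β' = k β' β' := dif_pos hβ'lam
        rw [hHβ']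
        exact agree17 hind hleg β' (hβ'lam.trans_le hlamγ) (hkr β' hβ'lam) hrβ
          (Order.lt_succ β') (hβ'.trans (Order.lt_succ β))
      rw [hHβ, hσ]
      exact ⟨(hrβ β (Order.lt_succ β)).1, (hrβ β (Order.lt_succ β)).2⟩
  obtain ⟨_, h, hrun⟩ := main γ le_rfl
  exact hwin h (fun α hα => (hrun α hα).1) ⟨b, fun α hα => (hrun α hα).2⟩
end

section
/- Let κ be regular uncountable, I an ideal on κ, and γ < κ a limit ordinal. Then Empty has a winning strategy in the Banach–Mazur game B(I,γ) if and only if Cut has a winning strategy in the game G_∞(X, I, ≤γ) for some X ∈ I⁺. -/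
open Cardinal Set

universe u

/-- It is Empty's turn at stage `α` of the Banach–Mazur game: Empty starts at `0`,
players alternate, and Nonempty moves first at each limit stage. -/
def emptyTurn (α : Ordinal.{u}) : Prop :=
  (∃ n : ℕ, α = (n : Ordinal.{u}) ∧ Even n) ∨
  (∃ β : Ordinal.{u}, ∃ n : ℕ, Order.IsSuccLimit β ∧ α = β + (n : Ordinal.{u}) ∧ Odd n)

/-- The run `s` of the Banach–Mazur game for the family `I` is valid below `α`:
every move so far is `I`-positive and contained in all earlier moves. -/
def BMValid {K : Type u} (I : Set (Set K)) (s : Ordinal.{u} → Set K)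
    (α : Ordinal.{u}) : Prop :=
  ∀ β < α, s β ∉ I ∧ ∀ β' < β, s β ⊆ s β'

/-- `A` is a legal move at stage `α` of the run `s`: `I`-positive and contained in all
earlier moves. -/
def BMLegal {K : Type u} (I : Set (Set K)) (s : Ordinal.{u} → Set K)
    (α : Ordinal.{u}) (A : Set K) : Prop :=
  A ∉ I ∧ ∀ β < α, A ⊆ s β

/-- Empty has a winning strategy in the Banach–Mazur game `ℬ(I,γ)`: a coherent strategy
`σ` such that, in any run following `σ` in which Nonempty plays legally whenever the
position is valid, `σ`'s own moves are legal and it is not the case that the run is fully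
valid with nonempty intersection. -/
def EmptyWinsBM {K : Type u} (I : Set (Set K)) (γ : Ordinal.{u}) : Prop :=
  ∃ σ : (Ordinal.{u} → Set K) → Ordinal.{u} → Set K,
    (∀ s s' : Ordinal.{u} → Set K, ∀ α : Ordinal.{u},
      (∀ β < α, s β = s' β) → σ s α = σ s' α) ∧
    ∀ s : Ordinal.{u} → Set K,
      (∀ α < γ, emptyTurn α → s α = σ s α) →
      (∀ α < γ, ¬ emptyTurn α → BMValid I s α → BMLegal I s α (s α)) →
      (∀ α < γ, emptyTurn α → BMValid I s α → BMLegal I s α (s α)) ∧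
      ¬ (BMValid I s γ ∧ (⋂ α ∈ Set.Iio γ, s α).Nonempty)

/-- Nonempty has a winning strategy in the Banach–Mazur game `ℬ(I,γ)`: a coherent
strategy `τ` such that, in any run following `τ` in which Empty plays legally whenever
the position is valid, `τ`'s own moves are legal, the run is fully valid, and the final
intersection is nonempty. -/
def NonemptyWinsBM {K : Type u} (I : Set (Set K)) (γ : Ordinal.{u}) : Prop :=
  ∃ τ : (Ordinal.{u} → Set K) → Ordinal.{u} → Set K,
    (∀ s s' : Ordinal.{u} → Set K, ∀ α : Ordinal.{u},
      (∀ β < α, s β = s' β) → τ s α = τ s' α) ∧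
    ∀ s : Ordinal.{u} → Set K,
      (∀ α < γ, ¬ emptyTurn α → s α = τ s α) →
      (∀ α < γ, emptyTurn α → BMValid I s α → BMLegal I s α (s α)) →
      (∀ α < γ, ¬ emptyTurn α → BMValid I s α → BMLegal I s α (s α)) ∧
      BMValid I s γ ∧ (⋂ α ∈ Set.Iio γ, s α).Nonempty

/-- `W` is an `I`-partition of `X`: a maximal family of `I`-positive subsets of `X` with
pairwise intersections in `I`. -/
def IPartition {K : Type u} (I : Set (Set K)) (X : Set K) (W : Set (Set K)) : Prop :=
  (∀ A ∈ W, A ⊆ X ∧ A ∉ I) ∧ (∀ A ∈ W, ∀ B ∈ W, A ≠ B → A ∩ B ∈ I) ∧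
    ∀ Z : Set K, Z ⊆ X → Z ∉ I → ∃ w ∈ W, Z ∩ w ∉ I

/-- Cut has a winning strategy in the game `𝒢_∞(X, I, ≤γ)`: each round Cut plays an
`I`-partition of `X` of arbitrary size and Choose picks an element; Choose wins iff all
intersections of fewer than `γ`-many choices are `I`-positive and the intersection of
all `γ`-many choices is nonempty. -/
def CutWinsLeq {K : Type u} (I : Set (Set K)) (X : Set K) (γ : Ordinal.{u}) : Prop :=
  ∃ σ : (Ordinal.{u} → Set K) → Ordinal.{u} → Set (Set K),
    (∀ h h' : Ordinal.{u} → Set K, ∀ α : Ordinal.{u},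
      (∀ β < α, h β = h' β) → σ h α = σ h' α) ∧
    (∀ h : Ordinal.{u} → Set K, ∀ α < γ, IPartition I X (σ h α)) ∧
    ∀ h : Ordinal.{u} → Set K, (∀ α < γ, h α ∈ σ h α) →
      ¬ ((∀ δ < γ, (⋂ β ∈ Set.Iio δ, h β) ∉ I) ∧ (⋂ β ∈ Set.Iio γ, h β).Nonempty)

/-- Choose has a winning strategy in the game `𝒢_∞(X, I, ≤γ)`. -/
def ChooseWinsLeq {K : Type u} (I : Set (Set K)) (X : Set K) (γ : Ordinal.{u}) : Prop :=
  ∃ τ : (Ordinal.{u} → Set (Set K)) → Ordinal.{u} → Set K,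
    (∀ W W' : Ordinal.{u} → Set (Set K), ∀ α : Ordinal.{u},
      (∀ β ≤ α, W β = W' β) → τ W α = τ W' α) ∧
    ∀ W : Ordinal.{u} → Set (Set K), (∀ α < γ, IPartition I X (W α)) →
      (∀ α < γ, τ W α ∈ W α) ∧ (∀ δ < γ, (⋂ β ∈ Set.Iio δ, τ W β) ∉ I) ∧
      (⋂ β ∈ Set.Iio γ, τ W β).Nonempty

section Aux
open Ordinal
attribute [local instance] Classical.propDecidable


lemma limadd_ne_nat {β : Ordinal.{u}} (hβ : Order.IsSuccLimit β) (n m : ℕ) :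
    β + (n : Ordinal.{u}) ≠ (m : Ordinal.{u}) := by
  intro h
  have h1 : (m : Ordinal.{u}) < ω := Ordinal.nat_lt_omega0 m
  have h2 : ω ≤ β := Ordinal.omega0_le_of_isSuccLimit hβ
  have h3 : β ≤ β + n := le_self_add
  rw [h] at h3
  exact absurd (h3.trans_lt h1) (not_lt.2 h2)

lemma limadd_inj {β β' : Ordinal.{u}} (hβ : Order.IsSuccLimit β) (hβ' : Order.IsSuccLimit β') {n n' : ℕ}
    (h : β + (n : Ordinal.{u}) = β' + (n' : Ordinal.{u})) : β = β' ∧ n = n' := by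
  have key : ∀ {c c' : Ordinal.{u}} {m m' : ℕ}, Order.IsSuccLimit c → Order.IsSuccLimit c' → c ≤ c' →
      c + (m : Ordinal.{u}) = c' + (m' : Ordinal.{u}) → c = c' := by
    intro c c' m m' hc hc' hle heq
    by_contra hne
    have hlt : c < c' := lt_of_le_of_ne hle hne
    set k := c' - c with hk
    have hck : c + k = c' := Ordinal.add_sub_cancel_of_le hle
    have hkw : k < ω := by
      have h4 : c' ≤ c' + m' := le_self_add
      have h5 : c + k ≤ c + m := by rw [hck, heq]; exact h4
      have := (add_le_add_iff_left c).1 h5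
      exact this.trans_lt (Ordinal.nat_lt_omega0 m)
    obtain ⟨j, hj⟩ := Ordinal.lt_omega0.1 hkw
    rw [hj] at hck
    have hjne : j ≠ 0 := by
      intro hj0; rw [hj0] at hck; simp at hck; exact hne hck
    obtain ⟨j', rfl⟩ := Nat.exists_eq_succ_of_ne_zero hjne
    have : c' = Order.succ (c + j') := by
      rw [← hck]; push_cast; rw [← add_assoc, Ordinal.add_one_eq_succ]
    exact (Order.not_isSuccLimit_succ _) (this ▸ hc')
  have hbb : β = β' := by
    rcases le_total β β' with hle | hle
    · exact key hβ hβ' hle h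
    · exact (key hβ' hβ hle h.symm).symm
  subst hbb
  have := (add_right_inj β).1 h
  exact ⟨rfl, Nat.cast_injective this⟩

lemma decomp (α : Ordinal.{u}) :
    (∃ n : ℕ, α = (n : Ordinal.{u})) ∨
    (∃ β : Ordinal.{u}, ∃ n : ℕ, Order.IsSuccLimit β ∧ α = β + (n : Ordinal.{u})) := by
  have hdm : ω * (α / ω) + α % ω = α := Ordinal.div_add_mod α ω
  obtain ⟨n, hn⟩ := Ordinal.lt_omega0.1 (Ordinal.mod_lt α Ordinal.omega0_ne_zero)
  rw [hn] at hdm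
  by_cases hq : α / ω = 0
  · left; exact ⟨n, by rw [← hdm, hq, mul_zero, zero_add]⟩
  · right
    refine ⟨ω * (α / ω), n, ?_, hdm.symm⟩
    exact Ordinal.isSuccLimit_iff_omega0_dvd.2
      ⟨_root_.mul_ne_zero Ordinal.omega0_ne_zero hq, ⟨α / ω, rfl⟩⟩

lemma emptyTurn_nat (n : ℕ) : emptyTurn (n : Ordinal.{u}) ↔ Even n := by
  constructor
  · rintro (⟨m, hm, hev⟩ | ⟨β, m, hβ, hm, _⟩)
    · rwa [Nat.cast_injective hm]
    · exact absurd hm.symm (limadd_ne_nat hβ m n)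
  · intro h; exact Or.inl ⟨n, rfl, h⟩

lemma emptyTurn_limadd {β : Ordinal.{u}} (hβ : Order.IsSuccLimit β) (n : ℕ) :
    emptyTurn (β + (n : Ordinal.{u})) ↔ Odd n := by
  constructor
  · rintro (⟨m, hm, _⟩ | ⟨β', m, hβ', hm, hodd⟩)
    · exact absurd hm (limadd_ne_nat hβ n m)
    · obtain ⟨-, rfl⟩ := limadd_inj hβ hβ' hm
      exact hodd
  · intro h; exact Or.inr ⟨β, n, hβ, rfl, h⟩

lemma emptyTurn_zero : emptyTurn (0 : Ordinal.{u}) :=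
  Or.inl ⟨0, by simp, by simp⟩

lemma not_emptyTurn_limit {β : Ordinal.{u}} (hβ : Order.IsSuccLimit β) : ¬ emptyTurn β := by
  intro h
  have h2 := (emptyTurn_limadd hβ 0).1 (by simpa using h)
  simp [Nat.odd_iff] at h2

lemma emptyTurn_succ {α : Ordinal.{u}} : emptyTurn (α + 1) ↔ ¬ emptyTurn α := by
  rcases decomp α with ⟨n, rfl⟩ | ⟨β, n, hβ, rfl⟩
  · rw [show (n : Ordinal.{u}) + 1 = ((n+1 : ℕ) : Ordinal.{u}) by push_cast; ring,
      emptyTurn_nat, emptyTurn_nat, Nat.even_add_one]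
  · rw [show β + (n : Ordinal.{u}) + 1 = β + ((n+1 : ℕ) : Ordinal.{u}) by
        push_cast; rw [add_assoc],
      emptyTurn_limadd hβ, emptyTurn_limadd hβ, Nat.odd_add_one, Nat.not_odd_iff_even]

lemma emptyTurn_succ_of' {α : Ordinal.{u}} (h : emptyTurn α) (h0 : α ≠ 0) :
    ∃ β, α = β + 1 ∧ ¬ emptyTurn β := by
  rcases Ordinal.zero_or_succ_or_isSuccLimit α with rfl | ⟨β, hβ⟩ | hlim
  · exact absurd rfl h0
  · rw [Order.succ_eq_add_one, eq_comm] at hβ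
    exact ⟨β, hβ, by rw [hβ] at h; exact emptyTurn_succ.1 h⟩
  · exact absurd h (not_emptyTurn_limit hlim)

lemma nonemptyTurn_cases {α : Ordinal.{u}} (h : ¬ emptyTurn α) :
    Order.IsSuccLimit α ∨ ∃ β, α = β + 1 ∧ emptyTurn β := by
  rcases Ordinal.zero_or_succ_or_isSuccLimit α with rfl | ⟨β, hβ⟩ | hlim
  · exact absurd emptyTurn_zero h
  · rw [Order.succ_eq_add_one, eq_comm] at hβ
    refine Or.inr ⟨β, hβ, ?_⟩
    by_contra hβe
    exact h (hβ ▸ emptyTurn_succ.2 hβe)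
  · exact Or.inl hlim

def restr {K : Type u} (p : Ordinal.{u} → Set K) (α : Ordinal.{u}) :
    Ordinal.{u} → Set K := fun β => if β < α then p β else ∅

lemma restr_lt {K : Type u} {p : Ordinal.{u} → Set K} {α β : Ordinal.{u}} (h : β < α) :
    restr p α β = p β := if_pos h

noncomputable def obuild {K : Type u} (F : Ordinal.{u} → (Ordinal.{u} → Set K) → Set K) :
    Ordinal.{u} → Set K :=
  lt_wf.fix (fun α ih => F α (fun β => if h : β < α then ih β h else ∅))

lemma obuild_eq {K : Type u} (F : Ordinal.{u} → (Ordinal.{u} → Set K) → Set K)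
    (α : Ordinal.{u}) :
    obuild F α = F α (restr (obuild F) α) := by
  rw [obuild, lt_wf.fix_eq]
  congr 1

-- Zorn 1: maximal a.d. subfamily
lemma zorn_ad {K : Type u} (I : Set (Set K)) (D : Set (Set K)) :
    ∃ W : Set (Set K), W ⊆ D ∧ (∀ A ∈ W, ∀ B ∈ W, A ≠ B → A ∩ B ∈ I) ∧
      ∀ B ∈ D, B ∉ W → ∃ w ∈ W, B ∩ w ∉ I := by
  have hchain : ∀ c ⊆ {W : Set (Set K) | W ⊆ D ∧ ∀ A ∈ W, ∀ B ∈ W, A ≠ B → A ∩ B ∈ I},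
      IsChain (· ⊆ ·) c → ∃ ub ∈ {W : Set (Set K) | W ⊆ D ∧
        ∀ A ∈ W, ∀ B ∈ W, A ≠ B → A ∩ B ∈ I}, ∀ s ∈ c, s ⊆ ub := by
    intro c hcs hc
    refine ⟨⋃₀ c, ⟨?_, ?_⟩, fun s hs => subset_sUnion_of_mem hs⟩
    · exact sUnion_subset fun t ht => (hcs ht).1
    · rintro A ⟨tA, htA, hAtA⟩ B ⟨tB, htB, hBtB⟩ hne
      rcases hc.total htA htB with hsub | hsub
      · exact (hcs htB).2 A (hsub hAtA) B hBtB hne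
      · exact (hcs htA).2 A hAtA B (hsub hBtB) hne
  obtain ⟨W, hW⟩ := zorn_subset
    {W : Set (Set K) | W ⊆ D ∧ ∀ A ∈ W, ∀ B ∈ W, A ≠ B → A ∩ B ∈ I} hchain
  refine ⟨W, hW.prop.1, hW.prop.2, ?_⟩
  intro B hBD hBW
  by_contra hno
  push_neg at hno
  have hmem : insert B W ∈ {W : Set (Set K) | W ⊆ D ∧
      ∀ A ∈ W, ∀ B ∈ W, A ≠ B → A ∩ B ∈ I} := by
    constructor
    · exact insert_subset hBD hW.prop.1
    · rintro A (rfl | hA) C (rfl | hC) hne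
      · exact absurd rfl hne
      · exact hno C hC
      · rw [inter_comm]; exact hno A hA
      · exact hW.prop.2 A hA C hC hne
  have := hW.eq_of_subset hmem (subset_insert _ _)
  exact hBW (this ▸ mem_insert _ _)

-- Zorn 2: extension to IPartition-like maximal family
lemma zorn_part {K : Type u} (I : Set (Set K)) (hmono : ∀ A ∈ I, ∀ B, B ⊆ A → B ∈ I)
    (X : Set K) (S : Set (Set K)) (hS : ∀ A ∈ S, A ⊆ X ∧ A ∉ I)
    (hSad : ∀ A ∈ S, ∀ B ∈ S, A ≠ B → A ∩ B ∈ I) :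
    ∃ W : Set (Set K), S ⊆ W ∧ (∀ A ∈ W, A ⊆ X ∧ A ∉ I) ∧
      (∀ A ∈ W, ∀ B ∈ W, A ≠ B → A ∩ B ∈ I) ∧
      ∀ Z : Set K, Z ⊆ X → Z ∉ I → ∃ w ∈ W, Z ∩ w ∉ I := by
  have hchain : ∀ c ⊆ {W : Set (Set K) | S ⊆ W ∧ (∀ A ∈ W, A ⊆ X ∧ A ∉ I) ∧
      ∀ A ∈ W, ∀ B ∈ W, A ≠ B → A ∩ B ∈ I}, IsChain (· ⊆ ·) c →
      ∃ ub ∈ {W : Set (Set K) | S ⊆ W ∧ (∀ A ∈ W, A ⊆ X ∧ A ∉ I) ∧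
        ∀ A ∈ W, ∀ B ∈ W, A ≠ B → A ∩ B ∈ I}, ∀ s ∈ c, s ⊆ ub := by
    intro c hcs hc
    rcases c.eq_empty_or_nonempty with rfl | ⟨t0, ht0⟩
    · exact ⟨S, ⟨subset_rfl, hS, hSad⟩, by simp⟩
    · refine ⟨⋃₀ c, ⟨(hcs ht0).1.trans (subset_sUnion_of_mem ht0), ?_, ?_⟩,
        fun s hs => subset_sUnion_of_mem hs⟩
      · rintro A ⟨tA, htA, hAtA⟩; exact (hcs htA).2.1 A hAtA
      · rintro A ⟨tA, htA, hAtA⟩ B ⟨tB, htB, hBtB⟩ hne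
        rcases hc.total htA htB with hsub | hsub
        · exact (hcs htB).2.2 A (hsub hAtA) B hBtB hne
        · exact (hcs htA).2.2 A hAtA B (hsub hBtB) hne
  obtain ⟨W, hW⟩ := zorn_subset
    {W : Set (Set K) | S ⊆ W ∧ (∀ A ∈ W, A ⊆ X ∧ A ∉ I) ∧
      ∀ A ∈ W, ∀ B ∈ W, A ≠ B → A ∩ B ∈ I} hchain
  refine ⟨W, hW.prop.1, hW.prop.2.1, hW.prop.2.2, ?_⟩
  intro Z hZX hZI
  by_contra hno
  push_neg at hno
  have hZW : Z ∉ W := fun hZw => (hmono _ (hno Z hZw) Z (by simp)) |> hZI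
  have hmem : insert Z W ∈ {W : Set (Set K) | S ⊆ W ∧ (∀ A ∈ W, A ⊆ X ∧ A ∉ I) ∧
      ∀ A ∈ W, ∀ B ∈ W, A ≠ B → A ∩ B ∈ I} := by
    refine ⟨hW.prop.1.trans (subset_insert _ _), ?_, ?_⟩
    · rintro A (rfl | hA)
      · exact ⟨hZX, hZI⟩
      · exact hW.prop.2.1 A hA
    · rintro A (rfl | hA) C (rfl | hC) hne
      · exact absurd rfl hne
      · exact hno C hC
      · rw [inter_comm]; exact hno A hA
      · exact hW.prop.2.2 A hA C hC hne
  have := hW.eq_of_subset hmem (subset_insert _ _)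
  exact hZW (this ▸ mem_insert _ _)

section Backward

variable {K : Type u} (I : Set (Set K)) (X : Set K)
  (σC : (Ordinal.{u} → Set K) → Ordinal.{u} → Set (Set K))

lemma pred_lt_of_emptyTurn {α : Ordinal.{u}} (hE : emptyTurn α) (h0 : α ≠ 0) :
    α.pred < α ∧ α = α.pred + 1 ∧ ¬ emptyTurn α.pred := by
  obtain ⟨c, hc, hcE⟩ := emptyTurn_succ_of' hE h0
  have hp : α.pred = c := by rw [hc, Ordinal.add_one_eq_succ, Ordinal.pred_succ]
  refine ⟨?_, by rw [hp, ← hc], by rw [hp]; exact hcE⟩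
  rw [hp, hc, Ordinal.add_one_eq_succ]
  exact Order.lt_succ c

/-- The target set with which the next partition element should be compatible. -/
def gtar (s : Ordinal.{u} → Set K) (α : Ordinal.{u}) (G : Ordinal.{u} → Set K) : Set K :=
  if emptyTurn α then (if α = 0 then X else s α.pred ∩ G α.pred) else s α

/-- Choose a member of the partition `P` compatible with `t` if possible. -/
noncomputable def gcore (P : Set (Set K)) (t : Set K) : Set K :=
  if h : ∃ w, w ∈ P ∧ t ∩ w ∉ I then h.choose
  else if h2 : P.Nonempty then h2.choose else ∅

noncomputable def gfun (s : Ordinal.{u} → Set K) : Ordinal.{u} → Set K :=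
  obuild (fun α G => gcore I (σC G α) (gtar X s α G))

lemma gfun_eq (s : Ordinal.{u} → Set K) (α : Ordinal.{u}) :
    gfun I X σC s α = gcore I (σC (restr (gfun I X σC s) α) α)
      (gtar X s α (restr (gfun I X σC s) α)) :=
  obuild_eq _ _

variable {I X σC}

section lems

variable (coh : ∀ h h' : Ordinal.{u} → Set K, ∀ α : Ordinal.{u},
      (∀ β < α, h β = h' β) → σC h α = σC h' α)
  {γ : Ordinal.{u}}
  (part : ∀ h : Ordinal.{u} → Set K, ∀ α < γ, IPartition I X (σC h α))
  (hX : X ∉ I)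

include coh part hX

lemma gfun_mem {s : Ordinal.{u} → Set K} {α : Ordinal.{u}} (hα : α < γ) :
    gfun I X σC s α ∈ σC (gfun I X σC s) α := by
  have hPeq : σC (restr (gfun I X σC s) α) α = σC (gfun I X σC s) α :=
    coh _ _ α (fun β hβ => restr_lt hβ)
  rw [← hPeq]
  by_cases hex : ∃ w, w ∈ σC (restr (gfun I X σC s) α) α ∧
      gtar X s α (restr (gfun I X σC s) α) ∩ w ∉ I
  · have hval : gfun I X σC s α = hex.choose := by rw [gfun_eq, gcore, dif_pos hex]
    rw [hval]; exact hex.choose_spec.1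
  · have h2 : (σC (restr (gfun I X σC s) α) α).Nonempty := by
      obtain ⟨w, hw, -⟩ := (part _ α hα).2.2 X subset_rfl hX
      exact ⟨w, hw⟩
    have hval : gfun I X σC s α = h2.choose := by
      rw [gfun_eq, gcore, dif_neg hex, dif_pos h2]
    rw [hval]; exact h2.choose_spec

lemma gfun_compat {s : Ordinal.{u} → Set K} {α : Ordinal.{u}} (hα : α < γ) {T : Set K}
    (hT : T = if emptyTurn α then (if α = 0 then X else s α.pred ∩ gfun I X σC s α.pred)
      else s α)
    (hTX : T ⊆ X) (hTI : T ∉ I) : T ∩ gfun I X σC s α ∉ I := by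
  have htfz : gtar X s α (restr (gfun I X σC s) α) = T := by
    rw [hT, gtar]
    by_cases hE : emptyTurn α
    · by_cases h0 : α = 0
      · simp [hE, h0]
      · obtain ⟨hpredlt, -, -⟩ := pred_lt_of_emptyTurn hE h0
        simp [hE, h0, restr_lt hpredlt]
    · simp [hE]
  have hex : ∃ w, w ∈ σC (restr (gfun I X σC s) α) α ∧
      gtar X s α (restr (gfun I X σC s) α) ∩ w ∉ I := by
    rw [htfz]
    obtain ⟨w, hw, hwc⟩ := (part _ α hα).2.2 T hTX hTI
    exact ⟨w, hw, hwc⟩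
  have hval : gfun I X σC s α = hex.choose := by rw [gfun_eq, gcore, dif_pos hex]
  rw [hval, ← htfz]
  exact hex.choose_spec.2

end lems

lemma gfun_congr {s s' : Ordinal.{u} → Set K} {α : Ordinal.{u}} (h : ∀ β < α, s β = s' β) :
    ∀ β, (β < α ∨ (β ≤ α ∧ emptyTurn β)) → gfun I X σC s β = gfun I X σC s' β := by
  intro β
  induction β using Ordinal.induction with
  | h β IH =>
  intro hcase
  have hβα : β ≤ α := hcase.elim le_of_lt And.left
  have hfze : restr (gfun I X σC s) β = restr (gfun I X σC s') β := by
    funext β'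
    by_cases hβ' : β' < β
    · rw [restr_lt hβ', restr_lt hβ']
      exact IH β' hβ' (Or.inl (lt_of_lt_of_le hβ' hβα))
    · simp [restr, hβ']
  have htar : gtar X s β (restr (gfun I X σC s) β)
      = gtar X s' β (restr (gfun I X σC s') β) := by
    rw [gtar, gtar]
    by_cases hE : emptyTurn β
    · rw [if_pos hE, if_pos hE]
      by_cases h0 : β = 0
      · rw [if_pos h0, if_pos h0]
      · obtain ⟨hpredlt, -, -⟩ := pred_lt_of_emptyTurn hE h0
        rw [if_neg h0, if_neg h0, restr_lt hpredlt, restr_lt hpredlt,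
          h β.pred (lt_of_lt_of_le hpredlt hβα),
          IH β.pred hpredlt (Or.inl (lt_of_lt_of_le hpredlt hβα))]
    · have hβlt : β < α := hcase.elim id (fun hc => absurd hc.2 hE)
      rw [if_neg hE, if_neg hE, h β hβlt]
  rw [gfun_eq, gfun_eq, htar, hfze]

def sigmaE (I : Set (Set K)) (X : Set K)
    (σC : (Ordinal.{u} → Set K) → Ordinal.{u} → Set (Set K)) :
    (Ordinal.{u} → Set K) → Ordinal.{u} → Set K := fun s α =>
  if emptyTurn α then
    (if α = 0 then X ∩ gfun I X σC s 0
     else s α.pred ∩ gfun I X σC s α.pred ∩ gfun I X σC s α)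
  else ∅

lemma sigmaE_coh (s s' : Ordinal.{u} → Set K) (α : Ordinal.{u})
    (h : ∀ β < α, s β = s' β) : sigmaE I X σC s α = sigmaE I X σC s' α := by
  simp only [sigmaE]
  by_cases hE : emptyTurn α
  · rw [if_pos hE, if_pos hE]
    by_cases h0 : α = 0
    · subst h0
      rw [if_pos rfl, if_pos rfl, gfun_congr h 0 (Or.inr ⟨le_rfl, emptyTurn_zero⟩)]
    · obtain ⟨hpredlt, -, -⟩ := pred_lt_of_emptyTurn hE h0
      rw [if_neg h0, if_neg h0, h α.pred hpredlt,
        gfun_congr h α.pred (Or.inl hpredlt), gfun_congr h α (Or.inr ⟨le_rfl, hE⟩)]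
  · rw [if_neg hE, if_neg hE]

end Backward



lemma backward_main {K : Type u} {I : Set (Set K)} {X : Set K}
    {σC : (Ordinal.{u} → Set K) → Ordinal.{u} → Set (Set K)} {γ : Ordinal.{u}}
    (hmono : ∀ A ∈ I, ∀ B, B ⊆ A → B ∈ I) (hX : X ∉ I) (hγ : Order.IsSuccLimit γ)
    (coh : ∀ h h' : Ordinal.{u} → Set K, ∀ α : Ordinal.{u},
      (∀ β < α, h β = h' β) → σC h α = σC h' α)
    (part : ∀ h : Ordinal.{u} → Set K, ∀ α < γ, IPartition I X (σC h α))
    (win : ∀ h : Ordinal.{u} → Set K, (∀ α < γ, h α ∈ σC h α) →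
      ¬ ((∀ δ < γ, (⋂ β ∈ Set.Iio δ, h β) ∉ I) ∧ (⋂ β ∈ Set.Iio γ, h β).Nonempty)) :
    EmptyWinsBM I γ := by
  refine ⟨sigmaE I X σC, sigmaE_coh, ?_⟩
  intro s hcompE _hcompN
  have hs0 : s 0 = X ∩ gfun I X σC s 0 := by
    rw [hcompE 0 hγ.pos emptyTurn_zero]
    simp [sigmaE, emptyTurn_zero]
  constructor
  · -- Empty's moves are legal at valid positions
    intro α hαγ hE hval
    rw [hcompE α hαγ hE]
    by_cases h0 : α = 0
    · subst h0
      simp only [sigmaE, if_pos emptyTurn_zero, if_pos rfl]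
      exact ⟨gfun_compat coh part hX hγ.pos (by simp [emptyTurn_zero]) subset_rfl hX,
        fun β hβ => absurd hβ (not_lt_zero)⟩
    · obtain ⟨hpredlt, hsucc, hpredN⟩ := pred_lt_of_emptyTurn hE h0
      have hβγ : α.pred < γ := hpredlt.trans hαγ
      have hsβ := hval α.pred hpredlt
      have hβ0 : α.pred ≠ 0 := fun hh => (hh ▸ hpredN) emptyTurn_zero
      have h0β : 0 < α.pred := pos_iff_ne_zero.2 hβ0
      have hsβX : s α.pred ⊆ X := by
        intro y hy
        have := hsβ.2 0 h0β hy
        rw [hs0] at this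
        exact this.1
      have h1 : s α.pred ∩ gfun I X σC s α.pred ∉ I :=
        gfun_compat coh part hX hβγ (if_neg hpredN).symm hsβX hsβ.1
      have h2 : (s α.pred ∩ gfun I X σC s α.pred) ∩ gfun I X σC s α ∉ I :=
        gfun_compat coh part hX hαγ (by rw [if_pos hE, if_neg h0])
          (inter_subset_left.trans hsβX) h1
      simp only [sigmaE, if_pos hE, if_neg h0]
      refine ⟨h2, ?_⟩
      intro β' hβ'
      have hβ'β : β' ≤ α.pred := by
        rw [hsucc, Ordinal.add_one_eq_succ, Order.lt_succ_iff] at hβ'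
        exact hβ'
      rcases eq_or_lt_of_le hβ'β with rfl | hlt
      · intro y hy; exact hy.1.1
      · intro y hy; exact hsβ.2 β' hlt hy.1.1
  · -- no fully valid run with nonempty intersection
    rintro ⟨hval, x, hx⟩
    have hx' : ∀ β < γ, x ∈ s β := fun β hβ => Set.mem_iInter₂.1 hx β hβ
    have key : ∀ β < γ, ∃ ν, ν < γ ∧ ν ≤ β + 1 ∧ s ν ⊆ gfun I X σC s β := by
      intro β hβ
      by_cases hE : emptyTurn β
      · refine ⟨β, hβ, ?_, ?_⟩
        · rw [Ordinal.add_one_eq_succ]; exact (Order.lt_succ β).le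
        · rw [hcompE β hβ hE]
          by_cases h0 : β = 0
          · subst h0
            simp only [sigmaE, if_pos hE, if_pos rfl]
            exact inter_subset_right
          · simp only [sigmaE, if_pos hE, if_neg h0]
            exact inter_subset_right
      · have hβ1γ : β + 1 < γ := by
          rw [Ordinal.add_one_eq_succ]; exact hγ.succ_lt hβ
        have hE1 : emptyTurn (β + 1) := emptyTurn_succ.2 hE
        have h10 : β + 1 ≠ 0 := by
          rw [Ordinal.add_one_eq_succ]; exact (Order.succ_ne_bot β)
        have hpred : (β + 1).pred = β := by
          rw [Ordinal.add_one_eq_succ, Ordinal.pred_succ]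
        refine ⟨β + 1, hβ1γ, le_rfl, ?_⟩
        rw [hcompE _ hβ1γ hE1]
        simp only [sigmaE, if_pos hE1, if_neg h10, hpred]
        exact inter_subset_left.trans inter_subset_right
    refine win (gfun I X σC s) (fun α hα => gfun_mem coh part hX hα) ⟨?_, ?_⟩
    · intro δ hδ
      have hμγ : δ + 1 < γ := by
        rw [Ordinal.add_one_eq_succ]; exact hγ.succ_lt hδ
      intro hIn
      apply (hval (δ + 1) hμγ).1
      apply hmono _ hIn
      intro y hy
      apply Set.mem_iInter₂.2
      intro β hβmem
      obtain ⟨ν, hνγ, hνle, hsub⟩ := key β (lt_trans hβmem hδ)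
      apply hsub
      have hνlt : ν < δ + 1 := by
        apply lt_of_le_of_lt hνle
        rw [Ordinal.add_one_eq_succ, Ordinal.add_one_eq_succ, Order.succ_lt_succ_iff]
        exact hβmem
      exact (hval (δ + 1) hμγ).2 ν hνlt hy
    · refine ⟨x, Set.mem_iInter₂.2 ?_⟩
      intro β hβ
      obtain ⟨ν, hνγ, -, hsub⟩ := key β hβ
      exact hsub (hx' ν hνγ)
section Forward

variable {K : Type u} (I : Set (Set K))
  (σ : (Ordinal.{u} → Set K) → Ordinal.{u} → Set K) (X : Set K)

/-- Empty's response when Nonempty plays `A` at stage `β` of position `p`. -/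
def Resp (p : Ordinal.{u} → Set K) (β : Ordinal.{u}) (A : Set K) : Set K :=
  σ (fun β' => if β' = β then A else p β') (β + 1)

/-- `w` is a tagged response at stage `β` of position `p`. -/
def exTag (p : Ordinal.{u} → Set K) (β : Ordinal.{u}) (w : Set K) : Prop :=
  ∃ A : Set K, A ⊆ (⋂ β' ∈ Set.Iio β, p β') ∧ A ∉ I ∧ w = Resp σ p β A ∧
    w ⊆ A ∧ w ∉ I ∧ w ⊆ X

def Dset (p : Ordinal.{u} → Set K) (β : Ordinal.{u}) : Set (Set K) :=
  {B | exTag I σ X p β B}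

noncomputable def tagOf (p : Ordinal.{u} → Set K) (β : Ordinal.{u}) (w : Set K) : Set K :=
  if hw : exTag I σ X p β w then hw.choose else ∅

lemma tagOf_spec {p : Ordinal.{u} → Set K} {β : Ordinal.{u}} {w : Set K}
    (hw : exTag I σ X p β w) :
    tagOf I σ X p β w ⊆ (⋂ β' ∈ Set.Iio β, p β') ∧ tagOf I σ X p β w ∉ I ∧
      w = Resp σ p β (tagOf I σ X p β w) ∧ w ⊆ tagOf I σ X p β w ∧ w ∉ I ∧ w ⊆ X := by
  rw [tagOf, dif_pos hw]
  exact hw.choose_spec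

/-- A maximal almost disjoint subfamily of the responses. -/
noncomputable def W0set (p : Ordinal.{u} → Set K) (β : Ordinal.{u}) : Set (Set K) :=
  (zorn_ad I (Dset I σ X p β)).choose

lemma W0set_sub (p : Ordinal.{u} → Set K) (β : Ordinal.{u}) :
    W0set I σ X p β ⊆ Dset I σ X p β :=
  (zorn_ad I (Dset I σ X p β)).choose_spec.1

lemma W0set_max (p : Ordinal.{u} → Set K) (β : Ordinal.{u}) :
    ∀ B ∈ Dset I σ X p β, B ∉ W0set I σ X p β → ∃ w ∈ W0set I σ X p β, B ∩ w ∉ I :=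
  (zorn_ad I (Dset I σ X p β)).choose_spec.2.2

lemma Dset_good (p : Ordinal.{u} → Set K) (β : Ordinal.{u}) :
    ∀ A ∈ Dset I σ X p β, A ⊆ X ∧ A ∉ I := by
  rintro A ⟨B, -, -, -, -, hAI, hAX⟩
  exact ⟨hAX, hAI⟩

variable (hmono : ∀ A ∈ I, ∀ B, B ⊆ A → B ∈ I)

/-- Extend the maximal a.d. family of responses to an `I`-partition of `X`. -/
noncomputable def Wfam (p : Ordinal.{u} → Set K) (β : Ordinal.{u}) : Set (Set K) :=
  (zorn_part I hmono X (W0set I σ X p β)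
    (fun A hA => Dset_good I σ X p β A (W0set_sub I σ X p β hA))
    ((zorn_ad I (Dset I σ X p β)).choose_spec.2.1)).choose

lemma Wfam_spec (p : Ordinal.{u} → Set K) (β : Ordinal.{u}) :
    W0set I σ X p β ⊆ Wfam I σ X hmono p β ∧ IPartition I X (Wfam I σ X hmono p β) := by
  have h := (zorn_part I hmono X (W0set I σ X p β)
    (fun A hA => Dset_good I σ X p β A (W0set_sub I σ X p β hA))
    ((zorn_ad I (Dset I σ X p β)).choose_spec.2.1)).choose_spec
  exact ⟨h.1, h.2.1, h.2.2.1, h.2.2.2⟩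

/-- The simulated Banach–Mazur run determined by Choose's picks `h`. -/
noncomputable def Srun (h : Ordinal.{u} → Set K) : Ordinal.{u} → Set K :=
  obuild (fun β G => if emptyTurn β then σ G β
    else (if h β ∈ W0set I σ X G β then tagOf I σ X G β (h β) else ∅))

lemma Srun_eq (h : Ordinal.{u} → Set K) (β : Ordinal.{u}) :
    Srun I σ X h β = if emptyTurn β then σ (restr (Srun I σ X h) β) β
      else (if h β ∈ W0set I σ X (restr (Srun I σ X h) β) β
        then tagOf I σ X (restr (Srun I σ X h) β) β (h β) else ∅) :=
  obuild_eq _ _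

lemma Srun_congr (h h' : Ordinal.{u} → Set K) (δ : Ordinal.{u})
    (hh : ∀ β < δ, h β = h' β) : ∀ β < δ, Srun I σ X h β = Srun I σ X h' β := by
  intro β
  induction β using Ordinal.induction with
  | h β IH =>
  intro hβδ
  have hre : restr (Srun I σ X h) β = restr (Srun I σ X h') β := by
    funext β'
    by_cases hβ' : β' < β
    · rw [restr_lt hβ', restr_lt hβ']
      exact IH β' hβ' (hβ'.trans hβδ)
    · simp [restr, hβ']
  rw [Srun_eq, Srun_eq, hre, hh β hβδ]

/-- Cut's strategy extracted from Empty's strategy `σ`. -/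
noncomputable def sigmaCut : (Ordinal.{u} → Set K) → Ordinal.{u} → Set (Set K) :=
  fun h β => if emptyTurn β then {X}
    else Wfam I σ X hmono (restr (Srun I σ X h) β) β

lemma sigmaCut_coh (h h' : Ordinal.{u} → Set K) (β : Ordinal.{u})
    (hh : ∀ β' < β, h β' = h' β') : sigmaCut I σ X hmono h β = sigmaCut I σ X hmono h' β := by
  have hre : restr (Srun I σ X h) β = restr (Srun I σ X h') β := by
    funext β'
    by_cases hβ' : β' < β
    · rw [restr_lt hβ', restr_lt hβ']
      exact Srun_congr I σ X h h' β hh β' hβ'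
    · simp [restr, hβ']
  rw [sigmaCut, sigmaCut, hre]

lemma sigmaCut_part (hX : X ∉ I) (h : Ordinal.{u} → Set K) (β : Ordinal.{u}) :
    IPartition I X (sigmaCut I σ X hmono h β) := by
  rw [sigmaCut]
  by_cases hE : emptyTurn β
  · rw [if_pos hE]
    refine ⟨?_, ?_, ?_⟩
    · rintro A rfl
      exact ⟨subset_rfl, hX⟩
    · rintro A rfl B rfl hne
      exact absurd rfl hne
    · intro Z hZX hZI
      refine ⟨X, rfl, ?_⟩
      rwa [Set.inter_eq_self_of_subset_left hZX]
  · rw [if_neg hE]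
    exact (Wfam_spec I σ X hmono _ β).2

end Forward
section Completion

variable {K : Type u} {I : Set (Set K)}
  {σ : (Ordinal.{u} → Set K) → Ordinal.{u} → Set K} {γ : Ordinal.{u}}

lemma succ_of_nonempty {β : Ordinal.{u}} (hN : ¬ emptyTurn β) (hL : ¬ Order.IsSuccLimit β) :
    β.pred < β ∧ β = β.pred + 1 ∧ emptyTurn β.pred := by
  rcases nonemptyTurn_cases hN with hlim | ⟨c, hc, hcE⟩
  · exact absurd hlim hL
  · have hp : β.pred = c := by rw [hc, Ordinal.add_one_eq_succ, Ordinal.pred_succ]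
    refine ⟨?_, by rw [hp, ← hc], by rw [hp]; exact hcE⟩
    rw [hp, hc, Ordinal.add_one_eq_succ]
    exact Order.lt_succ c

/-- Canonical completion of the position `p` (of length `α`) where Nonempty plays as
conservatively as possible. -/
noncomputable def comp (σ : (Ordinal.{u} → Set K) → Ordinal.{u} → Set K)
    (p : Ordinal.{u} → Set K) (α : Ordinal.{u}) : Ordinal.{u} → Set K :=
  obuild (fun β G => if β < α then p β else if emptyTurn β then σ G β
    else (if Order.IsSuccLimit β then ⋂ β' ∈ Set.Iio β, G β' else G β.pred))

lemma comp_lt {p : Ordinal.{u} → Set K} {α β : Ordinal.{u}} (h : β < α) :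
    comp σ p α β = p β := by
  rw [comp, obuild_eq, if_pos h]

lemma comp_empty (coh : ∀ s s' : Ordinal.{u} → Set K, ∀ α : Ordinal.{u},
      (∀ β < α, s β = s' β) → σ s α = σ s' α)
    {p : Ordinal.{u} → Set K} {α β : Ordinal.{u}} (h : ¬ β < α) (hE : emptyTurn β) :
    comp σ p α β = σ (comp σ p α) β := by
  conv_lhs => rw [comp, obuild_eq]
  rw [if_neg h, if_pos hE]
  exact coh _ _ β (fun β' hβ' => by rw [restr_lt hβ']; rfl)

lemma comp_limit {p : Ordinal.{u} → Set K} {α β : Ordinal.{u}} (h : ¬ β < α)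
    (hN : ¬ emptyTurn β) (hL : Order.IsSuccLimit β) :
    comp σ p α β = ⋂ β' ∈ Set.Iio β, comp σ p α β' := by
  conv_lhs => rw [comp, obuild_eq]
  rw [if_neg h, if_neg hN, if_pos hL]
  exact Set.iInter₂_congr (fun β' hβ' => by rw [restr_lt hβ']; rfl)

lemma comp_succ {p : Ordinal.{u} → Set K} {α β : Ordinal.{u}} (h : ¬ β < α)
    (hN : ¬ emptyTurn β) (hL : ¬ Order.IsSuccLimit β) :
    comp σ p α β = comp σ p α β.pred := by
  conv_lhs => rw [comp, obuild_eq]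
  rw [if_neg h, if_neg hN, if_neg hL, restr_lt (succ_of_nonempty hN hL).1]
  rfl

/-- The key extraction lemma: a formally winning strategy for Empty plays legally at
every valid position reached by complying with it. -/
lemma empty_legal
    (coh : ∀ s s' : Ordinal.{u} → Set K, ∀ α : Ordinal.{u},
      (∀ β < α, s β = s' β) → σ s α = σ s' α)
    (hwin : ∀ s : Ordinal.{u} → Set K,
      (∀ α < γ, emptyTurn α → s α = σ s α) →
      (∀ α < γ, ¬ emptyTurn α → BMValid I s α → BMLegal I s α (s α)) →
      (∀ α < γ, emptyTurn α → BMValid I s α → BMLegal I s α (s α)) ∧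
      ¬ (BMValid I s γ ∧ (⋂ α ∈ Set.Iio γ, s α).Nonempty))
    {p : Ordinal.{u} → Set K} {α : Ordinal.{u}} (hαγ : α < γ) (hE : emptyTurn α)
    (hval : BMValid I p α) (hcomp : ∀ β < α, emptyTurn β → p β = σ p β) :
    BMLegal I p α (σ p α) := by
  set c := comp σ p α with hc
  have hagree : ∀ β < α, c β = p β := fun β hβ => comp_lt hβ
  have hσeq : σ c α = σ p α := coh _ _ α hagree
  have hcα : c α = σ c α := comp_empty coh (lt_irrefl α) hE
  -- it suffices to show that c's move at α is legal
  have hsuff : BMLegal I c α (c α) → BMLegal I p α (σ p α) := by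
    rintro ⟨h1, h2⟩
    rw [hcα, hσeq] at h1
    refine ⟨h1, fun β hβ => ?_⟩
    rw [← hagree β hβ]
    intro y hy
    exact h2 β hβ (by rwa [hcα, hσeq])
  apply hsuff
  have hvalc : ∀ δ ≤ α, BMValid I c δ := by
    intro δ hδ β hβ
    have hβα := lt_of_lt_of_le hβ hδ
    rw [hagree β hβα]
    refine ⟨(hval β hβα).1, fun β' hβ' => ?_⟩
    rw [hagree β' (hβ'.trans hβα)]
    exact (hval β hβα).2 β' hβ'
  have hcompE' : ∀ β < γ, emptyTurn β → c β = σ c β := by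
    intro β hβγ hβE
    by_cases hβα : β < α
    · rw [hagree β hβα, hcomp β hβα hβE]
      exact coh _ _ β (fun β' hβ' => (hagree β' (hβ'.trans hβα)).symm)
    · exact comp_empty coh hβα hβE
  by_cases hcN : ∀ β < γ, ¬ emptyTurn β → BMValid I c β → BMLegal I c β (c β)
  · exact (hwin c hcompE' hcN).1 α hαγ hE (hvalc α le_rfl)
  · push_neg at hcN
    obtain ⟨β, hβγ, hβN, hvalβ, hnleg⟩ := hcN
    have hβα : ¬ β < α := by
      intro hlt
      apply hnleg
      rw [hagree β hlt]
      refine ⟨(hval β hlt).1, fun β' hβ' => ?_⟩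
      rw [hagree β' (hβ'.trans hlt)]
      exact (hval β hlt).2 β' hβ'
    by_cases hL : Order.IsSuccLimit β
    · -- validity at the limit β > α yields legality of c's move at α directly
      have hαβ : α < β := by
        rcases lt_or_eq_of_le (not_lt.1 hβα) with hlt | rfl
        · exact hlt
        · exact absurd hE hβN
      exact hvalβ α hαβ
    · -- a successor Nonempty stage is always legal at a valid position: contradiction
      obtain ⟨hplt, hpsucc, hpE⟩ := succ_of_nonempty hβN hL
      exfalso
      have hceq : c β = c β.pred := comp_succ hβα hβN hL
      apply hnleg
      rw [hceq]
      refine ⟨(hvalβ β.pred hplt).1, fun β' hβ' => ?_⟩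
      have hβ'le : β' ≤ β.pred := by
        rw [hpsucc, Ordinal.add_one_eq_succ, Order.lt_succ_iff] at hβ'
        exact hβ'
      rcases eq_or_lt_of_le hβ'le with rfl | hlt
      · exact subset_rfl
      · exact (hvalβ β.pred hplt).2 β' hlt

end Completion

lemma forward_main {K : Type u} {I : Set (Set K)}
    {σ : (Ordinal.{u} → Set K) → Ordinal.{u} → Set K} {γ : Ordinal.{u}}
    (hmono : ∀ A ∈ I, ∀ B, B ⊆ A → B ∈ I) (hγ : Order.IsSuccLimit γ)
    (coh : ∀ s s' : Ordinal.{u} → Set K, ∀ α : Ordinal.{u},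
      (∀ β < α, s β = s' β) → σ s α = σ s' α)
    (hwin : ∀ s : Ordinal.{u} → Set K,
      (∀ α < γ, emptyTurn α → s α = σ s α) →
      (∀ α < γ, ¬ emptyTurn α → BMValid I s α → BMLegal I s α (s α)) →
      (∀ α < γ, emptyTurn α → BMValid I s α → BMLegal I s α (s α)) ∧
      ¬ (BMValid I s γ ∧ (⋂ α ∈ Set.Iio γ, s α).Nonempty)) :
    ∃ X : Set K, X ∉ I ∧ CutWinsLeq I X γ := by
  set X : Set K := σ (fun _ => ∅) 0 with hXdef
  have hX0 : ∀ q : Ordinal.{u} → Set K, σ q 0 = X :=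
    fun q => coh q _ 0 (fun β hβ => absurd hβ (not_lt_zero))
  have hX : X ∉ I := by
    have := empty_legal coh hwin hγ.pos emptyTurn_zero
      (p := fun _ => ∅) (fun β hβ => absurd hβ (not_lt_zero))
      (fun β hβ => absurd hβ (not_lt_zero))
    exact this.1
  refine ⟨X, hX, sigmaCut I σ X hmono, sigmaCut_coh I σ X hmono,
    fun h α _ => sigmaCut_part I σ X hmono hX h α, ?_⟩
  intro h hpick
  rintro ⟨hpos, x, hx⟩
  -- basic facts about the simulated run
  have hsE : ∀ β, emptyTurn β → Srun I σ X h β = σ (Srun I σ X h) β := by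
    intro β hE
    rw [Srun_eq, if_pos hE]
    exact coh _ _ β (fun β' hβ' => restr_lt hβ')
  have hs0 : Srun I σ X h 0 = X := by rw [hsE 0 emptyTurn_zero, hX0]
  have hx' : ∀ β < γ, x ∈ h β := fun β hβ => Set.mem_iInter₂.1 hx β hβ
  have hpickE : ∀ β < γ, emptyTurn β → h β = X := by
    intro β hβ hE
    have := hpick β hβ
    rwa [sigmaCut, if_pos hE] at this
  have hpickN : ∀ β < γ, ¬ emptyTurn β →
      h β ∈ Wfam I σ X hmono (restr (Srun I σ X h) β) β := by
    intro β hβ hN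
    have := hpick β hβ
    rwa [sigmaCut, if_neg hN] at this
  have hgoodTag : ∀ β, ¬ emptyTurn β →
      h β ∈ W0set I σ X (restr (Srun I σ X h) β) β →
      Srun I σ X h β = tagOf I σ X (restr (Srun I σ X h) β) β (h β) ∧
        exTag I σ X (restr (Srun I σ X h) β) β (h β) := by
    intro β hN hmem
    constructor
    · rw [Srun_eq, if_neg hN, if_pos hmem]
    · exact W0set_sub I σ X (restr (Srun I σ X h) β) β hmem
  have hsuccEq : ∀ c, ¬ emptyTurn c →
      h c ∈ W0set I σ X (restr (Srun I σ X h) c) c → Srun I σ X h (c + 1) = h c := by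
    intro c hN hmem
    obtain ⟨hseq, hex⟩ := hgoodTag c hN hmem
    have ts := tagOf_spec I σ X hex
    have h1 : Srun I σ X h (c + 1) = σ (restr (Srun I σ X h) (c + 1)) (c + 1) := by
      rw [Srun_eq, if_pos (emptyTurn_succ.2 hN)]
    have h2 : σ (restr (Srun I σ X h) (c + 1)) (c + 1) =
        σ (fun β' => if β' = c then tagOf I σ X (restr (Srun I σ X h) c) c (h c)
          else restr (Srun I σ X h) c β') (c + 1) := by
      apply coh
      intro β' hβ'
      rw [restr_lt hβ']
      by_cases hc : β' = c
      · subst hc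
        rw [if_pos rfl, ← hseq]
      · have hβ'c : β' < c := by
          rw [Ordinal.add_one_eq_succ, Order.lt_succ_iff] at hβ'
          exact lt_of_le_of_ne hβ' hc
        rw [if_neg hc, restr_lt hβ'c]
    rw [h1, h2]
    exact ts.2.2.1.symm
  -- the master induction
  have R : ∀ β, β < γ →
      (Srun I σ X h β ∉ I ∧ ∀ β' < β, Srun I σ X h β ⊆ Srun I σ X h β') ∧
      (¬ emptyTurn β → h β ∈ W0set I σ X (restr (Srun I σ X h) β) β) := by
    intro β
    induction β using Ordinal.induction with
    | h β IH =>
    intro hβγ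
    have hvalβ : BMValid I (Srun I σ X h) β := fun b hb => (IH b hb (hb.trans hβγ)).1
    by_cases hE : emptyTurn β
    · refine ⟨?_, fun hN => absurd hE hN⟩
      have hleg : BMLegal I (Srun I σ X h) β (σ (Srun I σ X h) β) :=
        empty_legal coh hwin hβγ hE hvalβ (fun b _ hbE => hsE b hbE)
      rw [hsE β hE]
      exact ⟨hleg.1, hleg.2⟩
    · have hβ0 : β ≠ 0 := fun h0 => hE (h0 ▸ emptyTurn_zero)
      have h0β : 0 < β := pos_iff_ne_zero.2 hβ0
      have hβ1γ : β + 1 < γ := by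
        rw [Ordinal.add_one_eq_succ]; exact hγ.succ_lt hβγ
      -- predensity of the maximal a.d. family of responses below the current intersection
      have hdense : ∀ Z : Set K, Z ⊆ (⋂ β' ∈ Set.Iio β, Srun I σ X h β') → Z ∉ I →
          ∃ w ∈ W0set I σ X (restr (Srun I σ X h) β) β, Z ∩ w ∉ I := by
        intro Z hZY hZI
        set ovr : Ordinal.{u} → Set K :=
          fun β' => if β' = β then Z else restr (Srun I σ X h) β β' with hovr
        have hovrlt : ∀ β' < β, ovr β' = Srun I σ X h β' := by
          intro β' hβ'
          simp only [hovr]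
          rw [if_neg (ne_of_lt hβ'), restr_lt hβ']
        have hovrβ : ovr β = Z := by simp [hovr]
        have hvalovr : BMValid I ovr (β + 1) := by
          intro b hb
          have hb' : b ≤ β := by
            rwa [Ordinal.add_one_eq_succ, Order.lt_succ_iff] at hb
          rcases eq_or_lt_of_le hb' with rfl | hlt
          · rw [hovrβ]
            refine ⟨hZI, fun β' hβ' => ?_⟩
            rw [hovrlt β' hβ']
            intro y hy
            exact Set.mem_iInter₂.1 (hZY hy) β' hβ'
          · rw [hovrlt b hlt]
            refine ⟨(hvalβ b hlt).1, fun β' hβ' => ?_⟩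
            rw [hovrlt β' (hβ'.trans hlt)]
            exact (hvalβ b hlt).2 β' hβ'
        have hcompovr : ∀ b < β + 1, emptyTurn b → ovr b = σ ovr b := by
          intro b hb hbE
          have hb' : b ≤ β := by
            rwa [Ordinal.add_one_eq_succ, Order.lt_succ_iff] at hb
          have hbβ : b < β := lt_of_le_of_ne hb' (fun hh => hE (hh ▸ hbE))
          rw [hovrlt b hbβ, hsE b hbE]
          exact coh _ _ b (fun β' hβ' => (hovrlt β' (hβ'.trans hbβ)).symm)
        have hleg := empty_legal coh hwin hβ1γ (emptyTurn_succ.2 hE) hvalovr hcompovr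
        have hBZ : σ ovr (β + 1) ⊆ Z := by
          have := hleg.2 β (by rw [Ordinal.add_one_eq_succ]; exact Order.lt_succ β)
          rwa [hovrβ] at this
        have hBX : σ ovr (β + 1) ⊆ X := by
          have h0lt : (0 : Ordinal.{u}) < β + 1 := h0β.trans
            (by rw [Ordinal.add_one_eq_succ]; exact Order.lt_succ β)
          have := hleg.2 0 h0lt
          rwa [hovrlt 0 h0β, hs0] at this
        have hBD : exTag I σ X (restr (Srun I σ X h) β) β (σ ovr (β + 1)) := by
          refine ⟨Z, ?_, hZI, rfl, hBZ, hleg.1, hBX⟩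
          intro y hy
          apply Set.mem_iInter₂.2
          intro b hb
          rw [restr_lt hb]
          exact Set.mem_iInter₂.1 (hZY hy) b hb
        by_cases hBW : σ ovr (β + 1) ∈ W0set I σ X (restr (Srun I σ X h) β) β
        · refine ⟨_, hBW, fun hZB => ?_⟩
          exact hleg.1 (hmono _ hZB _ (Set.subset_inter hBZ subset_rfl))
        · obtain ⟨w, hw, hww⟩ := W0set_max I σ X (restr (Srun I σ X h) β) β _ hBD hBW
          exact ⟨w, hw, fun hc =>
            hww (hmono _ hc _ (Set.inter_subset_inter_left _ hBZ))⟩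
      -- Choose's pick must lie in the tagged core
      have hgood : h β ∈ W0set I σ X (restr (Srun I σ X h) β) β := by
        by_contra hbad
        have hWmem := hpickN β hβγ hE
        have hYsmall : h β ∩ (⋂ β' ∈ Set.Iio β, Srun I σ X h β') ∈ I := by
          by_contra hYpos
          obtain ⟨w, hw, hww⟩ := hdense _ Set.inter_subset_right hYpos
          have hne : h β ≠ w := fun he => hbad (he ▸ hw)
          have hpair := (Wfam_spec I σ X hmono (restr (Srun I σ X h) β) β).2.2.1
          apply hww
          apply hmono _ (hpair (h β) hWmem w ((Wfam_spec I σ X hmono _ β).1 hw) hne)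
          intro y hy
          exact ⟨hy.1.1, hy.2⟩
        apply hpos (β + 1) hβ1γ
        apply hmono _ hYsmall
        intro y hy
        have hyall : ∀ b < β + 1, y ∈ h b := fun b hb => Set.mem_iInter₂.1 hy b hb
        have hββ1 : β < β + 1 := by rw [Ordinal.add_one_eq_succ]; exact Order.lt_succ β
        refine ⟨hyall β hββ1, Set.mem_iInter₂.2 ?_⟩
        intro b hb
        have hbγ : b < γ := hb.trans hβγ
        have hbβ1 : b < β + 1 := hb.trans hββ1
        by_cases hbE : emptyTurn b
        · by_cases hb0 : b = 0
          · subst hb0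
            rw [hs0, ← hpickE 0 hbγ emptyTurn_zero]
            exact hyall 0 hbβ1
          · obtain ⟨hplt, hpsucc, hpN⟩ := pred_lt_of_emptyTurn hbE hb0
            have hpb : b.pred < β := hplt.trans hb
            have hgoodp := (IH b.pred (hplt.trans hb) (hpb.trans hβγ)).2 hpN
            rw [hpsucc, hsuccEq b.pred hpN hgoodp]
            exact hyall b.pred (hpb.trans hββ1)
        · have hgoodb := (IH b hb hbγ).2 hbE
          obtain ⟨hseq, hex⟩ := hgoodTag b hbE hgoodb
          rw [hseq]
          exact (tagOf_spec I σ X hex).2.2.2.1 (hyall b hbβ1)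
      -- conclude the invariant at β
      obtain ⟨hseq, hex⟩ := hgoodTag β hE hgood
      have ts := tagOf_spec I σ X hex
      refine ⟨⟨?_, ?_⟩, fun _ => hgood⟩
      · rw [hseq]; exact ts.2.1
      · intro β' hβ'
        rw [hseq]
        intro y hy
        have h2 := Set.mem_iInter₂.1 (ts.1 hy) β' hβ'
        rwa [restr_lt hβ'] at h2
  -- assemble: the run complies and is fully valid with nonempty intersection
  have hvalγ : BMValid I (Srun I σ X h) γ := fun β hβ => (R β hβ).1
  apply (hwin (Srun I σ X h) (fun α _ hE => hsE α hE)
    (fun α hα hN _ => (R α hα).1)).2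
  refine ⟨hvalγ, x, Set.mem_iInter₂.2 ?_⟩
  intro β hβ
  by_cases hE : emptyTurn β
  · by_cases h0 : β = 0
    · subst h0
      rw [hs0, ← hpickE 0 hβ emptyTurn_zero]
      exact hx' 0 hβ
    · obtain ⟨hplt, hpsucc, hpN⟩ := pred_lt_of_emptyTurn hE h0
      have hgoodp := (R β.pred (hplt.trans hβ)).2 hpN
      rw [hpsucc, hsuccEq β.pred hpN hgoodp]
      exact hx' β.pred (hplt.trans hβ)
  · have hgood := (R β hβ).2 hE
    obtain ⟨hseq, hex⟩ := hgoodTag β hE hgood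
    rw [hseq]
    exact (tagOf_spec I σ X hex).2.2.2.1 (hx' β hβ)

end Aux

/-- Let `κ` be regular uncountable, `I` an ideal on `κ`, and `γ < κ` a limit ordinal.
Then Empty has a winning strategy in the Banach–Mazur game `ℬ(I,γ)` if and only if Cut
has a winning strategy in the game `𝒢_∞(X, I, ≤γ)` for some `I`-positive `X`. -/
theorem stmt18 {K : Type u} (hreg : (#K).IsRegular) (hunc : ℵ₀ < #K)
    (I : Set (Set K))
    (hmono : ∀ A ∈ I, ∀ B, B ⊆ A → B ∈ I)
    (hunion : ∀ A ∈ I, ∀ B ∈ I, A ∪ B ∈ I)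
    (hempty : (∅ : Set K) ∈ I) (hproper : (Set.univ : Set K) ∉ I)
    (γ : Ordinal.{u}) (hγ : Order.IsSuccLimit γ) (hγκ : γ < (#K).ord) :
    EmptyWinsBM I γ ↔ ∃ X : Set K, X ∉ I ∧ CutWinsLeq I X γ := by
  constructor
  · rintro ⟨σ, coh, hwin⟩
    exact forward_main hmono hγ coh hwin
  · rintro ⟨X, hX, σC, coh, part, win⟩
    exact backward_main hmono hX hγ coh part win
end

section
/- Let κ be regular uncountable, I an ideal on κ, and γ < κ a limit ordinal. Then Nonempty has a winning strategy in the Banach–Mazur game B(I,γ) if and only if Choose has a winning strategy in the game G_∞(X, I, ≤γ) for all X ∈ I⁺. -/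
open Cardinal Set

universe u

namespace BM19
open Ordinal

noncomputable def lpart (β : Ordinal.{u}) : Ordinal.{u} := ω * (β / ω)

noncomputable def npart (β : Ordinal.{u}) : ℕ :=
  Classical.choose (lt_omega0.1 (mod_lt β omega0_ne_zero))

lemma npart_spec (β : Ordinal.{u}) : (npart β : Ordinal.{u}) = β % ω :=
  (Classical.choose_spec (lt_omega0.1 (mod_lt β omega0_ne_zero))).symm

lemma lpart_add_npart (β : Ordinal.{u}) : lpart β + npart β = β := by
  rw [npart_spec]; exact div_add_mod β ω

lemma lpart_zero_or_limit (β : Ordinal.{u}) : lpart β = 0 ∨ Order.IsSuccLimit (lpart β) := by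
  rcases eq_or_ne (β / ω) 0 with h | h
  · left; simp [lpart, h]
  · right
    rw [isSuccLimit_iff_omega0_dvd]
    exact ⟨by simpa [lpart] using _root_.mul_ne_zero omega0_ne_zero h, ⟨_, rfl⟩⟩

lemma mk_decomp {l : Ordinal.{u}} (hl : l = 0 ∨ Order.IsSuccLimit l) (n : ℕ) :
    lpart (l + (n : Ordinal.{u})) = l ∧ npart (l + (n : Ordinal.{u})) = n := by
  have hdvd : ω ∣ l := by
    rcases hl with h | h
    · simp [h]
    · exact (isSuccLimit_iff_omega0_dvd.1 h).2
  obtain ⟨q, rfl⟩ := hdvd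
  have hn : (n : Ordinal.{u}) < ω := nat_lt_omega0 n
  have hdiv : (ω * q + (n : Ordinal.{u})) / ω = q := by
    rw [mul_add_div _ omega0_ne_zero, div_eq_zero_of_lt hn, add_zero]
  have hl' : lpart (ω * q + (n : Ordinal.{u})) = ω * q := by rw [lpart, hdiv]
  refine ⟨hl', ?_⟩
  have := lpart_add_npart (ω * q + (n : Ordinal.{u}))
  rw [hl'] at this
  have : ((npart (ω * q + (n:Ordinal.{u}))) : Ordinal.{u}) = (n : Ordinal.{u}) :=
    (add_right_inj (ω * q)).1 this
  exact_mod_cast this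

lemma limit_add_nat_lt {l l' : Ordinal.{u}} (hl' : Order.IsSuccLimit l') (h : l < l') (n : ℕ) :
    l + (n : Ordinal.{u}) < l' := by
  induction n with
  | zero => simpa using h
  | succ k ih =>
    have : l + ((k+1 : ℕ) : Ordinal.{u}) = (l + (k : ℕ)) + 1 := by push_cast; rw [add_assoc]
    rw [this, Ordinal.add_one_eq_succ]
    exact hl'.succ_lt ih

lemma decomp_lt {l l' : Ordinal.{u}} (hl : l = 0 ∨ Order.IsSuccLimit l) (hl' : l' = 0 ∨ Order.IsSuccLimit l')
    (n n' : ℕ) : l + (n : Ordinal.{u}) < l' + (n' : Ordinal.{u}) ↔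
      (l < l' ∨ (l = l' ∧ n < n')) := by
  constructor
  · intro h
    rcases lt_trichotomy l l' with h1 | h1 | h1
    · exact Or.inl h1
    · right
      refine ⟨h1, ?_⟩
      rw [h1] at h
      exact_mod_cast (add_lt_add_iff_left l').1 h
    · exfalso
      have hlim : Order.IsSuccLimit l := by
        rcases hl with rfl | hh
        · exact absurd h1 (by simp)
        · exact hh
      have : l' + (n' : Ordinal.{u}) < l := limit_add_nat_lt hlim h1 n'
      have h2 : l ≤ l + (n : Ordinal.{u}) := le_self_add
      exact absurd (this.trans_le h2) (asymm h)
  · rintro (h | ⟨rfl, h⟩)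
    · have hlim : Order.IsSuccLimit l' := by
        rcases hl' with rfl | hh
        · exact absurd h (by simp [not_lt_zero])
        · exact hh
      exact (limit_add_nat_lt hlim h n).trans_le (le_self_add)
    · exact (add_lt_add_iff_left l).2 (by exact_mod_cast h)

/-- stage of Empty's move in round `α` (forward bookkeeping). -/
noncomputable def E (α : Ordinal.{u}) : Ordinal.{u} :=
  lpart α + ((if lpart α = 0 then 2 * npart α else 2 * npart α + 1 : ℕ) : Ordinal.{u})

/-- stage of Empty's move giving response `α` (backward bookkeeping). -/
noncomputable def E' (α : Ordinal.{u}) : Ordinal.{u} :=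
  lpart α + ((if lpart α = 0 then 2 * npart α + 2 else 2 * npart α + 1 : ℕ) : Ordinal.{u})

/-- the Nonempty stage just before `E' α`. -/
noncomputable def nu (α : Ordinal.{u}) : Ordinal.{u} :=
  lpart α + ((if lpart α = 0 then 2 * npart α + 1 else 2 * npart α : ℕ) : Ordinal.{u})

noncomputable def decode (σ : Ordinal.{u}) : Ordinal.{u} :=
  lpart σ + ((npart σ / 2 : ℕ) : Ordinal.{u})

noncomputable def invE' (σ : Ordinal.{u}) : Ordinal.{u} :=
  lpart σ + ((if lpart σ = 0 then npart σ / 2 - 1 else npart σ / 2 : ℕ) : Ordinal.{u})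

lemma emptyTurn_iff (β : Ordinal.{u}) :
    emptyTurn β ↔ ((lpart β = 0 ∧ Even (npart β)) ∨ (lpart β ≠ 0 ∧ Odd (npart β))) := by
  constructor
  · rintro (⟨n, rfl, hn⟩ | ⟨l, n, hl, rfl, hn⟩)
    · have h := mk_decomp (l := 0) (Or.inl rfl) n
      rw [zero_add] at h
      left
      rw [h.1, h.2]
      exact ⟨rfl, hn⟩
    · have h := mk_decomp (Or.inr hl) n
      right
      rw [h.1, h.2]
      exact ⟨hl.pos.ne', hn⟩
  · rintro (⟨h0, hn⟩ | ⟨h0, hn⟩)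
    · refine Or.inl ⟨npart β, ?_, hn⟩
      conv_lhs => rw [← lpart_add_npart β, h0]
      rw [zero_add]
    · refine Or.inr ⟨lpart β, npart β, ?_, (lpart_add_npart β).symm, hn⟩
      rcases lpart_zero_or_limit β with h | h
      · exact absurd h h0
      · exact h

lemma emptyTurn_zero : emptyTurn (0 : Ordinal.{u}) := Or.inl ⟨0, by simp, Even.zero⟩

lemma not_emptyTurn_iff (β : Ordinal.{u}) :
    ¬ emptyTurn β ↔ ((lpart β = 0 ∧ Odd (npart β)) ∨ (lpart β ≠ 0 ∧ Even (npart β))) := by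
  rw [emptyTurn_iff]
  rcases eq_or_ne (lpart β) 0 with h | h
  · simp [h, Nat.not_even_iff_odd]
  · simp [h, Nat.not_odd_iff_even]

lemma strictMono_E : StrictMono (E : Ordinal.{u} → Ordinal.{u}) := by
  intro a b hab
  rw [← lpart_add_npart a, ← lpart_add_npart b,
    decomp_lt (lpart_zero_or_limit a) (lpart_zero_or_limit b)] at hab
  unfold E
  rw [decomp_lt (lpart_zero_or_limit a) (lpart_zero_or_limit b)]
  rcases hab with h | ⟨h, hn⟩
  · exact Or.inl h
  · right; refine ⟨h, ?_⟩; rw [h]; split_ifs <;> omega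

lemma strictMono_E' : StrictMono (E' : Ordinal.{u} → Ordinal.{u}) := by
  intro a b hab
  rw [← lpart_add_npart a, ← lpart_add_npart b,
    decomp_lt (lpart_zero_or_limit a) (lpart_zero_or_limit b)] at hab
  unfold E'
  rw [decomp_lt (lpart_zero_or_limit a) (lpart_zero_or_limit b)]
  rcases hab with h | ⟨h, hn⟩
  · exact Or.inl h
  · right; refine ⟨h, ?_⟩; rw [h]; split_ifs <;> omega

lemma self_le_E (α : Ordinal.{u}) : α ≤ E α := by
  conv_lhs => rw [← lpart_add_npart α]
  exact add_le_add_right (by exact_mod_cast (by split_ifs <;> omega : npart α ≤ _)) _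

lemma self_le_E' (α : Ordinal.{u}) : α ≤ E' α := by
  conv_lhs => rw [← lpart_add_npart α]
  exact add_le_add_right (by exact_mod_cast (by split_ifs <;> omega : npart α ≤ _)) _

lemma decode_le_self (σ : Ordinal.{u}) : decode σ ≤ σ := by
  conv_rhs => rw [← lpart_add_npart σ]
  exact add_le_add_right (by exact_mod_cast (by omega : npart σ / 2 ≤ npart σ)) _

lemma invE'_le_self (σ : Ordinal.{u}) : invE' σ ≤ σ := by
  conv_rhs => rw [← lpart_add_npart σ]
  exact add_le_add_right (by exact_mod_cast (by split_ifs <;> omega : _ ≤ npart σ)) _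

lemma lpart_le_self (α : Ordinal.{u}) : lpart α ≤ α := by
  conv_rhs => rw [← lpart_add_npart α]
  exact le_self_add

lemma E_lt_gamma {γ α : Ordinal.{u}} (hγ : Order.IsSuccLimit γ) (h : α < γ) : E α < γ :=
  limit_add_nat_lt hγ ((lpart_le_self α).trans_lt h) _

lemma E'_lt_gamma {γ α : Ordinal.{u}} (hγ : Order.IsSuccLimit γ) (h : α < γ) : E' α < γ :=
  limit_add_nat_lt hγ ((lpart_le_self α).trans_lt h) _

lemma E_eq_zero_case {α : Ordinal.{u}} (h0 : lpart α = 0) :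
    E α = ((2 * npart α : ℕ) : Ordinal.{u}) := by
  rw [E, h0, if_pos rfl, zero_add]

lemma E_eq_pos_case {α : Ordinal.{u}} (h0 : lpart α ≠ 0) :
    E α = lpart α + ((2 * npart α + 1 : ℕ) : Ordinal.{u}) := by
  rw [E, if_neg h0]

lemma E'_eq_zero_case {α : Ordinal.{u}} (h0 : lpart α = 0) :
    E' α = ((2 * npart α + 2 : ℕ) : Ordinal.{u}) := by
  rw [E', h0, if_pos rfl, zero_add]

lemma E'_eq_pos_case {α : Ordinal.{u}} (h0 : lpart α ≠ 0) :
    E' α = lpart α + ((2 * npart α + 1 : ℕ) : Ordinal.{u}) := by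
  rw [E', if_neg h0]

lemma nu_eq_zero_case {α : Ordinal.{u}} (h0 : lpart α = 0) :
    nu α = ((2 * npart α + 1 : ℕ) : Ordinal.{u}) := by
  rw [nu, h0, if_pos rfl, zero_add]

lemma nu_eq_pos_case {α : Ordinal.{u}} (h0 : lpart α ≠ 0) :
    nu α = lpart α + ((2 * npart α : ℕ) : Ordinal.{u}) := by
  rw [nu, if_neg h0]

lemma lpart_limit {α : Ordinal.{u}} (h0 : lpart α ≠ 0) : Order.IsSuccLimit (lpart α) :=
  (lpart_zero_or_limit α).resolve_left h0

lemma decomp_nat (n : ℕ) :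
    lpart ((n : Ordinal.{u})) = 0 ∧ npart ((n : Ordinal.{u})) = n := by
  have h := mk_decomp (l := (0:Ordinal.{u})) (Or.inl rfl) n
  rwa [zero_add] at h

lemma emptyTurn_E (α : Ordinal.{u}) : emptyTurn (E α) := by
  rw [emptyTurn_iff]
  rcases eq_or_ne (lpart α) 0 with h0 | h0
  · rw [E_eq_zero_case h0]
    left
    rw [(decomp_nat _).1, (decomp_nat _).2]
    exact ⟨rfl, ⟨npart α, by omega⟩⟩
  · rw [E_eq_pos_case h0]
    have h := mk_decomp (Or.inr (lpart_limit h0)) (2 * npart α + 1)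
    right
    rw [h.1, h.2]
    exact ⟨h0, ⟨npart α, by omega⟩⟩

lemma emptyTurn_E' (α : Ordinal.{u}) : emptyTurn (E' α) := by
  rw [emptyTurn_iff]
  rcases eq_or_ne (lpart α) 0 with h0 | h0
  · rw [E'_eq_zero_case h0]
    left
    rw [(decomp_nat _).1, (decomp_nat _).2]
    exact ⟨rfl, ⟨npart α + 1, by omega⟩⟩
  · rw [E'_eq_pos_case h0]
    have h := mk_decomp (Or.inr (lpart_limit h0)) (2 * npart α + 1)
    right
    rw [h.1, h.2]
    exact ⟨h0, ⟨npart α, by omega⟩⟩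

lemma not_emptyTurn_nu (α : Ordinal.{u}) : ¬ emptyTurn (nu α) := by
  rw [not_emptyTurn_iff]
  rcases eq_or_ne (lpart α) 0 with h0 | h0
  · rw [nu_eq_zero_case h0]
    left
    rw [(decomp_nat _).1, (decomp_nat _).2]
    exact ⟨rfl, ⟨npart α, by omega⟩⟩
  · rw [nu_eq_pos_case h0]
    have h := mk_decomp (Or.inr (lpart_limit h0)) (2 * npart α)
    right
    rw [h.1, h.2]
    exact ⟨h0, ⟨npart α, by omega⟩⟩

lemma natCast_succ (n : ℕ) : ((n : ℕ) : Ordinal.{u}) + 1 = ((n + 1 : ℕ) : Ordinal.{u}) := by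
  rw [Nat.cast_add, Nat.cast_one]

lemma nu_add_one (α : Ordinal.{u}) : nu α + 1 = E' α := by
  rcases eq_or_ne (lpart α) 0 with h0 | h0
  · rw [nu_eq_zero_case h0, E'_eq_zero_case h0, natCast_succ]
  · rw [nu_eq_pos_case h0, E'_eq_pos_case h0, add_assoc, natCast_succ]

lemma nu_lt_E' (α : Ordinal.{u}) : nu α < E' α := by
  rw [← nu_add_one]; exact lt_add_one _

lemma decode_E (α : Ordinal.{u}) : decode (E α) = α := by
  rcases eq_or_ne (lpart α) 0 with h0 | h0
  · rw [E_eq_zero_case h0, decode, (decomp_nat _).1, (decomp_nat _).2, zero_add]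
    conv_rhs => rw [← lpart_add_npart α, h0, zero_add]
    exact congrArg _ (by exact_mod_cast congrArg (Nat.cast : ℕ → Ordinal.{u}) (by omega))
  · rw [E_eq_pos_case h0]
    have h := mk_decomp (Or.inr (lpart_limit h0)) (2 * npart α + 1)
    rw [decode, h.1, h.2]
    conv_rhs => rw [← lpart_add_npart α]
    congr 1
    exact_mod_cast congrArg (Nat.cast : ℕ → Ordinal.{u}) (by omega)

lemma decode_nu (α : Ordinal.{u}) : decode (nu α) = α := by
  rcases eq_or_ne (lpart α) 0 with h0 | h0
  · rw [nu_eq_zero_case h0, decode, (decomp_nat _).1, (decomp_nat _).2, zero_add]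
    conv_rhs => rw [← lpart_add_npart α, h0, zero_add]
    exact congrArg _ (by exact_mod_cast congrArg (Nat.cast : ℕ → Ordinal.{u}) (by omega))
  · rw [nu_eq_pos_case h0]
    have h := mk_decomp (Or.inr (lpart_limit h0)) (2 * npart α)
    rw [decode, h.1, h.2]
    conv_rhs => rw [← lpart_add_npart α]
    congr 1
    exact_mod_cast congrArg (Nat.cast : ℕ → Ordinal.{u}) (by omega)

lemma E_decode_of_empty {σ : Ordinal.{u}} (h : emptyTurn σ) : E (decode σ) = σ := by
  rw [emptyTurn_iff] at h
  rcases h with ⟨h0, hn⟩ | ⟨h0, hn⟩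
  · have hd : decode σ = ((npart σ / 2 : ℕ) : Ordinal.{u}) := by
      rw [decode, h0, zero_add]
    rw [hd, E, (decomp_nat _).1, if_pos rfl, (decomp_nat _).2, zero_add]
    conv_rhs => rw [← lpart_add_npart σ, h0, zero_add]
    obtain ⟨k, hk⟩ := hn
    exact congrArg (Nat.cast : ℕ → Ordinal.{u}) (by omega)
  · have h := mk_decomp (Or.inr (lpart_limit h0)) (npart σ / 2)
    rw [E, decode, h.1, h.2, if_neg h0]
    conv_rhs => rw [← lpart_add_npart σ]
    obtain ⟨k, hk⟩ := hn
    congr 1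
    exact congrArg (Nat.cast : ℕ → Ordinal.{u}) (by omega)

lemma E'_decode_of_nonempty {σ : Ordinal.{u}} (h : ¬ emptyTurn σ) : E' (decode σ) = σ + 1 := by
  rw [not_emptyTurn_iff] at h
  rcases h with ⟨h0, hn⟩ | ⟨h0, hn⟩
  · have hd : decode σ = ((npart σ / 2 : ℕ) : Ordinal.{u}) := by
      rw [decode, h0, zero_add]
    rw [hd, E', (decomp_nat _).1, if_pos rfl, (decomp_nat _).2, zero_add]
    conv_rhs => rw [← lpart_add_npart σ, h0, zero_add]
    obtain ⟨k, hk⟩ := hn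
    rw [natCast_succ]
    exact congrArg (Nat.cast : ℕ → Ordinal.{u}) (by omega)
  · have h := mk_decomp (Or.inr (lpart_limit h0)) (npart σ / 2)
    rw [E', decode, h.1, h.2, if_neg h0]
    conv_rhs => rw [← lpart_add_npart σ]
    obtain ⟨k, hk⟩ := hn
    rw [add_assoc]
    congr 1
    rw [natCast_succ]
    exact congrArg (Nat.cast : ℕ → Ordinal.{u}) (by omega)

lemma E'_invE'_of_empty {σ : Ordinal.{u}} (h : emptyTurn σ) (h0 : σ ≠ 0) :
    E' (invE' σ) = σ := by
  rw [emptyTurn_iff] at h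
  rcases h with ⟨hl, hn⟩ | ⟨hl, hn⟩
  · have hnn : npart σ ≠ 0 := by
      intro hz
      apply h0
      rw [← lpart_add_npart σ, hl, hz, Nat.cast_zero, add_zero]
    have hd : invE' σ = ((npart σ / 2 - 1 : ℕ) : Ordinal.{u}) := by
      rw [invE', hl, if_pos rfl, zero_add]
    rw [hd, E', (decomp_nat _).1, if_pos rfl, (decomp_nat _).2, zero_add]
    conv_rhs => rw [← lpart_add_npart σ, hl, zero_add]
    obtain ⟨k, hk⟩ := hn
    exact congrArg (Nat.cast : ℕ → Ordinal.{u}) (by omega)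
  · have hd : invE' σ = lpart σ + ((npart σ / 2 : ℕ) : Ordinal.{u}) := by
      rw [invE', if_neg hl]
    have h := mk_decomp (Or.inr (lpart_limit hl)) (npart σ / 2)
    rw [hd, E', h.1, h.2, if_neg hl]
    conv_rhs => rw [← lpart_add_npart σ]
    obtain ⟨k, hk⟩ := hn
    congr 1
    exact congrArg (Nat.cast : ℕ → Ordinal.{u}) (by omega)

lemma emptyTurn_succ {σ : Ordinal.{u}} (h : ¬ emptyTurn σ) : emptyTurn (σ + 1) := by
  rw [not_emptyTurn_iff] at h
  rcases h with ⟨h0, hn⟩ | ⟨h0, hn⟩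
  · left
    refine ⟨npart σ + 1, ?_, ?_⟩
    · conv_lhs => rw [← lpart_add_npart σ, h0, zero_add]
      rw [natCast_succ]
    · obtain ⟨k, hk⟩ := hn; exact ⟨k + 1, by omega⟩
  · right
    refine ⟨lpart σ, npart σ + 1, lpart_limit h0, ?_, ?_⟩
    · conv_lhs => rw [← lpart_add_npart σ]
      rw [add_assoc, natCast_succ]
    · obtain ⟨k, hk⟩ := hn; exact ⟨k, by omega⟩

lemma exists_succ_of_emptyTurn {σ : Ordinal.{u}} (h : emptyTurn σ) (h0 : σ ≠ 0) :
    ∃ σ', σ = σ' + 1 := by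
  rw [emptyTurn_iff] at h
  rcases h with ⟨hl, hn⟩ | ⟨hl, hn⟩
  · have hnn : npart σ ≠ 0 := by
      intro hz
      apply h0
      rw [← lpart_add_npart σ, hl, hz, Nat.cast_zero, add_zero]
    refine ⟨((npart σ - 1 : ℕ) : Ordinal.{u}), ?_⟩
    conv_lhs => rw [← lpart_add_npart σ, hl, zero_add]
    rw [natCast_succ]
    exact congrArg (Nat.cast : ℕ → Ordinal.{u}) (by omega)
  · obtain ⟨k, hk⟩ := hn
    refine ⟨lpart σ + ((npart σ - 1 : ℕ) : Ordinal.{u}), ?_⟩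
    conv_lhs => rw [← lpart_add_npart σ]
    rw [add_assoc]
    congr 1
    rw [natCast_succ]
    exact congrArg (Nat.cast : ℕ → Ordinal.{u}) (by omega)


section Main

variable {K : Type u} {I : Set (Set K)}

lemma zorn_partition (hmono : ∀ A ∈ I, ∀ B, B ⊆ A → B ∈ I)
    {X : Set K} (hX : X ∉ I) (D : Set (Set K))
    (hD : ∀ d ∈ D, d ⊆ X ∧ d ∉ I)
    (hdense : ∀ Z, Z ⊆ X → Z ∉ I → ∃ d ∈ D, d ⊆ Z) :
    ∃ W, W ⊆ D ∧ IPartition I X W := by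
  have hzorn := zorn_subset {A : Set (Set K) | A ⊆ D ∧
      ∀ a ∈ A, ∀ b ∈ A, a ≠ b → a ∩ b ∈ I} ?ub
  case ub =>
    intro c hc hchain
    refine ⟨⋃₀ c, ⟨?_, ?_⟩, fun s hs => subset_sUnion_of_mem hs⟩
    · intro a ⟨A, hAc, haA⟩
      exact (hc hAc).1 haA
    · rintro a ⟨A, hAc, haA⟩ b ⟨B, hBc, hbB⟩ hab
      rcases hchain.total hAc hBc with h | h
      · exact (hc hBc).2 a (h haA) b hbB hab
      · exact (hc hAc).2 a haA b (h hbB) hab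
  obtain ⟨M, hM⟩ := hzorn
  refine ⟨M, hM.1.1, ⟨fun A hA => hD A (hM.1.1 hA), hM.1.2, ?_⟩⟩
  intro Z hZX hZI
  by_contra hcon
  push_neg at hcon
  obtain ⟨d, hdD, hdZ⟩ := hdense Z hZX hZI
  have hdM : insert d M ∈ {A : Set (Set K) | A ⊆ D ∧
      ∀ a ∈ A, ∀ b ∈ A, a ≠ b → a ∩ b ∈ I} := by
    constructor
    · exact insert_subset hdD hM.1.1
    · intro a ha b hb hab
      rcases ha with rfl | ha
      · rcases hb with rfl | hb
        · exact absurd rfl hab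
        · exact hmono _ (hcon b hb) _ (by
            intro t ⟨ht1, ht2⟩; exact ⟨hdZ ht1, ht2⟩)
      · rcases hb with rfl | hb
        · exact hmono _ (hcon a ha) _ (by
            intro t ⟨ht1, ht2⟩; exact ⟨hdZ ht2, ht1⟩)
        · exact hM.1.2 a ha b hb hab
  have : d ∈ M := hM.2 hdM (subset_insert _ _) (mem_insert _ _)
  have : Z ∩ d ∉ I := by
    rw [inter_eq_self_of_subset_right hdZ]
    exact (hD d hdD).2
  exact this (hcon d ‹d ∈ M›)

lemma partition_exists (hmono : ∀ A ∈ I, ∀ B, B ⊆ A → B ∈ I)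
    {X : Set K} (hX : X ∉ I) : ∃ W, IPartition I X W := by
  obtain ⟨W, _, hW⟩ := zorn_partition hmono hX {d | d ⊆ X ∧ d ∉ I}
    (fun d hd => hd) (fun Z hZX hZI => ⟨Z, ⟨hZX, hZI⟩, subset_rfl⟩)
  exact ⟨W, hW⟩

section Forward

open Classical in
noncomputable def pick (I : Set (Set K)) (Wp : Set (Set K)) (Z : Set K) : Set K :=
  if hx : ∃ w, w ∈ Wp ∧ w ∩ Z ∉ I then Classical.choose hx else ∅

lemma pick_spec {Wp : Set (Set K)} {Z : Set K}
    (h : ∃ w, w ∈ Wp ∧ w ∩ Z ∉ I) : pick I Wp Z ∈ Wp ∧ pick I Wp Z ∩ Z ∉ I := by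
  rw [pick, dif_pos h]
  exact Classical.choose_spec h

open Classical in
/-- truncation of a run below `σ`. -/
noncomputable def trunc (s : Ordinal.{u} → Set K) (σ : Ordinal.{u}) :
    Ordinal.{u} → Set K := fun β => if β < σ then s β else ∅

open Classical in
noncomputable def runBody (I : Set (Set K))
    (τ : (Ordinal.{u} → Set K) → Ordinal.{u} → Set K) (X : Set K)
    (W : Ordinal.{u} → Set (Set K)) (σ : Ordinal.{u})
    (rec : ∀ β, β < σ → Set K) : Set K :=
  let prev : Ordinal.{u} → Set K := fun β => if h : β < σ then rec β h else ∅
  if emptyTurn σ then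
    pick I (W (decode σ)) (X ∩ ⋂ β ∈ Set.Iio σ, prev β) ∩ (X ∩ ⋂ β ∈ Set.Iio σ, prev β)
  else τ prev σ

noncomputable def runF (I : Set (Set K))
    (τ : (Ordinal.{u} → Set K) → Ordinal.{u} → Set K) (X : Set K)
    (W : Ordinal.{u} → Set (Set K)) : Ordinal.{u} → Set K :=
  Ordinal.lt_wf.fix (runBody I τ X W)

lemma trunc_eq_of_lt {s : Ordinal.{u} → Set K} {σ β : Ordinal.{u}} (h : β < σ) :
    trunc s σ β = s β := if_pos h

lemma trunc_eq_of_not_lt {s : Ordinal.{u} → Set K} {σ β : Ordinal.{u}} (h : ¬ β < σ) :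
    trunc s σ β = ∅ := if_neg h

lemma trunc_biInter (s : Ordinal.{u} → Set K) (σ : Ordinal.{u}) :
    (⋂ β ∈ Set.Iio σ, trunc s σ β) = ⋂ β ∈ Set.Iio σ, s β :=
  Set.iInter₂_congr fun _ hβ => if_pos hβ

open Classical in
lemma dite_biInter (s : Ordinal.{u} → Set K) (σ : Ordinal.{u}) :
    (⋂ β ∈ Set.Iio σ, if _ : β < σ then s β else ∅) = ⋂ β ∈ Set.Iio σ, s β :=
  Set.iInter₂_congr fun _ hβ => dif_pos hβ

open Classical in
lemma runF_def (I : Set (Set K))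
    (τ : (Ordinal.{u} → Set K) → Ordinal.{u} → Set K) (X : Set K)
    (W : Ordinal.{u} → Set (Set K)) (σ : Ordinal.{u}) :
    runF I τ X W σ =
      if emptyTurn σ then
        pick I (W (decode σ)) (X ∩ ⋂ β ∈ Set.Iio σ, runF I τ X W β) ∩
          (X ∩ ⋂ β ∈ Set.Iio σ, runF I τ X W β)
      else τ (trunc (runF I τ X W) σ) σ := by
  have h0 : runF I τ X W σ = runBody I τ X W σ (fun β _ => runF I τ X W β) :=
    WellFounded.fix_eq _ _ _
  rw [h0, runBody]
  have hprev : (fun β => if h : β < σ then runF I τ X W β else ∅) = trunc (runF I τ X W) σ := by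
    funext β
    rw [trunc, dite_eq_ite]
  simp only [dite_biInter]
  rw [hprev]

noncomputable def tauG (I : Set (Set K))
    (τ : (Ordinal.{u} → Set K) → Ordinal.{u} → Set K) (X : Set K)
    (W : Ordinal.{u} → Set (Set K)) (α : Ordinal.{u}) : Set K :=
  pick I (W α) (X ∩ ⋂ β ∈ Set.Iio (E α), runF I τ X W β)

lemma runF_agree (I : Set (Set K)) (τ : (Ordinal.{u} → Set K) → Ordinal.{u} → Set K)
    (X : Set K) {W W' : Ordinal.{u} → Set (Set K)} {α : Ordinal.{u}}
    (hag : ∀ ρ ≤ α, W ρ = W' ρ) : ∀ σ, σ ≤ E α → runF I τ X W σ = runF I τ X W' σ := by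
  intro σ
  induction σ using Ordinal.induction with
  | h σ IH =>
    intro hσ
    rw [runF_def, runF_def]
    have hbi : (⋂ β ∈ Set.Iio σ, runF I τ X W β) = ⋂ β ∈ Set.Iio σ, runF I τ X W' β :=
      Set.iInter₂_congr fun β hβ => IH β hβ (le_of_lt (hβ.trans_le hσ))
    by_cases he : emptyTurn σ
    · rw [if_pos he, if_pos he, hbi]
      have hWd : W (decode σ) = W' (decode σ) := by
        apply hag
        apply strictMono_E.le_iff_le.mp
        rw [E_decode_of_empty he]
        exact hσ
      rw [hWd]
    · rw [if_neg he, if_neg he]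
      have htr : trunc (runF I τ X W) σ = trunc (runF I τ X W') σ := by
        funext β
        by_cases hb : β < σ
        · rw [trunc_eq_of_lt hb, trunc_eq_of_lt hb, IH β hb (le_of_lt (hb.trans_le hσ))]
        · rw [trunc_eq_of_not_lt hb, trunc_eq_of_not_lt hb]
      rw [htr]

lemma Zpos (hmono : ∀ A ∈ I, ∀ B, B ⊆ A → B ∈ I)
    {X : Set K} (hX : X ∉ I) {s : Ordinal.{u} → Set K} (hs0 : s 0 ⊆ X)
    {σ : Ordinal.{u}} (hσ : emptyTurn σ) (hval : BMValid I s σ) :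
    (X ∩ ⋂ β ∈ Set.Iio σ, s β) ∉ I ∧ (X ∩ ⋂ β ∈ Set.Iio σ, s β) ⊆ X := by
  refine ⟨?_, Set.inter_subset_left⟩
  rcases eq_or_ne σ 0 with rfl | h0
  · have hIio : Set.Iio (0 : Ordinal.{u}) = ∅ := by
      ext β; simp [not_lt_zero]
    rw [hIio]
    simpa using hX
  · obtain ⟨σ', rfl⟩ := exists_succ_of_emptyTurn hσ h0
    have hσ'lt : σ' < σ' + 1 := lt_add_one σ'
    obtain ⟨hσ'I, hσ'sub⟩ := hval σ' hσ'lt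
    have hσ'X : s σ' ⊆ X := by
      rcases eq_or_ne σ' 0 with rfl | h0'
      · exact hs0
      · exact (hσ'sub 0 (pos_iff_ne_zero.2 h0')).trans hs0
    intro hin
    apply hσ'I
    apply hmono _ hin
    intro t ht
    refine ⟨hσ'X ht, ?_⟩
    rw [Set.mem_iInter₂]
    intro β hβ
    rw [Set.mem_Iio, Ordinal.add_one_eq_succ, Order.lt_succ_iff] at hβ
    rcases lt_or_eq_of_le hβ with hβ' | rfl
    · exact hσ'sub β hβ' ht
    · exact ht

lemma forward (hmono : ∀ A ∈ I, ∀ B, B ⊆ A → B ∈ I)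
    {γ : Ordinal.{u}} (hγ : Order.IsSuccLimit γ)
    (hne : NonemptyWinsBM I γ) :
    ∀ X : Set K, X ∉ I → ChooseWinsLeq I X γ := by
  obtain ⟨τ, hτcoh, hτwin⟩ := hne
  intro X hX
  refine ⟨tauG I τ X, ?_, ?_⟩
  · -- coherence of Choose's strategy
    intro W W' α hag
    unfold tauG
    have hbi : (X ∩ ⋂ β ∈ Set.Iio (E α), runF I τ X W β) =
        X ∩ ⋂ β ∈ Set.Iio (E α), runF I τ X W' β :=
      congrArg (fun T => X ∩ T)
        (Set.iInter₂_congr fun β hβ => runF_agree I τ X hag β (le_of_lt hβ))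
    rw [hag α le_rfl, hbi]
  · -- the strategy wins
    intro W hW
    set s := runF I τ X W with hs
    have hs0X : s 0 ⊆ X := by
      rw [hs, runF_def, if_pos emptyTurn_zero]
      intro t ht
      exact ht.2.1
    have hfollow : ∀ σ < γ, ¬ emptyTurn σ → s σ = τ s σ := by
      intro σ _ hne'
      rw [hs, runF_def, if_neg hne']
      exact hτcoh _ _ σ (fun β hβ => trunc_eq_of_lt hβ)
    have hElegal : ∀ σ < γ, emptyTurn σ → BMValid I s σ → BMLegal I s σ (s σ) := by
      intro σ hσγ he hval
      have hZ := Zpos hmono hX hs0X he hval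
      have hdec : decode σ < γ := lt_of_le_of_lt (decode_le_self σ) hσγ
      obtain ⟨w, hwW, hwZ⟩ := (hW _ hdec).2.2 _ hZ.2 hZ.1
      have hex : ∃ w, w ∈ W (decode σ) ∧ w ∩ (X ∩ ⋂ β ∈ Set.Iio σ, s β) ∉ I :=
        ⟨w, hwW, by rwa [inter_comm]⟩
      have heq : s σ = pick I (W (decode σ)) (X ∩ ⋂ β ∈ Set.Iio σ, s β) ∩
          (X ∩ ⋂ β ∈ Set.Iio σ, s β) := by
        rw [hs, runF_def, if_pos he]
      constructor
      · rw [heq]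
        exact (pick_spec hex).2
      · intro β hβ
        rw [heq]
        intro t ht
        exact Set.mem_iInter₂.1 ht.2.2 β hβ
    obtain ⟨_, hvalγ, hptNE⟩ := hτwin s hfollow hElegal
    have hEstage : ∀ α < γ, ∃ w, w ∈ W α ∧ w ∩ (X ∩ ⋂ β ∈ Set.Iio (E α), s β) ∉ I := by
      intro α hαγ
      have hEγ : E α < γ := E_lt_gamma hγ hαγ
      have hval : BMValid I s (E α) := fun β hβ => hvalγ β (hβ.trans hEγ)
      have hZ := Zpos hmono hX hs0X (emptyTurn_E α) hval
      obtain ⟨w, hwW, hwZ⟩ := (hW α hαγ).2.2 _ hZ.2 hZ.1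
      exact ⟨w, hwW, by rwa [inter_comm]⟩
    have hmem : ∀ α < γ, tauG I τ X W α ∈ W α ∧ s (E α) ⊆ tauG I τ X W α := by
      intro α hαγ
      have hex := hEstage α hαγ
      have htg : tauG I τ X W α = pick I (W α) (X ∩ ⋂ β ∈ Set.Iio (E α), s β) := rfl
      constructor
      · rw [htg]
        exact (pick_spec hex).1
      · have heq : s (E α) = pick I (W (decode (E α))) (X ∩ ⋂ β ∈ Set.Iio (E α), s β) ∩
            (X ∩ ⋂ β ∈ Set.Iio (E α), s β) := by
          rw [hs, runF_def, if_pos (emptyTurn_E α)]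
        rw [heq, decode_E, htg]
        exact Set.inter_subset_left
    refine ⟨fun α hαγ => (hmem α hαγ).1, ?_, ?_⟩
    · intro δ hδγ hI
      have hEδ : E δ < γ := E_lt_gamma hγ hδγ
      apply (hvalγ _ hEδ).1
      apply hmono _ hI
      intro t ht
      rw [Set.mem_iInter₂]
      intro β hβ
      have h1 : s (E δ) ⊆ s (E β) := (hvalγ _ hEδ).2 _ (strictMono_E hβ)
      exact (hmem β (hβ.trans hδγ)).2 (h1 ht)
    · obtain ⟨pt, hpt⟩ := hptNE
      refine ⟨pt, ?_⟩
      rw [Set.mem_iInter₂]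
      intro α hαγ
      exact (hmem α hαγ).2 (Set.mem_iInter₂.1 hpt _ (E_lt_gamma hγ hαγ))

end Forward

section Backward

lemma biInter_succ (f : Ordinal.{u} → Set K) (α : Ordinal.{u}) :
    (⋂ β ∈ Set.Iio (α+1), f β) = (⋂ β ∈ Set.Iio α, f β) ∩ f α := by
  ext t
  constructor
  · intro ht
    have ht' := Set.mem_iInter₂.1 ht
    exact ⟨Set.mem_iInter₂.2 fun β hβ => ht' β ((Set.mem_Iio.1 hβ).trans (lt_add_one α)),
      ht' α (lt_add_one α)⟩
  · rintro ⟨h1, h2⟩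
    refine Set.mem_iInter₂.2 fun β hβ => ?_
    rw [Set.mem_Iio, Ordinal.add_one_eq_succ, Order.lt_succ_iff] at hβ
    rcases lt_or_eq_of_le hβ with h | rfl
    · exact Set.mem_iInter₂.1 h1 β h
    · exact h2

open Classical in
noncomputable def updW (p : Ordinal.{u} → Set (Set K)) (ρ : Ordinal.{u})
    (Wn : Set (Set K)) : Ordinal.{u} → Set (Set K) := fun β => if β = ρ then Wn else p β

lemma updW_same {p : Ordinal.{u} → Set (Set K)} {ρ : Ordinal.{u}} {Wn : Set (Set K)} :
    updW p ρ Wn ρ = Wn := if_pos rfl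

lemma updW_ne {p : Ordinal.{u} → Set (Set K)} {ρ β : Ordinal.{u}} {Wn : Set (Set K)}
    (h : β ≠ ρ) : updW p ρ Wn β = p β := if_neg h

lemma density (hmono : ∀ A ∈ I, ∀ B, B ⊆ A → B ∈ I)
    (hunion : ∀ A ∈ I, ∀ B ∈ I, A ∪ B ∈ I) (hempty : (∅ : Set K) ∈ I)
    {γ : Ordinal.{u}} (hγ : Order.IsSuccLimit γ) {X : Set K} (hX : X ∉ I)
    (τX : (Ordinal.{u} → Set (Set K)) → Ordinal.{u} → Set K)
    (hcoh : ∀ W W' α, (∀ β ≤ α, W β = W' β) → τX W α = τX W' α)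
    (hwin : ∀ W, (∀ α < γ, IPartition I X (W α)) →
      (∀ α < γ, τX W α ∈ W α) ∧ (∀ δ < γ, (⋂ β ∈ Set.Iio δ, τX W β) ∉ I) ∧
      (⋂ β ∈ Set.Iio γ, τX W β).Nonempty)
    (p : Ordinal.{u} → Set (Set K)) (hp : ∀ β < γ, IPartition I X (p β))
    {α : Ordinal.{u}} (hα : α < γ) :
    ∃ y, y ∉ I ∧ (y ⊆ X ∩ ⋂ β ∈ Set.Iio α, τX p β) ∧
      ∀ z, z ⊆ y → z ∉ I → ∃ Wn, IPartition I X Wn ∧ τX (updW p α Wn) α = z := by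
  have hα1 : α + 1 < γ := by
    rw [Ordinal.add_one_eq_succ]; exact hγ.succ_lt hα
  obtain ⟨hp1, hp2, _⟩ := hwin p hp
  have hxI : (X ∩ ⋂ β ∈ Set.Iio α, τX p β) ∉ I := by
    intro hin
    apply hp2 (α+1) hα1
    apply hmono _ hin
    rw [biInter_succ]
    rintro t ⟨h1, h2⟩
    exact ⟨((hp α hα).1 _ (hp1 α hα)).1 h2, h1⟩
  by_contra hno
  push_neg at hno
  set x := X ∩ ⋂ β ∈ Set.Iio α, τX p β with hxdef
  have hxX : x ⊆ X := Set.inter_subset_left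
  set R : Set (Set K) :=
    {z | ∃ Wn, IPartition I X Wn ∧ τX (updW p α Wn) α = z} with hR
  set D : Set (Set K) := {z | z ⊆ x ∧ z ∉ I ∧ z ∉ R} ∪
    {z | z ⊆ X ∧ z ∉ I ∧ z ∩ x ∈ I} with hD
  have hDsub : ∀ d ∈ D, d ⊆ X ∧ d ∉ I := by
    rintro d (⟨h1, h2, _⟩ | ⟨h1, h2, _⟩)
    · exact ⟨h1.trans hxX, h2⟩
    · exact ⟨h1, h2⟩
  have hdense : ∀ Z, Z ⊆ X → Z ∉ I → ∃ d ∈ D, d ⊆ Z := by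
    intro Z hZX hZI
    by_cases hZx : Z ∩ x ∈ I
    · refine ⟨Z \ x, Set.mem_union_right _ ⟨Set.diff_subset.trans hZX, ?_, ?_⟩,
        Set.diff_subset⟩
      · intro hd
        apply hZI
        have hZeq : Z = Z ∩ x ∪ Z \ x := (Set.inter_union_diff Z x).symm
        rw [hZeq]
        exact hunion _ hZx _ hd
      · rw [Set.diff_inter_self]
        exact hempty
    · obtain ⟨z, hz1, hz2, hz3⟩ := hno (Z ∩ x) hZx Set.inter_subset_right
      refine ⟨z, Set.mem_union_left _ ⟨hz1.trans Set.inter_subset_right, hz2, ?_⟩,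
        hz1.trans Set.inter_subset_left⟩
      rintro ⟨Wn, hw1, hw2⟩
      exact hz3 Wn hw1 hw2
  obtain ⟨Wn, hWnD, hWnP⟩ := zorn_partition hmono hX D hDsub hdense
  have hqpart : ∀ b < γ, IPartition I X (updW p α Wn b) := by
    intro b hb
    by_cases h : b = α
    · rw [h, updW_same]; exact hWnP
    · rw [updW_ne h]; exact hp b hb
  obtain ⟨hq1, hq2, _⟩ := hwin (updW p α Wn) hqpart
  have hrW : τX (updW p α Wn) α ∈ Wn := by
    have := hq1 α hα
    rwa [updW_same] at this
  have hresp : ∀ β ∈ Set.Iio α, τX (updW p α Wn) β = τX p β := fun β hβ =>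
    hcoh _ p β fun b hb => updW_ne (ne_of_lt (lt_of_le_of_lt hb (Set.mem_Iio.1 hβ)))
  have hsub2 : (⋂ β ∈ Set.Iio (α+1), τX (updW p α Wn) β) ⊆ x ∩ τX (updW p α Wn) α := by
    rw [biInter_succ]
    rintro t ⟨h1, h2⟩
    rw [show (⋂ β ∈ Set.Iio α, τX (updW p α Wn) β) = ⋂ β ∈ Set.Iio α, τX p β from
      Set.iInter₂_congr hresp] at h1
    exact ⟨⟨((hqpart α hα).1 _ (hq1 α hα)).1 h2, h1⟩, h2⟩
  have hxrI : x ∩ τX (updW p α Wn) α ∉ I := fun hin =>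
    hq2 (α+1) hα1 (hmono _ hin _ hsub2)
  rcases hWnD hrW with ⟨_, _, hnR⟩ | ⟨_, _, hrx⟩
  · exact hnR ⟨Wn, hWnP, rfl⟩
  · exact hxrI (by rwa [inter_comm] at hrx)

open Classical in
noncomputable def ppadBody (TAU : Set K → (Ordinal.{u} → Set (Set K)) → Ordinal.{u} → Set K)
    (WST : Set K → Set (Set K)) (I : Set (Set K)) (h : Ordinal.{u} → Set K)
    (ρ : Ordinal.{u}) (rec : ∀ β, β < ρ → Set (Set K)) : Set (Set K) :=
  if hx : ∃ Wn, IPartition I (h 0) Wn ∧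
      TAU (h 0) (updW (fun β => if hb : β < ρ then rec β hb else WST (h 0)) ρ Wn) ρ
        = h (E' ρ)
  then Classical.choose hx else WST (h 0)

noncomputable def pseq (TAU : Set K → (Ordinal.{u} → Set (Set K)) → Ordinal.{u} → Set K)
    (WST : Set K → Set (Set K)) (I : Set (Set K)) (h : Ordinal.{u} → Set K) :
    Ordinal.{u} → Set (Set K) :=
  Ordinal.lt_wf.fix (ppadBody TAU WST I h)

open Classical in
noncomputable def ppad (TAU : Set K → (Ordinal.{u} → Set (Set K)) → Ordinal.{u} → Set K)
    (WST : Set K → Set (Set K)) (I : Set (Set K)) (h : Ordinal.{u} → Set K)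
    (ρ : Ordinal.{u}) : Ordinal.{u} → Set (Set K) :=
  fun β => if β < ρ then pseq TAU WST I h β else WST (h 0)

lemma ppad_eq_of_lt {TAU WST} {h : Ordinal.{u} → Set K} {ρ β : Ordinal.{u}} (hb : β < ρ) :
    ppad TAU WST I h ρ β = pseq TAU WST I h β := if_pos hb

lemma ppad_eq_of_not_lt {TAU WST} {h : Ordinal.{u} → Set K} {ρ β : Ordinal.{u}}
    (hb : ¬ β < ρ) : ppad TAU WST I h ρ β = WST (h 0) := if_neg hb

open Classical in
lemma pseq_def (TAU : Set K → (Ordinal.{u} → Set (Set K)) → Ordinal.{u} → Set K)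
    (WST : Set K → Set (Set K)) (h : Ordinal.{u} → Set K) (ρ : Ordinal.{u}) :
    pseq TAU WST I h ρ =
      if hx : ∃ Wn, IPartition I (h 0) Wn ∧
          TAU (h 0) (updW (ppad TAU WST I h ρ) ρ Wn) ρ = h (E' ρ)
      then Classical.choose hx else WST (h 0) := by
  have h0 : pseq TAU WST I h ρ = ppadBody TAU WST I h ρ (fun β _ => pseq TAU WST I h β) :=
    WellFounded.fix_eq _ _ _
  rw [h0, ppadBody]
  have hprev : (fun β => if hb : β < ρ then pseq TAU WST I h β else WST (h 0)) =
      ppad TAU WST I h ρ := by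
    funext β
    rw [dite_eq_ite]
    rfl
  rw [hprev]

lemma pseq_isPartition (TAU : Set K → (Ordinal.{u} → Set (Set K)) → Ordinal.{u} → Set K)
    (WST : Set K → Set (Set K)) (h : Ordinal.{u} → Set K)
    (hWp : IPartition I (h 0) (WST (h 0))) (ρ : Ordinal.{u}) :
    IPartition I (h 0) (pseq TAU WST I h ρ) := by
  rw [pseq_def]
  split_ifs with hx
  · exact (Classical.choose_spec hx).1
  · exact hWp

lemma pseq_agree (TAU : Set K → (Ordinal.{u} → Set (Set K)) → Ordinal.{u} → Set K)
    (WST : Set K → Set (Set K)) {h h' : Ordinal.{u} → Set K} (h00 : h 0 = h' 0) :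
    ∀ ρ, (∀ β ≤ ρ, h (E' β) = h' (E' β)) → pseq TAU WST I h ρ = pseq TAU WST I h' ρ := by
  intro ρ
  induction ρ using Ordinal.induction with
  | h ρ IH =>
    intro hag
    have hpp : ppad TAU WST I h ρ = ppad TAU WST I h' ρ := by
      funext β
      by_cases hb : β < ρ
      · rw [ppad_eq_of_lt hb, ppad_eq_of_lt hb,
          IH β hb (fun b hb' => hag b (hb'.trans hb.le))]
      · rw [ppad_eq_of_not_lt hb, ppad_eq_of_not_lt hb, h00]
    rw [pseq_def, pseq_def, hpp, hag ρ le_rfl, h00]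

open Classical in
noncomputable def nonemptyMove (TAU : Set K → (Ordinal.{u} → Set (Set K)) → Ordinal.{u} → Set K)
    (WST : Set K → Set (Set K)) (I : Set (Set K)) (h : Ordinal.{u} → Set K)
    (σ : Ordinal.{u}) : Set K :=
  if hx : ∃ y, y ∉ I ∧
      (y ⊆ h 0 ∩ ⋂ β ∈ Set.Iio (decode σ), TAU (h 0) (ppad TAU WST I h (decode σ)) β) ∧
      ∀ z, z ⊆ y → z ∉ I → ∃ Wn, IPartition I (h 0) Wn ∧
        TAU (h 0) (updW (ppad TAU WST I h (decode σ)) (decode σ) Wn) (decode σ) = z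
  then Classical.choose hx else ∅

lemma nonemptyMove_spec {TAU : Set K → (Ordinal.{u} → Set (Set K)) → Ordinal.{u} → Set K}
    {WST : Set K → Set (Set K)} {h : Ordinal.{u} → Set K} {σ : Ordinal.{u}}
    (hx : ∃ y, y ∉ I ∧
      (y ⊆ h 0 ∩ ⋂ β ∈ Set.Iio (decode σ), TAU (h 0) (ppad TAU WST I h (decode σ)) β) ∧
      ∀ z, z ⊆ y → z ∉ I → ∃ Wn, IPartition I (h 0) Wn ∧
        TAU (h 0) (updW (ppad TAU WST I h (decode σ)) (decode σ) Wn) (decode σ) = z) :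
    nonemptyMove TAU WST I h σ ∉ I ∧
      (nonemptyMove TAU WST I h σ ⊆
        h 0 ∩ ⋂ β ∈ Set.Iio (decode σ), TAU (h 0) (ppad TAU WST I h (decode σ)) β) ∧
      ∀ z, z ⊆ nonemptyMove TAU WST I h σ → z ∉ I → ∃ Wn, IPartition I (h 0) Wn ∧
        TAU (h 0) (updW (ppad TAU WST I h (decode σ)) (decode σ) Wn) (decode σ) = z := by
  have he : nonemptyMove TAU WST I h σ = Classical.choose hx := dif_pos hx
  rw [he]
  exact Classical.choose_spec hx

lemma backward (hmono : ∀ A ∈ I, ∀ B, B ⊆ A → B ∈ I)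
    (hunion : ∀ A ∈ I, ∀ B ∈ I, A ∪ B ∈ I) (hempty : (∅ : Set K) ∈ I)
    {γ : Ordinal.{u}} (hγ : Order.IsSuccLimit γ)
    (H : ∀ X : Set K, X ∉ I → ChooseWinsLeq I X γ) : NonemptyWinsBM I γ := by
  classical
  set TAU : Set K → (Ordinal.{u} → Set (Set K)) → Ordinal.{u} → Set K :=
    fun X => if h : X ∉ I then (H X h).choose else fun _ _ => ∅ with hTAUdef
  set WST : Set K → Set (Set K) :=
    fun X => if h : X ∉ I then (partition_exists hmono h).choose else ∅ with hWSTdef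
  have hTcoh : ∀ X, X ∉ I → ∀ W W' α, (∀ β ≤ α, W β = W' β) → TAU X W α = TAU X W' α := by
    intro X hX
    rw [hTAUdef]
    simp only [dif_pos hX]
    exact (H X hX).choose_spec.1
  have hTwin : ∀ X, X ∉ I → ∀ W : Ordinal.{u} → Set (Set K),
      (∀ α < γ, IPartition I X (W α)) →
      (∀ α < γ, TAU X W α ∈ W α) ∧ (∀ δ < γ, (⋂ β ∈ Set.Iio δ, TAU X W β) ∉ I) ∧
      (⋂ β ∈ Set.Iio γ, TAU X W β).Nonempty := by
    intro X hX W hW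
    have hspec := (H X hX).choose_spec.2 W hW
    rw [hTAUdef]
    simp only [dif_pos hX]
    exact hspec
  have hWSTp : ∀ X, X ∉ I → IPartition I X (WST X) := by
    intro X hX
    rw [hWSTdef]
    simp only [dif_pos hX]
    exact (partition_exists hmono hX).choose_spec
  refine ⟨fun s σ => nonemptyMove TAU WST I (trunc s σ) σ, ?_, ?_⟩
  · intro s s' α hag
    have htr : trunc s α = trunc s' α := by
      funext β
      by_cases hb : β < α
      · rw [trunc_eq_of_lt hb, trunc_eq_of_lt hb, hag β hb]
      · rw [trunc_eq_of_not_lt hb, trunc_eq_of_not_lt hb]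
    exact congrArg (fun h => nonemptyMove TAU WST I h α) htr
  · intro s hfollow hEleg
    have hval0 : BMValid I s 0 := fun β hβ => absurd hβ (not_lt_zero (a := β))
    have hX : s 0 ∉ I := (hEleg 0 hγ.pos emptyTurn_zero hval0).1
    -- pseq stability under truncation
    have hstab : ∀ σ : Ordinal.{u}, 0 < σ → ∀ ρ, (∀ β ≤ ρ, E' β < σ) →
        pseq TAU WST I (trunc s σ) ρ = pseq TAU WST I s ρ := by
      intro σ hσ ρ hρ
      exact pseq_agree TAU WST (trunc_eq_of_lt hσ) ρ
        (fun β hβ => trunc_eq_of_lt (hρ β hβ))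
    have hE'lt : ∀ {σ : Ordinal.{u}}, ¬ emptyTurn σ → ∀ {ρ : Ordinal.{u}}, ρ < decode σ →
        E' ρ < σ := by
      intro σ hσ ρ hρ
      have h1 : E' ρ < E' (decode σ) := strictMono_E' hρ
      rw [E'_decode_of_nonempty hσ, Ordinal.add_one_eq_succ, Order.lt_succ_iff] at h1
      rcases lt_or_eq_of_le h1 with h | h
      · exact h
      · exact absurd (h ▸ emptyTurn_E' ρ) hσ
    have hpadpart : ∀ h : Ordinal.{u} → Set K, h 0 ∉ I → ∀ ρ b,
        IPartition I (h 0) (ppad TAU WST I h ρ b) := by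
      intro h hh ρ b
      by_cases hb : b < ρ
      · rw [ppad_eq_of_lt hb]
        exact pseq_isPartition TAU WST h (hWSTp _ hh) b
      · rw [ppad_eq_of_not_lt hb]
        exact hWSTp _ hh
    -- the canonical response fact
    have respF : ∀ ρ, E' ρ < γ →
        (∀ b, b ≤ E' ρ → (s b ∉ I ∧ ∀ b' < b, s b ⊆ s b')) →
        TAU (s 0) (pseq TAU WST I s) ρ = s (E' ρ) := by
      intro ρ hργ hleg
      have hν : ¬ emptyTurn (nu ρ) := not_emptyTurn_nu ρ
      have hνγ : nu ρ < γ := (nu_lt_E' ρ).trans hργ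
      have hν0 : (0 : Ordinal.{u}) < nu ρ := by
        rcases eq_zero_or_pos (a := nu ρ) with h | h
        · exact absurd (h ▸ emptyTurn_zero) hν
        · exact h
      have hXt : (trunc s (nu ρ)) 0 ∉ I := by
        rw [trunc_eq_of_lt hν0]; exact hX
      have hdecν : decode (nu ρ) = ρ := decode_nu ρ
      have hρltγ : decode (nu ρ) < γ := by
        rw [hdecν]; exact (self_le_E' ρ).trans_lt hργ
      have hdens := density hmono hunion hempty hγ hXt (TAU ((trunc s (nu ρ)) 0))
        (hTcoh _ hXt) (hTwin _ hXt) (ppad TAU WST I (trunc s (nu ρ)) (decode (nu ρ)))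
        (fun b _ => hpadpart _ hXt _ b) hρltγ
      have hmv : s (nu ρ) = nonemptyMove TAU WST I (trunc s (nu ρ)) (nu ρ) :=
        hfollow _ hνγ hν
      obtain ⟨hyI, hysub, hyprop⟩ := nonemptyMove_spec hdens
      rw [← hmv] at hyI hysub hyprop
      have hlegE := hleg (E' ρ) le_rfl
      have hzy : s (E' ρ) ⊆ s (nu ρ) := hlegE.2 (nu ρ) (nu_lt_E' ρ)
      obtain ⟨Wn, hWnP, hWnEq⟩ := hyprop (s (E' ρ)) hzy hlegE.1
      have hpp : ppad TAU WST I (trunc s (nu ρ)) (decode (nu ρ)) = ppad TAU WST I s ρ := by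
        rw [hdecν]
        funext b
        by_cases hb : b < ρ
        · rw [ppad_eq_of_lt hb, ppad_eq_of_lt hb]
          apply hstab (nu ρ) hν0 b
          intro b' hb'
          have h1 : E' b' < E' ρ := strictMono_E' (lt_of_le_of_lt hb' hb)
          rw [← nu_add_one ρ, Ordinal.add_one_eq_succ, Order.lt_succ_iff] at h1
          rcases lt_or_eq_of_le h1 with h | h
          · exact h
          · exact absurd (h ▸ emptyTurn_E' b') hν
        · rw [ppad_eq_of_not_lt hb, ppad_eq_of_not_lt hb, trunc_eq_of_lt hν0]
      rw [trunc_eq_of_lt hν0] at hWnEq hWnP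
      rw [hpp, hdecν] at hWnEq
      have hex : ∃ Wn, IPartition I (s 0) Wn ∧
          TAU (s 0) (updW (ppad TAU WST I s ρ) ρ Wn) ρ = s (E' ρ) := ⟨Wn, hWnP, hWnEq⟩
      have hps : pseq TAU WST I s ρ = Classical.choose hex := by
        rw [pseq_def, dif_pos hex]
      obtain ⟨hcP, hcEq⟩ := Classical.choose_spec hex
      have hagr : ∀ b ≤ ρ, pseq TAU WST I s b =
          updW (ppad TAU WST I s ρ) ρ (Classical.choose hex) b := by
        intro b hb
        rcases lt_or_eq_of_le hb with h | rfl
        · rw [updW_ne (ne_of_lt h), ppad_eq_of_lt h]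
        · rw [updW_same]
          exact hps
      rw [hTcoh (s 0) hX _ _ ρ hagr]
      exact hcEq
    -- coverage
    have hcover : ∀ σ, ¬ emptyTurn σ → σ < γ →
        (∀ b, b < σ → (s b ∉ I ∧ ∀ b' < b, s b ⊆ s b')) →
        ∀ β' < σ, (s 0 ∩ ⋂ ρ ∈ Set.Iio (decode σ), s (E' ρ)) ⊆ s β' := by
      intro σ hσ hσγ hval
      have hecase : ∀ β', emptyTurn β' → β' ≠ 0 → β' < σ →
          (s 0 ∩ ⋂ ρ ∈ Set.Iio (decode σ), s (E' ρ)) ⊆ s β' := by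
        intro β' he' h0 hβ'
        have hEinv : E' (invE' β') = β' := E'_invE'_of_empty he' h0
        have hlt : invE' β' < decode σ := by
          apply strictMono_E'.lt_iff_lt.mp
          rw [hEinv, E'_decode_of_nonempty hσ]
          exact hβ'.trans (lt_add_one σ)
        intro t ht
        rw [← hEinv]
        exact Set.mem_iInter₂.1 ht.2 _ hlt
      intro β' hβ'
      by_cases he' : emptyTurn β'
      · rcases eq_or_ne β' 0 with rfl | h0
        · exact Set.inter_subset_left
        · exact hecase β' he' h0 hβ'
      · have hsucc : emptyTurn (β' + 1) := emptyTurn_succ he'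
        have h1 : β' + 1 ≤ σ := by
          rw [Ordinal.add_one_eq_succ]
          exact Order.succ_le_of_lt hβ'
        have h2 : β' + 1 < σ := by
          rcases lt_or_eq_of_le h1 with h | h
          · exact h
          · exact absurd (h ▸ hsucc) hσ
        have h3 : β' + 1 ≠ 0 := by
          intro h
          exact absurd (h ▸ (lt_add_one β')) (not_lt_zero (a := β'))
        exact (hecase (β'+1) hsucc h3 h2).trans ((hval (β'+1) h2).2 β' (lt_add_one β'))
    -- main legality induction
    have legal : ∀ β, β < γ → (s β ∉ I ∧ ∀ β' < β, s β ⊆ s β') := by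
      intro β
      induction β using Ordinal.induction with
      | h β IH =>
        intro hβγ
        by_cases he : emptyTurn β
        · exact hEleg β hβγ he (fun b hb => IH b hb (hb.trans hβγ))
        · have hβ0 : (0 : Ordinal.{u}) < β := by
            rcases eq_zero_or_pos (a := β) with h | h
            · exact absurd (h ▸ emptyTurn_zero) he
            · exact h
          have hXt : (trunc s β) 0 ∉ I := by
            rw [trunc_eq_of_lt hβ0]; exact hX
          have hdens := density hmono hunion hempty hγ hXt (TAU ((trunc s β) 0))
            (hTcoh _ hXt) (hTwin _ hXt) (ppad TAU WST I (trunc s β) (decode β))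
            (fun b _ => hpadpart _ hXt _ b)
            (show decode β < γ from (decode_le_self β).trans_lt hβγ)
          have hmv : s β = nonemptyMove TAU WST I (trunc s β) β := hfollow β hβγ he
          obtain ⟨hyI, hysub, _⟩ := nonemptyMove_spec hdens
          rw [← hmv] at hyI hysub
          refine ⟨hyI, ?_⟩
          have hrw : ∀ ρ', ρ' < decode β →
              TAU ((trunc s β) 0) (ppad TAU WST I (trunc s β) (decode β)) ρ' = s (E' ρ') := by
            intro ρ' hρ'
            have hE'β : E' ρ' < β := hE'lt he hρ'
            have hagree : ∀ b, b ≤ ρ' → ppad TAU WST I (trunc s β) (decode β) b =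
                pseq TAU WST I s b := by
              intro b hb
              rw [ppad_eq_of_lt (lt_of_le_of_lt hb hρ')]
              exact hstab β hβ0 b
                (fun b' hb' => hE'lt he (lt_of_le_of_lt (hb'.trans hb) hρ'))
            rw [trunc_eq_of_lt hβ0]
            have hcohstep := hTcoh (s 0) hX
              (ppad TAU WST I (trunc s β) (decode β)) (pseq TAU WST I s) ρ'
              (fun b hb => by
                rw [hagree b hb]) 
            rw [show TAU (s 0) (ppad TAU WST I (trunc s β) (decode β)) ρ' =
                TAU (s 0) (pseq TAU WST I s) ρ' from hcohstep]
            exact respF ρ' (hE'β.trans hβγ)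
              (fun b hb => IH b (lt_of_le_of_lt hb hE'β)
                ((lt_of_le_of_lt hb hE'β).trans hβγ))
          intro β' hβ'
          refine Set.Subset.trans ?_
            (hcover β he hβγ (fun b hb => IH b hb (hb.trans hβγ)) β' hβ')
          intro t ht
          obtain ⟨ht1, ht2⟩ := hysub ht
          refine ⟨?_, ?_⟩
          · rwa [trunc_eq_of_lt hβ0] at ht1
          · rw [Set.mem_iInter₂]
            intro ρ' hρ'
            rw [← hrw ρ' hρ']
            exact Set.mem_iInter₂.1 ht2 ρ' hρ'
    refine ⟨fun α hαγ _ _ => legal α hαγ, fun β hβ => legal β hβ, ?_⟩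
    -- nonempty intersection
    have hPf : ∀ b < γ, IPartition I (s 0) (pseq TAU WST I s b) :=
      fun b _ => pseq_isPartition TAU WST s (hWSTp _ hX) b
    obtain ⟨_, _, pt, hpt⟩ := hTwin (s 0) hX (pseq TAU WST I s) hPf
    have hget : ∀ ρ, E' ρ < γ → pt ∈ s (E' ρ) := by
      intro ρ hρ
      rw [← respF ρ hρ (fun b hb => legal b (lt_of_le_of_lt hb hρ))]
      exact Set.mem_iInter₂.1 hpt ρ (lt_of_le_of_lt (self_le_E' ρ) hρ)
    have hgete : ∀ β', emptyTurn β' → β' ≠ 0 → β' < γ → pt ∈ s β' := by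
      intro β' he' h0 hβ'
      have hEinv : E' (invE' β') = β' := E'_invE'_of_empty he' h0
      have := hget (invE' β') (by rw [hEinv]; exact hβ')
      rwa [hEinv] at this
    refine ⟨pt, ?_⟩
    rw [Set.mem_iInter₂]
    intro β' hβ'
    rw [Set.mem_Iio] at hβ'
    by_cases he' : emptyTurn β'
    · rcases eq_or_ne β' 0 with rfl | h0
      · have h1 : E' (0 : Ordinal.{u}) < γ := E'_lt_gamma hγ hγ.pos
        have h2 : (0 : Ordinal.{u}) < E' 0 := by
          rcases eq_zero_or_pos (a := E' 0) with h | h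
          · exact absurd (h ▸ nu_lt_E' 0) (by simp [not_lt_zero])
          · exact h
        exact (legal (E' 0) h1).2 0 h2 (hget 0 h1)
      · exact hgete β' he' h0 hβ'
    · have hsucc : emptyTurn (β' + 1) := emptyTurn_succ he'
      have h1 : β' + 1 < γ := by
        rw [Ordinal.add_one_eq_succ]
        exact hγ.succ_lt hβ'
      have h3 : β' + 1 ≠ 0 := by
        intro h
        exact absurd (h ▸ (lt_add_one β')) (not_lt_zero (a := β'))
      exact (legal (β'+1) h1).2 β' (lt_add_one β') (hgete (β'+1) hsucc h3 h1)

end Backward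

end Main

end BM19

open BM19

/-- Let `κ` be regular uncountable, `I` an ideal on `κ`, and `γ < κ` a limit ordinal.
Then Nonempty has a winning strategy in the Banach–Mazur game `ℬ(I,γ)` if and only if
Choose has a winning strategy in the game `𝒢_∞(X, I, ≤γ)` for every `I`-positive `X`. -/
theorem stmt19 {K : Type u} (hreg : (#K).IsRegular) (hunc : ℵ₀ < #K)
    (I : Set (Set K))
    (hmono : ∀ A ∈ I, ∀ B, B ⊆ A → B ∈ I)
    (hunion : ∀ A ∈ I, ∀ B ∈ I, A ∪ B ∈ I)
    (hempty : (∅ : Set K) ∈ I) (hproper : (Set.univ : Set K) ∉ I)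
    (γ : Ordinal.{u}) (hγ : Order.IsSuccLimit γ) (hγκ : γ < (#K).ord) :
    NonemptyWinsBM I γ ↔ ∀ X : Set K, X ∉ I → ChooseWinsLeq I X γ := by
  constructor
  · exact fun h X hX => BM19.forward hmono hγ h X hX
  · exact fun h => BM19.backward hmono hunion hempty hγ h
end
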